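/- arXiv:2509.08692 — 7 statements merged into one kernel-verified Lean document; each statement's English description precedes it below -/
import Mathlib

section
/- For every ε > 0 there exists k₀ such that for all integers k ≥ k₀ there exists an oriented linear k-graph with Property O having at most (1+ε)·4k⁶(ln k)²·(k!)² edges; that is, f'(k) ≤ (1+o(1))·4k⁶ ln²k·(k!)². -/
/-- Point `i` on the affine line `y = a + b x` (line `L = (a,b)`), in column `i`. -/
def ptfun (k q : ℕ) (L : ZMod q × ZMod q) (i : Fin k) : Fin k × ZMod q :=
  (i, L.1 + L.2 * ((i : ℕ) : ZMod q))

lemma ptfun_fst (k q : ℕ) (L : ZMod q × ZMod q) (i : Fin k) : (ptfun k q L i).1 = i := rfl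

lemma ptfun_inj (k q : ℕ) (L : ZMod q × ZMod q) : Function.Injective (ptfun k q L) := by
  intro i j h
  exact congrArg Prod.fst h

/-- Two lines agreeing in two distinct columns are equal. -/
lemma line_eq (k q : ℕ) [Fact q.Prime] (hkq : k ≤ q) (L L' : ZMod q × ZMod q)
    (i j : Fin k) (hij : i ≠ j)
    (h1 : ptfun k q L i = ptfun k q L' i) (h2 : ptfun k q L j = ptfun k q L' j) :
    L = L' := by
  have e1 := congrArg Prod.snd h1
  have e2 := congrArg Prod.snd h2
  simp only [ptfun] at e1 e2
  have hc : ((i : ℕ) : ZMod q) ≠ ((j : ℕ) : ZMod q) := by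
    intro hcc
    apply hij
    have hi : (((i : ℕ) : ZMod q)).val = (i : ℕ) := ZMod.val_cast_of_lt (lt_of_lt_of_le i.isLt hkq)
    have hj : (((j : ℕ) : ZMod q)).val = (j : ℕ) := ZMod.val_cast_of_lt (lt_of_lt_of_le j.isLt hkq)
    apply Fin.ext
    rw [← hi, ← hj, hcc]
  have hb : L.2 = L'.2 := by
    have hz : (L.2 - L'.2) * (((i : ℕ) : ZMod q) - ((j : ℕ) : ZMod q)) = 0 := by
      linear_combination e1 - e2
    rcases mul_eq_zero.1 hz with h | h
    · exact sub_eq_zero.1 h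
    · exact absurd (sub_eq_zero.1 h) hc
  have ha : L.1 = L'.1 := by linear_combination e1 - ((i : ℕ) : ZMod q) * hb
  exact Prod.ext ha hb


/-- By counting, there is a choice of orientations such that for every "pattern"
`g : Fin n → Fin n` some line is oriented exactly as `g` sorts it. -/
lemma exists_good_tau (k q n : ℕ) [NeZero q] (ψ : (Fin k × ZMod q) ≃ Fin n)
    (h : n ^ n * (Nat.factorial k - 1) ^ (q * q) < Nat.factorial k ^ (q * q)) :
    ∃ τ : ZMod q × ZMod q → Equiv.Perm (Fin k),
      ∀ g : Fin n → Fin n, ∃ L, τ L = Tuple.sort (fun i => g (ψ (ptfun k q L i))) := by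
  classical
  by_contra hcon
  push_neg at hcon
  set good : (Fin n → Fin n) → ZMod q × ZMod q → Equiv.Perm (Fin k) :=
    fun g L => Tuple.sort (fun i => g (ψ (ptfun k q L i))) with hgood
  have hsub : (Finset.univ : Finset (ZMod q × ZMod q → Equiv.Perm (Fin k))) ⊆
      Finset.univ.biUnion (fun g : Fin n → Fin n =>
        Finset.univ.filter fun τ => ∀ L, τ L ≠ good g L) := by
    intro τ _
    obtain ⟨g, hg⟩ := hcon τ
    exact Finset.mem_biUnion.2 ⟨g, Finset.mem_univ g,
      Finset.mem_filter.2 ⟨Finset.mem_univ τ, hg⟩⟩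
  have hcard := (Finset.card_le_card hsub).trans Finset.card_biUnion_le
  have hTcard : (Finset.univ : Finset (ZMod q × ZMod q → Equiv.Perm (Fin k))).card
      = Nat.factorial k ^ (q * q) := by
    rw [Finset.card_univ, Fintype.card_fun, Fintype.card_perm, Fintype.card_fin,
      Fintype.card_prod, ZMod.card]
  have hfil : ∀ g : Fin n → Fin n,
      (Finset.univ.filter fun τ : ZMod q × ZMod q → Equiv.Perm (Fin k) =>
        ∀ L, τ L ≠ good g L).card = (Nat.factorial k - 1) ^ (q * q) := by
    intro g
    rw [← Fintype.card_subtype]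
    rw [Fintype.card_congr (Equiv.subtypePiEquivPi (p := fun L π => π ≠ good g L))]
    rw [Fintype.card_pi]
    have hone : ∀ L : ZMod q × ZMod q,
        Fintype.card {π : Equiv.Perm (Fin k) // π ≠ good g L} = Nat.factorial k - 1 := by
      intro L
      have hc := Fintype.card_subtype_compl (fun π : Equiv.Perm (Fin k) => π = good g L)
      rw [Fintype.card_subtype_eq, Fintype.card_perm, Fintype.card_fin] at hc
      exact hc
    rw [Finset.prod_congr rfl (fun L _ => hone L), Finset.prod_const, Finset.card_univ,
      Fintype.card_prod, ZMod.card]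
  have hsum : ∑ g : Fin n → Fin n,
      (Finset.univ.filter fun τ : ZMod q × ZMod q → Equiv.Perm (Fin k) =>
        ∀ L, τ L ≠ good g L).card = n ^ n * (Nat.factorial k - 1) ^ (q * q) := by
    rw [Finset.sum_congr rfl (fun g _ => hfil g), Finset.sum_const, Finset.card_univ,
      Fintype.card_fun, Fintype.card_fin, smul_eq_mul]
  rw [hTcard, hsum] at hcard
  exact absurd hcard (Nat.not_le.2 h)

lemma count_ineq (k q : ℕ) (hk : 16 ≤ k)
    (h1 : 2 * k ^ 3 * Nat.factorial k < q) (h2 : q ≤ 4 * k ^ 3 * Nat.factorial k) :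
    (k * q) ^ (k * q) * (Nat.factorial k - 1) ^ (q * q) < Nat.factorial k ^ (q * q) := by
  have hfac1 : 1 ≤ Nat.factorial k := Nat.one_le_iff_ne_zero.2 (Nat.factorial_ne_zero k)
  rw [← Nat.cast_lt (α := ℝ)]
  push_cast [Nat.cast_sub hfac1]
  set a : ℝ := (Nat.factorial k : ℝ) with ha
  have hkR : (16 : ℝ) ≤ (k : ℝ) := by exact_mod_cast hk
  have ha2 : (2 : ℝ) ≤ a := by
    rw [ha]
    exact_mod_cast le_trans (by norm_num) (le_trans hk (Nat.self_le_factorial k))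
  have ha0 : (0 : ℝ) < a := by linarith
  have hq1R : (1 : ℝ) ≤ (q : ℝ) := by
    have : 0 < q := lt_of_le_of_lt (Nat.zero_le _) h1
    exact Nat.one_le_cast.2 this
  have hq0 : (0 : ℝ) < (q : ℝ) := by linarith
  have hkq0 : (0 : ℝ) < (k : ℝ) * (q : ℝ) := by nlinarith
  -- log bound : log (k*q) < 2 k^2
  have hlogk : Real.log k ≤ (k : ℝ) - 1 := Real.log_le_sub_one_of_pos (by linarith)
  have hfle : a ≤ (k : ℝ) ^ k := by
    rw [ha]; exact_mod_cast Nat.factorial_le_pow k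
  have hkqle : (k : ℝ) * (q : ℝ) ≤ 4 * (k : ℝ) ^ (k + 4) := by
    have h2R : (q : ℝ) ≤ 4 * (k : ℝ) ^ 3 * a := by
      rw [ha]; exact_mod_cast h2
    have hmono := mul_le_mul_of_nonneg_left hfle (show (0:ℝ) ≤ 4 * (k:ℝ)^4 by positivity)
    calc (k : ℝ) * (q : ℝ) ≤ (k : ℝ) * (4 * (k : ℝ) ^ 3 * a) :=
          mul_le_mul_of_nonneg_left h2R (by linarith)
      _ = 4 * (k : ℝ) ^ 4 * a := by ring
      _ ≤ 4 * (k : ℝ) ^ 4 * (k : ℝ) ^ k := hmono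
      _ = 4 * (k : ℝ) ^ (k + 4) := by ring
  have hlog : Real.log ((k : ℝ) * (q : ℝ)) < 2 * (k : ℝ) ^ 2 := by
    have hl1 : Real.log ((k : ℝ) * (q : ℝ)) ≤ Real.log (4 * (k : ℝ) ^ (k + 4)) :=
      Real.log_le_log hkq0 hkqle
    have hl2 : Real.log (4 * (k : ℝ) ^ (k + 4)) = Real.log 4 + (k + 4) * Real.log k := by
      rw [Real.log_mul (by norm_num) (by positivity), Real.log_pow]
      push_cast; ring
    have hl4 : Real.log 4 ≤ 3 := by
      have := Real.log_le_sub_one_of_pos (show (0:ℝ) < 4 by norm_num)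
      linarith
    have hlogk0 : 0 ≤ Real.log k := Real.log_nonneg (by linarith)
    have hstep : ((k : ℝ) + 4) * Real.log k ≤ ((k : ℝ) + 4) * ((k : ℝ) - 1) := by nlinarith
    nlinarith
  -- main exponent comparison : (k q) log (k q) < q*q/a
  have hmain : (k : ℝ) * (q : ℝ) * Real.log ((k : ℝ) * (q : ℝ)) < (q : ℝ) * (q : ℝ) * (1 / a) := by
    have h1R : 2 * (k : ℝ) ^ 3 * a < (q : ℝ) := by
      rw [ha]; exact_mod_cast h1
    have step1 : (k : ℝ) * (q : ℝ) * Real.log ((k : ℝ) * (q : ℝ)) <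
        (k : ℝ) * (q : ℝ) * (2 * (k : ℝ) ^ 2) :=
      mul_lt_mul_of_pos_left hlog hkq0
    have step3 : 2 * (k : ℝ) ^ 3 * (q : ℝ) < (q : ℝ) * (q : ℝ) * (1 / a) := by
      rw [show (q:ℝ) * (q:ℝ) * (1 / a) = (q:ℝ) * ((q:ℝ) / a) by ring]
      have hd : 2 * (k : ℝ) ^ 3 < (q : ℝ) / a := by
        rw [lt_div_iff₀ ha0]; nlinarith
      nlinarith
    nlinarith
  -- package as exponentials
  have hexp1 : ((k : ℝ) * (q : ℝ)) ^ (k * q) = Real.exp (((k * q : ℕ) : ℝ) * Real.log ((k : ℝ) * (q : ℝ))) := by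
    rw [Real.exp_nat_mul, Real.exp_log hkq0]
  have hexp2 : Real.exp (((k * q : ℕ) : ℝ) * Real.log ((k : ℝ) * (q : ℝ))) <
      Real.exp (((q * q : ℕ) : ℝ) * (1 / a)) := by
    apply Real.exp_lt_exp.2
    push_cast
    exact hmain
  have hkey : Real.exp (1 / a) * (a - 1) ≤ a := by
    have hx := Real.add_one_le_exp (-(1 / a))
    have hmul : Real.exp (1 / a) * Real.exp (-(1 / a)) = 1 := by
      rw [← Real.exp_add]; ring_nf; exact Real.exp_zero
    have hp := Real.exp_pos (1 / a)
    have hx2 : (a - 1) / a ≤ Real.exp (-(1 / a)) := by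
      have : -(1/a) + 1 = (a - 1) / a := by field_simp; ring
      linarith [this ▸ hx]
    have h5 : a - 1 ≤ Real.exp (-(1 / a)) * a := by
      rw [div_le_iff₀ ha0] at hx2; exact hx2
    have h6 := mul_le_mul_of_nonneg_left h5 hp.le
    calc Real.exp (1 / a) * (a - 1) ≤ Real.exp (1 / a) * (Real.exp (-(1 / a)) * a) := h6
      _ = (Real.exp (1 / a) * Real.exp (-(1 / a))) * a := by ring
      _ = a := by rw [hmul, one_mul]
  have hpow : Real.exp (((q * q : ℕ) : ℝ) * (1 / a)) * (a - 1) ^ (q * q) ≤ a ^ (q * q) := by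
    rw [Real.exp_nat_mul, ← mul_pow]
    apply pow_le_pow_left₀ _ hkey
    have h1' : (0:ℝ) ≤ a - 1 := by linarith
    positivity
  calc ((k : ℝ) * (q : ℝ)) ^ (k * q) * (a - 1) ^ (q * q)
      = Real.exp (((k * q : ℕ) : ℝ) * Real.log ((k : ℝ) * (q : ℝ))) * (a - 1) ^ (q * q) := by
        rw [hexp1]
    _ < Real.exp (((q * q : ℕ) : ℝ) * (1 / a)) * (a - 1) ^ (q * q) := by
        apply mul_lt_mul_of_pos_right hexp2
        apply pow_pos; linarith
    _ ≤ a ^ (q * q) := hpow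

/-- For every `ε > 0` there exists `k₀` such that for all `k ≥ k₀`
there exists an oriented linear `k`-graph with Property O having at most
`(1+ε)·4k⁶(ln k)²·(k!)²` edges; that is, `f'(k) ≤ (1+o(1))·4k⁶ ln²k·(k!)²`. -/
theorem stmt_1 :
    ∀ ε : ℝ, 0 < ε → ∃ k₀ : ℕ, ∀ k : ℕ, k₀ ≤ k →
      ∃ (n : ℕ) (E : Finset (Fin k → Fin n)),
        (∀ e ∈ E, Function.Injective e) ∧
        (∀ e ∈ E, ∀ f ∈ E, Set.range e = Set.range f → e = f) ∧
        (∀ e ∈ E, ∀ f ∈ E, e ≠ f → (Set.range e ∩ Set.range f).Subsingleton) ∧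
        (∀ σ : Fin n → ℕ, Function.Injective σ →
          ∃ e ∈ E, ∀ i j : Fin k, i < j → σ (e i) < σ (e j)) ∧
        (E.card : ℝ) ≤ (1 + ε) * 4 * (k : ℝ) ^ 6 * Real.log k ^ 2 *
          (Nat.factorial k : ℝ) ^ 2 := by
  intro ε hε
  refine ⟨16, fun k hk => ?_⟩
  classical
  obtain ⟨q, hqp, hq1, hq2⟩ := Nat.exists_prime_lt_and_le_two_mul
    (2 * k ^ 3 * Nat.factorial k)
    (by positivity)
  haveI : Fact q.Prime := ⟨hqp⟩
  haveI : NeZero q := ⟨hqp.pos.ne'⟩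
  have hq2' : q ≤ 4 * k ^ 3 * Nat.factorial k := by
    calc q ≤ 2 * (2 * k ^ 3 * Nat.factorial k) := hq2
      _ = 4 * k ^ 3 * Nat.factorial k := by ring
  have hkq : k ≤ q := by
    have h1 : k ≤ 2 * k ^ 3 * Nat.factorial k := by
      have hf : 1 ≤ Nat.factorial k := Nat.one_le_iff_ne_zero.2 (Nat.factorial_ne_zero k)
      have h3 : k ≤ k ^ 3 := Nat.le_self_pow (by norm_num) k
      nlinarith [hf, h3]
    exact le_trans h1 (le_of_lt hq1)
  set n := k * q with hn
  have hcardV : Fintype.card (Fin k × ZMod q) = n := by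
    rw [Fintype.card_prod, Fintype.card_fin, ZMod.card]
  let ψ : (Fin k × ZMod q) ≃ Fin n := Fintype.equivFinOfCardEq hcardV
  -- orientations
  obtain ⟨τ, hτ⟩ := exists_good_tau k q n ψ (by
    rw [hn]
    exact count_ineq k q hk hq1 hq2')
  set edge : ZMod q × ZMod q → (Fin k → Fin n) := fun L i => ψ (ptfun k q L (τ L i))
    with hedge
  have edge_inj : ∀ L, Function.Injective (edge L) := by
    intro L i j h
    exact (τ L).injective (ptfun_inj k q L (ψ.injective h))
  -- key: points of edges determine lines
  have mem_range_iff : ∀ (L : ZMod q × ZMod q) (x : Fin n),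
      x ∈ Set.range (edge L) ↔ ∃ u : Fin k, ψ (ptfun k q L u) = x := by
    intro L x
    constructor
    · rintro ⟨i, rfl⟩; exact ⟨τ L i, rfl⟩
    · rintro ⟨u, rfl⟩; exact ⟨(τ L).symm u, by simp [hedge]⟩
  have zero_lt_k : 0 < k := lt_of_lt_of_le (by norm_num) hk
  have one_lt_k : 1 < k := lt_of_lt_of_le (by norm_num) hk
  refine ⟨n, Finset.image edge Finset.univ, ?_, ?_, ?_, ?_, ?_⟩
  · -- injectivity of edges
    intro e he
    obtain ⟨L, -, rfl⟩ := Finset.mem_image.1 he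
    exact edge_inj L
  · -- same range implies equal
    intro e he f hf hr
    obtain ⟨L, -, rfl⟩ := Finset.mem_image.1 he
    obtain ⟨L', -, rfl⟩ := Finset.mem_image.1 hf
    have hpt : ∀ u : Fin k, ptfun k q L' u = ptfun k q L u := by
      intro u
      have hx : ψ (ptfun k q L u) ∈ Set.range (edge L') := by
        rw [← hr, mem_range_iff]; exact ⟨u, rfl⟩
      obtain ⟨v, hv⟩ := (mem_range_iff L' _).1 hx
      have hvu : ptfun k q L' v = ptfun k q L u := ψ.injective hv
      have hvu2 : v = u := congrArg Prod.fst hvu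
      rw [hvu2] at hvu; exact hvu
    have : L' = L := line_eq k q hkq L' L ⟨0, zero_lt_k⟩ ⟨1, one_lt_k⟩
      (by intro h; exact absurd (congrArg Fin.val h) (by norm_num))
      (hpt _) (hpt _)
    rw [this]
  · -- linearity
    intro e he f hf hef
    obtain ⟨L, -, rfl⟩ := Finset.mem_image.1 he
    obtain ⟨L', -, rfl⟩ := Finset.mem_image.1 hf
    intro x hx y hy
    obtain ⟨⟨u, hu⟩, ⟨u', hu'⟩⟩ :
        (∃ u, ψ (ptfun k q L u) = x) ∧ (∃ u', ψ (ptfun k q L' u') = x) :=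
      ⟨(mem_range_iff L x).1 hx.1, (mem_range_iff L' x).1 hx.2⟩
    obtain ⟨⟨v, hv⟩, ⟨v', hv'⟩⟩ :
        (∃ v, ψ (ptfun k q L v) = y) ∧ (∃ v', ψ (ptfun k q L' v') = y) :=
      ⟨(mem_range_iff L y).1 hy.1, (mem_range_iff L' y).1 hy.2⟩
    have hxA : ptfun k q L u = ptfun k q L' u' := ψ.injective (hu.trans hu'.symm)
    have hyA : ptfun k q L v = ptfun k q L' v' := ψ.injective (hv.trans hv'.symm)
    have huu' : u = u' := congrArg Prod.fst hxA
    have hvv' : v = v' := congrArg Prod.fst hyA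
    by_cases huv : u = v
    · rw [← hu, ← hv, huv]
    · exfalso
      apply hef
      have : L = L' := line_eq k q hkq L L' u v huv
        (huu' ▸ hxA) (hvv' ▸ hyA)
      rw [this]
  · -- Property O
    intro σ hσ
    set s : Finset ℕ := Finset.image σ Finset.univ with hs
    have hscard : s.card = n := by
      rw [hs, Finset.card_image_of_injective _ hσ, Finset.card_univ, Fintype.card_fin]
    set oi := s.orderIsoOfFin hscard with hoi
    set ρ : Fin n → Fin n := fun x =>
      oi.symm ⟨σ x, Finset.mem_image_of_mem σ (Finset.mem_univ x)⟩ with hρ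
    have hρlt : ∀ x y : Fin n, ρ x < ρ y ↔ σ x < σ y := by
      intro x y
      rw [hρ]
      simp only
      rw [OrderIso.lt_iff_lt]
      exact Subtype.mk_lt_mk
    have hρinj : Function.Injective ρ := by
      intro x y h
      apply hσ
      have := oi.symm.injective h
      exact Subtype.ext_iff.1 this
    obtain ⟨L, hL⟩ := hτ ρ
    refine ⟨edge L, Finset.mem_image_of_mem _ (Finset.mem_univ L), ?_⟩
    intro i j hij
    set h : Fin k → Fin n := fun i => ρ (ψ (ptfun k q L i)) with hh
    have hinj : Function.Injective (h ∘ ⇑(Tuple.sort h)) := by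
      apply Function.Injective.comp
      · intro x y hxy
        exact ptfun_inj k q L (ψ.injective (hρinj hxy))
      · exact (Tuple.sort h).injective
    have hsm : StrictMono (h ∘ ⇑(Tuple.sort h)) :=
      (Tuple.monotone_sort h).strictMono_of_injective hinj
    have hlt := hsm hij
    simp only [Function.comp_apply, hh] at hlt
    rw [hρlt] at hlt
    have hLL : τ L = Tuple.sort h := hL
    show σ (ψ (ptfun k q L (τ L i))) < σ (ψ (ptfun k q L (τ L j)))
    rw [hLL]
    exact hlt
  · -- cardinality bound
    have hc1 : (Finset.image edge Finset.univ).card ≤ q * q := by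
      calc (Finset.image edge Finset.univ).card ≤ (Finset.univ : Finset (ZMod q × ZMod q)).card :=
            Finset.card_image_le
        _ = q * q := by rw [Finset.card_univ, Fintype.card_prod, ZMod.card]
    have hcR : ((Finset.image edge Finset.univ).card : ℝ) ≤ (q : ℝ) * (q : ℝ) := by
      exact_mod_cast hc1
    have hq2R : (q : ℝ) ≤ 4 * (k : ℝ) ^ 3 * (Nat.factorial k : ℝ) := by
      exact_mod_cast hq2'
    have hq0R : (0 : ℝ) ≤ (q : ℝ) := by positivity
    have hkR : (16 : ℝ) ≤ (k : ℝ) := by exact_mod_cast hk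
    have hfacR : (1 : ℝ) ≤ (Nat.factorial k : ℝ) := by
      exact_mod_cast Nat.one_le_iff_ne_zero.2 (Nat.factorial_ne_zero k)
    have hlogk : (2 : ℝ) ≤ Real.log k := by
      rw [Real.le_log_iff_exp_le (by linarith)]
      have he := Real.exp_one_lt_d9
      have hp := Real.exp_pos 1
      have : Real.exp 2 = Real.exp 1 * Real.exp 1 := by
        rw [← Real.exp_add]; norm_num
      nlinarith
    have hquad : (q : ℝ) * (q : ℝ) ≤ 16 * (k : ℝ) ^ 6 * (Nat.factorial k : ℝ) ^ 2 := by
      nlinarith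
    have hfin : 16 * (k : ℝ) ^ 6 * (Nat.factorial k : ℝ) ^ 2 ≤
        (1 + ε) * 4 * (k : ℝ) ^ 6 * Real.log k ^ 2 * (Nat.factorial k : ℝ) ^ 2 := by
      have hA : (0 : ℝ) ≤ (k : ℝ) ^ 6 * (Nat.factorial k : ℝ) ^ 2 := by positivity
      nlinarith [sq_nonneg (Real.log k - 2), mul_nonneg hA hε.le,
        mul_nonneg (mul_nonneg hA hε.le) (sq_nonneg (Real.log k))]
    calc ((Finset.image edge Finset.univ).card : ℝ) ≤ (q : ℝ) * (q : ℝ) := hcR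
      _ ≤ 16 * (k : ℝ) ^ 6 * (Nat.factorial k : ℝ) ^ 2 := hquad
      _ ≤ _ := hfin
end

section
/- For every integer k ≥ 2, every oriented linear k-graph with Property O has more than (k−1)·(k−1)!/(e·k) vertices; that is, n'(k) ≥ (k−1)·(k−1)!/(e·k). -/
open List
section
variable {V : Type*} [DecidableEq V] {k : ℕ}

def eset (e : Fin k → V) : Finset V := (List.ofFn e).toFinset
lemma mem_eset {e : Fin k → V} {x : V} : x ∈ eset e ↔ x ∈ Set.range e := by
  simp [eset, List.mem_ofFn]

lemma card_eset {e : Fin k → V} (he : Function.Injective e) : (eset e).card = k := by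
  rw [eset, List.toFinset_card_of_nodup (List.nodup_ofFn.2 he), List.length_ofFn]

def goodP (E : Finset (Fin k → V)) (l : List V) : Prop := ∀ e ∈ E, ¬ (List.ofFn e).Sublist l
open scoped Classical in
noncomputable def goodF (E : Finset (Fin k → V)) (S : Finset V) : Finset (List V) :=
  (S.toList.permutations.toFinset).filter (goodP E)
noncomputable def g (E : Finset (Fin k → V)) (S : Finset V) : ℕ := (goodF E S).card

lemma mem_goodF {E : Finset (Fin k → V)} {S : Finset V} {l : List V} :
    l ∈ goodF E S ↔ l.Perm S.toList ∧ goodP E l := by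
  classical
  rw [goodF, Finset.mem_filter, List.mem_toFinset, List.mem_permutations]

lemma perm_facts {S : Finset V} {l : List V} (h : l.Perm S.toList) :
    l.Nodup ∧ l.toFinset = S ∧ l.length = S.card := by
  refine ⟨h.nodup_iff.2 (Finset.nodup_toList S), ?_, ?_⟩
  · rw [List.toFinset_eq_of_perm _ _ h, Finset.toList_toFinset]
  · rw [h.length_eq, Finset.length_toList]

lemma perm_toList_of_toFinset {S : Finset V} {l : List V} (hn : l.Nodup) (ht : l.toFinset = S) :
    l.Perm S.toList :=
  List.perm_of_nodup_nodup_toFinset_eq hn (Finset.nodup_toList S)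
    (by rw [ht, Finset.toList_toFinset])


private lemma mask_recon {α : Type*} (χ : α → Bool) : ∀ (l₁ l₂ : List α),
    l₁.map χ = l₂.map χ → l₁.filter χ = l₂.filter χ →
    l₁.filter (fun x => !χ x) = l₂.filter (fun x => !χ x) → l₁ = l₂ := by
  intro l₁
  induction l₁ with
  | nil => intro l₂ h _ _; cases l₂ with
    | nil => rfl
    | cons b t => simp at h
  | cons a t ih =>
    intro l₂ hm hf hnf
    cases l₂ with
    | nil => simp at hm
    | cons b t₂ =>
      simp only [List.map_cons, List.cons.injEq] at hm
      obtain ⟨hab, htm⟩ := hm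
      cases hχa : χ a with
      | true =>
        have hχb : χ b = true := by rw [← hab, hχa]
        rw [List.filter_cons_of_pos hχa, List.filter_cons_of_pos hχb] at hf
        rw [List.filter_cons_of_neg (by simp [hχa]), List.filter_cons_of_neg (by simp [hχb])] at hnf
        obtain ⟨h1, h2⟩ := List.cons.inj hf
        rw [h1, ih t₂ htm h2 hnf]
      | false =>
        have hχb : χ b = false := by rw [← hab, hχa]
        rw [List.filter_cons_of_neg (by simp [hχa]), List.filter_cons_of_neg (by simp [hχb])] at hf
        rw [List.filter_cons_of_pos (by simp [hχa]), List.filter_cons_of_pos (by simp [hχb])] at hnf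
        obtain ⟨h1, h2⟩ := List.cons.inj hnf
        rw [h1, ih t₂ htm hf h2]

/-- forced filter lemma -/
private lemma filter_eq_of_sublist {α : Type*} {u l : List α} {p : α → Bool}
    (hu : u <+ l) (h1 : ∀ x ∈ u, p x = true) (h2 : l.countP p ≤ u.length) :
    l.filter p = u := by
  have hufl : u.filter p = u := List.filter_eq_self.2 h1
  have hsub : u <+ l.filter p := by
    conv_lhs => rw [← hufl]
    exact hu.filter p
  have hlen : (l.filter p).length ≤ u.length := by
    rw [← List.countP_eq_length_filter] at *
    exact h2
  exact (hsub.eq_of_length_le hlen).symm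

private lemma erase_insertIdx {α : Type*} [DecidableEq α] (v : α) :
    ∀ (i : ℕ) (m : List α), v ∉ m → i ≤ m.length → (m.insertIdx i v).erase v = m := by
  intro i
  induction i with
  | zero => intro m _ _; rw [List.insertIdx_zero, List.erase_cons_head]
  | succ i ih =>
    intro m hv hi
    cases m with
    | nil => simp at hi
    | cons a t =>
      rw [List.insertIdx_succ_cons]
      have hav : a ≠ v := fun h => hv (h ▸ (List.mem_cons_self (a := a) (l := t)))
      rw [List.erase_cons_tail (by simp [hav]),
        ih t (fun h => hv (List.mem_cons_of_mem a h)) (Nat.le_of_succ_le_succ hi)]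

private lemma indexOf_insertIdx {α : Type*} [DecidableEq α] (v : α) :
    ∀ (i : ℕ) (m : List α), v ∉ m → i ≤ m.length → (m.insertIdx i v).idxOf v = i := by
  intro i
  induction i with
  | zero => intro m _ _; rw [List.insertIdx_zero, List.idxOf_cons_self]
  | succ i ih =>
    intro m hv hi
    cases m with
    | nil => simp at hi
    | cons a t =>
      rw [List.insertIdx_succ_cons]
      have hav : a ≠ v := fun h => hv (h ▸ (List.mem_cons_self (a := a) (l := t)))
      rw [List.idxOf_cons_ne _ hav, ih t (fun h => hv (List.mem_cons_of_mem a h))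
        (Nat.le_of_succ_le_succ hi)]

private lemma sublist_erase_of_not_mem {α : Type*} [DecidableEq α] {u l : List α} (v : α)
    (hu : u <+ l) (hl : l.Nodup) (hv : v ∉ u) : u <+ l.erase v := by
  rw [List.Nodup.erase_eq_filter hl v]
  have : u.filter (· != v) = u := List.filter_eq_self.2 (fun x hx => by
    simp only [bne_iff_ne, ne_eq, decide_eq_true_eq]
    exact fun h => hv (h ▸ hx))
  conv_lhs => rw [← this]
  exact hu.filter _


open scoped Classical in
lemma step1 (E : Finset (Fin k → V)) (S : Finset V) {v : V} (hv : v ∈ S) :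
    S.card * g E (S.erase v) ≤
      ((S.toList.permutations.toFinset).filter (fun l => goodP E (l.erase v))).card := by
  classical
  set s := S.card with hs
  have hvS : v ∉ S.erase v := Finset.notMem_erase v S
  have hcard : (S.erase v).card = s - 1 := by rw [Finset.card_erase_of_mem hv]
  have hs1 : 1 ≤ s := Finset.card_pos.2 ⟨v, hv⟩
  -- the injection
  have hstart : s * g E (S.erase v) = ((Finset.range S.card) ×ˢ goodF E (S.erase v)).card := by
    rw [Finset.card_product, Finset.card_range]; rfl
  rw [hstart]
  refine Finset.card_le_card_of_injOn (fun p => p.2.insertIdx p.1 v) ?_ ?_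
  · rintro ⟨i, m⟩ hp
    rw [Finset.mem_coe, Finset.mem_product, Finset.mem_range] at hp
    obtain ⟨hi, hm⟩ := hp
    rw [mem_goodF] at hm
    obtain ⟨hnd, htf, hlen⟩ := perm_facts hm.1
    have hvm : v ∉ m := fun h => hvS (htf ▸ List.mem_toFinset.2 h)
    have hilen : i ≤ m.length := by rw [hlen, hcard]; omega
    have hperm : (m.insertIdx i v).Perm S.toList := by
      refine (List.perm_insertIdx v m hilen).trans ?_
      refine (List.Perm.cons v hm.1).trans ?_
      refine perm_toList_of_toFinset ?_ ?_
      · exact List.nodup_cons.2 ⟨fun h => hvS (Finset.mem_toList.1 h), Finset.nodup_toList _⟩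
      · rw [List.toFinset_cons, Finset.toList_toFinset, Finset.insert_erase hv]
    rw [Finset.mem_coe, Finset.mem_filter, List.mem_toFinset, List.mem_permutations]
    refine ⟨hperm, ?_⟩
    rw [erase_insertIdx v i m hvm hilen]
    exact hm.2
  · rintro ⟨i, m⟩ hp ⟨j, m'⟩ hq heq
    rw [Finset.mem_coe, Finset.mem_product, Finset.mem_range] at hp hq
    obtain ⟨hi, hm⟩ := hp
    obtain ⟨hj, hm'⟩ := hq
    rw [mem_goodF] at hm hm'
    obtain ⟨hnd, htf, hlen⟩ := perm_facts hm.1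
    obtain ⟨hnd', htf', hlen'⟩ := perm_facts hm'.1
    
    have hvm : v ∉ m := fun h => hvS (htf ▸ List.mem_toFinset.2 h)
    have hvm' : v ∉ m' := fun h => hvS (htf' ▸ List.mem_toFinset.2 h)
    have hilen : i ≤ m.length := by rw [hlen, hcard]; omega
    have hjlen : j ≤ m'.length := by rw [hlen', hcard]; omega
    have h1 : m = m' := by
      have := congrArg (fun l => l.erase v) heq
      simpa [erase_insertIdx v i m hvm hilen, erase_insertIdx v j m' hvm' hjlen] using this
    have h2 : i = j := by
      have := congrArg (fun l => l.idxOf v) heq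
      simpa [indexOf_insertIdx v i m hvm hilen, indexOf_insertIdx v j m' hvm' hjlen] using this
    simp [h1, h2]
end

section
variable {V : Type*} [DecidableEq V] {k : ℕ}

lemma indexOf_mem_image {e : Fin k → V} {l : List V} (hnd : l.Nodup)
    (hsub : ∀ x ∈ eset e, x ∈ l) {i : ℕ} (hi : i < l.length) :
    l[i] ∈ eset e ↔ i ∈ (eset e).image (fun x => l.idxOf x) := by
  constructor
  · intro h
    exact Finset.mem_image.2 ⟨l[i], h, hnd.idxOf_getElem i hi⟩
  · intro h
    obtain ⟨x, hx, hxi⟩ := Finset.mem_image.1 h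
    have hxl : x ∈ l := hsub x hx
    have : l[i] = x := by
      subst hxi
      exact List.getElem_idxOf (List.idxOf_lt_length_iff.2 hxl)
    rwa [this]

lemma filter_eset_eq {e : Fin k → V} {l : List V} (he : Function.Injective e)
    (hnd : l.Nodup) (hsl : (List.ofFn e).Sublist l) :
    l.filter (fun x => decide (x ∈ eset e)) = List.ofFn e := by
  refine filter_eq_of_sublist hsl (fun x hx => by simpa [eset] using hx) ?_
  rw [List.countP_eq_length_filter, List.length_ofFn]
  have hnd' : (l.filter (fun x => decide (x ∈ eset e))).Nodup := hnd.filter _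
  rw [← List.toFinset_card_of_nodup hnd']
  have : (l.filter (fun x => decide (x ∈ eset e))).toFinset ⊆ eset e := by
    intro x hx
    rw [List.mem_toFinset, List.mem_filter] at hx
    simpa using hx.2
  calc _ ≤ (eset e).card := Finset.card_le_card this
    _ = k := card_eset he

open scoped Classical in
lemma step3 (E : Finset (Fin k → V)) {e : Fin k → V} (he : Function.Injective e)
    (S : Finset V) (hsub : eset e ⊆ S) :
    ((S.toList.permutations.toFinset).filter
        (fun l => (List.ofFn e).Sublist l ∧
          goodP E (l.filter (fun x => !decide (x ∈ eset e))))).card ≤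
      (S.card.choose k) * g E (S \ eset e) := by
  classical
  have htarget : (S.card.choose k) * g E (S \ eset e) =
      ((Finset.powersetCard k (Finset.range S.card)) ×ˢ goodF E (S \ eset e)).card := by
    rw [Finset.card_product, Finset.card_powersetCard, Finset.card_range]
    rfl
  rw [htarget]
  refine Finset.card_le_card_of_injOn
    (fun l => ((eset e).image (fun x => l.idxOf x), l.filter (fun x => !decide (x ∈ eset e))))
    ?_ ?_
  · intro l hl
    rw [Finset.mem_coe, Finset.mem_filter, List.mem_toFinset, List.mem_permutations] at hl
    obtain ⟨hperm, hsl, hgood⟩ := hl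
    obtain ⟨hnd, htf, hlen⟩ := perm_facts hperm
    have hmem : ∀ x ∈ eset e, x ∈ l := fun x hx => by
      rw [← List.mem_toFinset, htf]; exact hsub hx
    rw [Finset.mem_coe, Finset.mem_product]
    constructor
    · rw [Finset.mem_powersetCard]
      constructor
      · intro y hy
        obtain ⟨x, hx, hxy⟩ := Finset.mem_image.1 hy
        rw [Finset.mem_range, ← hlen, ← hxy]
        exact List.idxOf_lt_length_iff.2 (hmem x hx)
      · rw [Finset.card_image_of_injOn, card_eset he]
        intro x hx y hy hxy
        have hx' := List.getElem_idxOf (List.idxOf_lt_length_iff.2 (hmem x hx))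
        have hy' := List.getElem_idxOf (List.idxOf_lt_length_iff.2 (hmem y hy))
        rw [← hx', ← hy']
        congr 1
    · rw [mem_goodF]
      refine ⟨perm_toList_of_toFinset (hnd.filter _) ?_, hgood⟩
      rw [List.toFinset_filter, htf]
      ext x
      simp [Finset.mem_sdiff, Finset.mem_filter]
  · intro l₁ hl₁ l₂ hl₂ heq
    rw [Finset.mem_coe, Finset.mem_filter, List.mem_toFinset, List.mem_permutations] at hl₁ hl₂
    obtain ⟨hperm₁, hsl₁, hgood₁⟩ := hl₁
    obtain ⟨hperm₂, hsl₂, hgood₂⟩ := hl₂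
    obtain ⟨hnd₁, htf₁, hlen₁⟩ := perm_facts hperm₁
    obtain ⟨hnd₂, htf₂, hlen₂⟩ := perm_facts hperm₂
    have hmem₁ : ∀ x ∈ eset e, x ∈ l₁ := fun x hx => by
      rw [← List.mem_toFinset, htf₁]; exact hsub hx
    have hmem₂ : ∀ x ∈ eset e, x ∈ l₂ := fun x hx => by
      rw [← List.mem_toFinset, htf₂]; exact hsub hx
    have h1 : (eset e).image (fun x => l₁.idxOf x) = (eset e).image (fun x => l₂.idxOf x) :=
      congrArg Prod.fst heq
    have h2 : l₁.filter (fun x => !decide (x ∈ eset e)) = l₂.filter (fun x => !decide (x ∈ eset e)) :=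
      congrArg Prod.snd heq
    refine mask_recon (fun x => decide (x ∈ eset e)) l₁ l₂ ?_ ?_ h2
    · refine List.ext_getElem (by rw [List.length_map, List.length_map, hlen₁, hlen₂]) ?_
      intro i hi₁ hi₂
      rw [List.getElem_map, List.getElem_map]
      rw [List.length_map] at hi₁ hi₂
      have e1 := indexOf_mem_image (e := e) hnd₁ hmem₁ hi₁
      have e2 := indexOf_mem_image (e := e) hnd₂ hmem₂ hi₂
      rw [h1] at e1
      simp only [decide_eq_decide]
      rw [e1, e2]
    · rw [filter_eset_eq he hnd₁ hsl₁, filter_eset_eq he hnd₂ hsl₂]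
end

section
variable {V : Type*} [DecidableEq V] {k : ℕ}

open scoped Classical in
lemma count_step (E : Finset (Fin k → V)) (hinj : ∀ e ∈ E, Function.Injective e)
    (S : Finset V) {v : V} (hv : v ∈ S) :
    S.card * g E (S.erase v) ≤ g E S +
      ∑ e ∈ E.filter (fun e => v ∈ eset e ∧ eset e ⊆ S), S.card.choose k * g E (S \ eset e) := by
  classical
  set Ev := E.filter (fun e => v ∈ eset e ∧ eset e ⊆ S) with hEv
  set B := fun e : Fin k → V => (S.toList.permutations.toFinset).filter
      (fun l => (List.ofFn e).Sublist l ∧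
        goodP E (l.filter (fun x => !decide (x ∈ eset e)))) with hB
  have hQsub : (S.toList.permutations.toFinset).filter (fun l => goodP E (l.erase v)) ⊆
      goodF E S ∪ Ev.biUnion B := by
    intro l hl
    rw [Finset.mem_filter, List.mem_toFinset, List.mem_permutations] at hl
    obtain ⟨hperm, hgep⟩ := hl
    obtain ⟨hnd, htf, hlen⟩ := perm_facts hperm
    by_cases hg : goodP E l
    · exact Finset.mem_union_left _ (mem_goodF.2 ⟨hperm, hg⟩)
    · rw [Finset.mem_union]
      right
      simp only [goodP, not_forall] at hg
      obtain ⟨e, he, hsl⟩ := hg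
      rw [not_not] at hsl
      have hvE : v ∈ eset e := by
        by_contra hvE
        have hvnot : v ∉ List.ofFn e := fun h => hvE (List.mem_toFinset.2 h)
        exact hgep e he (sublist_erase_of_not_mem v hsl hnd hvnot)
      have hesub : eset e ⊆ S := by
        intro x hx
        rw [← htf, List.mem_toFinset]
        exact hsl.subset (List.mem_toFinset.1 hx)
      refine Finset.mem_biUnion.2 ⟨e, Finset.mem_filter.2 ⟨he, hvE, hesub⟩, ?_⟩
      rw [hB, Finset.mem_filter, List.mem_toFinset, List.mem_permutations]
      refine ⟨hperm, hsl, ?_⟩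
      intro f hf hslf
      have hfsubl : (List.ofFn f).Sublist l := hslf.trans (List.filter_sublist (l := l))
      have hvf : v ∉ List.ofFn f := by
        intro hvf
        have := hslf.subset hvf
        rw [List.mem_filter] at this
        simp only [Bool.not_eq_true', decide_eq_false_iff_not] at this
        exact this.2 hvE
      exact hgep f hf (sublist_erase_of_not_mem v hfsubl hnd hvf)
  calc S.card * g E (S.erase v)
      ≤ ((S.toList.permutations.toFinset).filter (fun l => goodP E (l.erase v))).card :=
        step1 E S hv
    _ ≤ (goodF E S ∪ Ev.biUnion B).card := Finset.card_le_card hQsub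
    _ ≤ (goodF E S).card + (Ev.biUnion B).card := Finset.card_union_le _ _
    _ ≤ g E S + ∑ e ∈ Ev, (B e).card := by
        refine Nat.add_le_add (le_of_eq rfl) (Finset.card_biUnion_le)
    _ ≤ g E S + ∑ e ∈ Ev, S.card.choose k * g E (S \ eset e) := by
        refine Nat.add_le_add_left (Finset.sum_le_sum ?_) _
        intro e heEv
        rw [hEv, Finset.mem_filter] at heEv
        exact step3 E (hinj e heEv.1) S heEv.2.2
end

section
variable {V : Type*} [DecidableEq V] {k : ℕ}

lemma master (E : Finset (Fin k → V)) (hinj : ∀ e ∈ E, Function.Injective e) (hk : 2 ≤ k)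
    (hD : ∀ v : V, (((E.filter (fun e => v ∈ eset e)).card : ℝ) * k ≤
      (Nat.factorial k : ℝ) * ((1 : ℝ) - 1/k) ^ (k - 1))) :
    ∀ (n : ℕ) (S : Finset V) (v : V), S.card = n → v ∈ S →
      ((1 : ℝ) - 1/k) * n * g E (S.erase v) ≤ g E S := by
  classical
  have hk0 : (0 : ℝ) < k := by positivity
  have hβ0 : (0 : ℝ) < 1 - 1/k := by
    have : (1 : ℝ)/k ≤ 1/2 := by
      apply div_le_div_of_nonneg_left <;> norm_num
      exact_mod_cast hk
    linarith
  set β : ℝ := 1 - 1/k with hβ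
  have hβ1 : β ≤ 1 := by
    rw [hβ]
    have : (0:ℝ) < 1/k := by positivity
    linarith
  intro n
  induction n using Nat.strong_induction_on with
  | _ n IH =>
  intro S v hcard hv
  subst hcard
  -- the chain lemma
  have chain : ∀ (W T : Finset V), W ⊆ T → T.card < S.card →
      (g E (T \ W) : ℝ) * β ^ W.card * ((T.card).descFactorial W.card) ≤ g E T := by
    intro W
    induction W using Finset.induction_on with
    | empty =>
      intro T _ _
      simp [Finset.sdiff_empty]
    | @insert u W hu ihW =>
      intro T hsub hTn
      have huT : u ∈ T := hsub (Finset.mem_insert_self u W)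
      have hWTu : W ⊆ T.erase u := by
        intro x hx
        exact Finset.mem_erase.2 ⟨fun hxu => hu (hxu ▸ hx), hsub (Finset.mem_insert_of_mem hx)⟩
      obtain ⟨t, ht⟩ : ∃ t, T.card = t + 1 := ⟨T.card - 1, by
        have : 1 ≤ T.card := Finset.card_pos.2 ⟨u, huT⟩
        omega⟩
      have hTec : (T.erase u).card = t := by
        rw [Finset.card_erase_of_mem huT, ht]
        omega
      have h1 : (T.erase u).card < S.card := by omega
      have hchain := ihW (T.erase u) hWTu h1
      rw [hTec] at hchain
      have hmaster := IH T.card hTn T u rfl huT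
      have hsd : T \ insert u W = (T.erase u) \ W := by
        ext x
        simp only [Finset.mem_sdiff, Finset.mem_erase, Finset.mem_insert]
        tauto
      rw [hsd, Finset.card_insert_of_notMem hu, ht, Nat.succ_descFactorial_succ]
      push_cast
      calc (g E ((T.erase u) \ W) : ℝ) * β ^ (W.card + 1) * ((t+1) * (t.descFactorial W.card))
          = (β * (t+1)) * ((g E ((T.erase u) \ W) : ℝ) * β ^ W.card * (t.descFactorial W.card)) := by
            ring
        _ ≤ (β * (t+1)) * g E (T.erase u) := by
            apply mul_le_mul_of_nonneg_left hchain
            positivity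
        _ ≤ g E T := by
            rw [ht] at hmaster
            push_cast at hmaster
            linarith
  -- main step
  set n := S.card with hn
  have hn1 : 1 ≤ n := Finset.card_pos.2 ⟨v, hv⟩
  have hTcard : (S.erase v).card = n - 1 := Finset.card_erase_of_mem hv
  set a : ℝ := (g E (S.erase v) : ℝ) with ha
  have ha0 : 0 ≤ a := by positivity
  have hkfβ : (0:ℝ) < (Nat.factorial k : ℝ) * β ^ (k-1) := by
    have : (0:ℝ) < (Nat.factorial k : ℝ) := by exact_mod_cast Nat.factorial_pos k
    positivity
  -- per-edge bound
  have hedge : ∀ e ∈ E.filter (fun e => v ∈ eset e ∧ eset e ⊆ S),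
      ((n.choose k : ℕ) : ℝ) * (g E (S \ eset e) : ℝ) ≤
        (n / ((Nat.factorial k : ℝ) * β ^ (k-1))) * a := by
    intro e he
    rw [Finset.mem_filter] at he
    obtain ⟨heE, hved, hesub⟩ := he
    have hei : Function.Injective e := hinj e heE
    have hkn : k ≤ n := by
      rw [← card_eset hei]
      exact Finset.card_le_card hesub
    have hWsub : (eset e).erase v ⊆ S.erase v := Finset.erase_subset_erase v hesub
    have hWcard : ((eset e).erase v).card = k - 1 := by
      rw [Finset.card_erase_of_mem hved, card_eset hei]
    have hch := chain ((eset e).erase v) (S.erase v) hWsub (by omega)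
    rw [hWcard, hTcard] at hch
    have hsd : (S.erase v) \ ((eset e).erase v) = S \ eset e := by
      ext x
      simp only [Finset.mem_sdiff, Finset.mem_erase]
      constructor
      · rintro ⟨⟨hxv, hxS⟩, h⟩
        exact ⟨hxS, fun hxe => h ⟨hxv, hxe⟩⟩
      · rintro ⟨hxS, h⟩
        exact ⟨⟨fun hxv => h (hxv ▸ hved), hxS⟩, fun hh => h hh.2⟩
    rw [hsd] at hch
    -- choose identity
    obtain ⟨m, hm⟩ : ∃ m, n = m + 1 := ⟨n - 1, by omega⟩
    obtain ⟨j, hj⟩ : ∃ j, k = j + 1 := ⟨k - 1, by omega⟩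
    have hdesc : (n.choose k) * (Nat.factorial k) = n * ((n-1).descFactorial (k-1)) := by
      rw [mul_comm, ← Nat.descFactorial_eq_factorial_mul_choose, hm, hj,
        Nat.succ_descFactorial_succ, Nat.add_sub_cancel, Nat.add_sub_cancel]
    have hdescR : ((n.choose k : ℕ) : ℝ) =
        (n : ℝ) * ((n-1).descFactorial (k-1) : ℝ) / (Nat.factorial k : ℝ) := by
      rw [eq_div_iff (by exact_mod_cast Nat.factorial_pos k |>.ne')]
      exact_mod_cast hdesc
    rw [hdescR]
    have key : (n : ℝ) * ((n-1).descFactorial (k-1) : ℝ) / (Nat.factorial k : ℝ) *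
        (g E (S \ eset e) : ℝ) =
        (n / ((Nat.factorial k : ℝ) * β ^ (k-1))) *
          ((g E (S \ eset e) : ℝ) * β ^ (k-1) * ((n-1).descFactorial (k-1) : ℝ)) := by
      field_simp
    rw [key]
    apply mul_le_mul_of_nonneg_left hch
    positivity
  -- combine
  have hcountR : (n : ℝ) * a ≤ (g E S : ℝ) +
      ∑ e ∈ E.filter (fun e => v ∈ eset e ∧ eset e ⊆ S),
        ((n.choose k : ℕ) : ℝ) * (g E (S \ eset e) : ℝ) := by
    rw [ha, hn]
    exact_mod_cast count_step E hinj S hv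
  have hsum : ∑ e ∈ E.filter (fun e => v ∈ eset e ∧ eset e ⊆ S),
      ((n.choose k : ℕ) : ℝ) * (g E (S \ eset e) : ℝ) ≤ (n / k) * a := by
    calc ∑ e ∈ E.filter (fun e => v ∈ eset e ∧ eset e ⊆ S),
          ((n.choose k : ℕ) : ℝ) * (g E (S \ eset e) : ℝ)
        ≤ (E.filter (fun e => v ∈ eset e ∧ eset e ⊆ S)).card •
            ((n / ((Nat.factorial k : ℝ) * β ^ (k-1))) * a) :=
          Finset.sum_le_card_nsmul _ _ _ hedge
      _ = ((E.filter (fun e => v ∈ eset e ∧ eset e ⊆ S)).card : ℝ) *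
            ((n / ((Nat.factorial k : ℝ) * β ^ (k-1))) * a) := by
          rw [nsmul_eq_mul]
      _ ≤ ((E.filter (fun e => v ∈ eset e)).card : ℝ) *
            ((n / ((Nat.factorial k : ℝ) * β ^ (k-1))) * a) := by
          apply mul_le_mul_of_nonneg_right _ (by positivity)
          have hsubf : E.filter (fun e => v ∈ eset e ∧ eset e ⊆ S) ⊆
              E.filter (fun e => v ∈ eset e) := by
            intro e he
            rw [Finset.mem_filter] at he ⊢
            exact ⟨he.1, he.2.1⟩
          exact_mod_cast Finset.card_le_card hsubf
      _ ≤ (n / k) * a := by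
          set D : ℝ := ((E.filter (fun e => v ∈ eset e)).card : ℝ) with hDdef
          have hD0 : 0 ≤ D := by positivity
          have hDk := hD v
          rw [← hDdef] at hDk
          have h1 : D * ((n:ℝ) / ((Nat.factorial k : ℝ) * β ^ (k-1))) ≤ (n:ℝ) / k := by
            rw [mul_div_assoc', div_le_div_iff₀ hkfβ hk0]
            nlinarith [mul_le_mul_of_nonneg_left hDk (show (0:ℝ) ≤ (n:ℝ) by positivity)]
          calc D * ((n / ((Nat.factorial k : ℝ) * β ^ (k-1))) * a)
              = (D * (n / ((Nat.factorial k : ℝ) * β ^ (k-1)))) * a := by ring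
            _ ≤ (n / k) * a := mul_le_mul_of_nonneg_right h1 ha0
  have hring : β * (n:ℝ) * a = (n:ℝ) * a - (n / k) * a := by
    rw [hβ]; field_simp
  rw [hring]
  linarith
end

section
variable {V : Type*} [DecidableEq V] {k : ℕ}

lemma g_pos (E : Finset (Fin k → V)) (hinj : ∀ e ∈ E, Function.Injective e) (hk : 2 ≤ k)
    (hD : ∀ v : V, (((E.filter (fun e => v ∈ eset e)).card : ℝ) * k ≤
      (Nat.factorial k : ℝ) * ((1 : ℝ) - 1/k) ^ (k - 1))) :
    ∀ (n : ℕ) (S : Finset V), S.card = n → 0 < g E S := by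
  have hβ0 : (0 : ℝ) < 1 - 1/k := by
    have h2 : (2:ℝ) ≤ k := by exact_mod_cast hk
    have : (1 : ℝ)/k ≤ 1/2 := by
      apply div_le_div_of_nonneg_left <;> norm_num
      exact_mod_cast hk
    linarith
  intro n
  induction n with
  | zero =>
    intro S hS
    rw [Finset.card_eq_zero] at hS
    subst hS
    rw [g, Finset.card_pos]
    refine ⟨[], mem_goodF.2 ⟨by rw [Finset.toList_empty], ?_⟩⟩
    intro e he hsl
    have := List.sublist_nil.1 hsl
    have hlen := congrArg List.length this
    rw [List.length_ofFn] at hlen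
    simp at hlen
    omega
  | succ n ihn =>
    intro S hS
    obtain ⟨v, hv⟩ : S.Nonempty := Finset.card_pos.1 (by omega)
    have hm := master E hinj hk hD S.card S v rfl hv
    have hg' : 0 < g E (S.erase v) := ihn (S.erase v) (by rw [Finset.card_erase_of_mem hv]; omega)
    have : (0:ℝ) < (g E S : ℝ) := by
      calc (0:ℝ) < (1 - 1/k) * S.card * (g E (S.erase v)) := by
            have : (0:ℝ) < (g E (S.erase v) : ℝ) := by exact_mod_cast hg'
            have hc : (0:ℝ) < (S.card : ℝ) := by
              have : 0 < S.card := by omega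
              exact_mod_cast this
            positivity
        _ ≤ g E S := hm
    exact_mod_cast this

lemma consistent_sublist {l : List V} (hnd : l.Nodup) (hmem : ∀ x : V, x ∈ l)
    (e : Fin k → V) (hmono : ∀ i j : Fin k, i < j → l.idxOf (e i) < l.idxOf (e j)) :
    (List.ofFn e).Sublist l := by
  rw [List.sublist_iff_exists_fin_orderEmbedding_get_eq]
  refine ⟨OrderEmbedding.ofStrictMono
    (fun i => (⟨l.idxOf (e (Fin.cast (List.length_ofFn : (List.ofFn e).length = k) i)),
      List.idxOf_lt_length_iff.2 (hmem _)⟩ : Fin l.length)) ?_, ?_⟩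
  · intro i j hij
    rw [Fin.mk_lt_mk]
    refine hmono _ _ ?_
    rw [Fin.lt_def]
    exact hij
  · intro i
    rw [List.get_ofFn, List.get_eq_getElem]
    exact (List.getElem_idxOf _).symm

lemma degree_bound [Fintype V] (E : Finset (Fin k → V))
    (hinj : ∀ e ∈ E, Function.Injective e)
    (hlin : ∀ e ∈ E, ∀ f ∈ E, e ≠ f → (Set.range e ∩ Set.range f).Subsingleton)
    (v : V) :
    (E.filter (fun e => v ∈ eset e)).card * (k - 1) ≤ Fintype.card V - 1 := by
  classical
  set F := E.filter (fun e => v ∈ eset e) with hF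
  have hdisj : ∀ e ∈ F, ∀ f ∈ F, e ≠ f → Disjoint ((eset e).erase v) ((eset f).erase v) := by
    intro e he f hf hef
    rw [hF, Finset.mem_filter] at he hf
    rw [Finset.disjoint_left]
    intro x hxe hxf
    rw [Finset.mem_erase] at hxe hxf
    have hsub := hlin e he.1 f hf.1 hef
    have hx : x ∈ Set.range e ∩ Set.range f :=
      ⟨mem_eset.1 hxe.2, mem_eset.1 hxf.2⟩
    have hv' : v ∈ Set.range e ∩ Set.range f :=
      ⟨mem_eset.1 he.2, mem_eset.1 hf.2⟩
    exact hxe.1 (hsub hx hv')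
  have hcard : (F.biUnion (fun e => (eset e).erase v)).card = F.card * (k - 1) := by
    rw [Finset.card_biUnion hdisj]
    rw [Finset.sum_congr rfl (fun e he => ?_), Finset.sum_const, smul_eq_mul]
    rw [hF, Finset.mem_filter] at he
    rw [Finset.card_erase_of_mem he.2, card_eset (hinj e he.1)]
  have hsub : F.biUnion (fun e => (eset e).erase v) ⊆ Finset.univ.erase v := by
    intro x hx
    rw [Finset.mem_biUnion] at hx
    obtain ⟨e, _, hxe⟩ := hx
    rw [Finset.mem_erase] at hxe ⊢
    exact ⟨hxe.1, Finset.mem_univ x⟩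
  calc F.card * (k-1) = _ := hcard.symm
    _ ≤ (Finset.univ.erase v).card := Finset.card_le_card hsub
    _ = Fintype.card V - 1 := by rw [Finset.card_erase_of_mem (Finset.mem_univ v), Finset.card_univ]

lemma exp_bound (hk : 2 ≤ k) : 1 ≤ Real.exp 1 * ((1 : ℝ) - 1/k) ^ (k - 1) := by
  have hk0 : (0:ℝ) < k := by positivity
  have hc0 : (0:ℝ) < (k:ℝ) - 1 := by
    have : (2:ℝ) ≤ k := by exact_mod_cast hk
    linarith
  set c : ℝ := (k:ℝ) - 1 with hc
  have h1 : 1 + 1/c ≤ Real.exp (1/c) := by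
    have := Real.add_one_le_exp (1/c)
    linarith
  have h2 : (1 + 1/c) ^ (k-1) ≤ Real.exp (1/c) ^ (k-1) :=
    pow_le_pow_left₀ (by positivity) h1 _
  have h3 : Real.exp (1/c) ^ (k-1) = Real.exp 1 := by
    rw [← Real.exp_nat_mul]
    congr 1
    rw [hc]
    have : ((k - 1 : ℕ) : ℝ) = (k:ℝ) - 1 := by
      push_cast [Nat.cast_sub (by omega : 1 ≤ k)]
      ring
    rw [this]
    field_simp
    exact div_self (ne_of_gt (by linarith))
  have hβc : ((1:ℝ) - 1/k) * (1 + 1/c) = 1 := by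
    rw [hc]
    field_simp
    rw [mul_add, mul_one_div_cancel (ne_of_gt (by linarith))]; ring
  have hβ0 : (0:ℝ) < 1 - 1/k := by
    have h2k : (2:ℝ) ≤ k := by exact_mod_cast hk
    have : (1 : ℝ)/k ≤ 1/2 := by
      apply div_le_div_of_nonneg_left <;> norm_num
      exact_mod_cast hk
    linarith
  have key : ((1:ℝ) - 1/k) ^ (k-1) * (1 + 1/c) ^ (k-1) = 1 := by
    rw [← mul_pow, hβc, one_pow]
  calc (1:ℝ) = ((1:ℝ) - 1/k) ^ (k-1) * (1 + 1/c) ^ (k-1) := key.symm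
    _ ≤ ((1:ℝ) - 1/k) ^ (k-1) * Real.exp 1 := by
        apply mul_le_mul_of_nonneg_left (h3 ▸ h2) (by positivity)
    _ = Real.exp 1 * ((1:ℝ) - 1/k) ^ (k-1) := by ring
end

/-- For every integer `k ≥ 2`, every oriented linear `k`-graph with
Property O has more than `(k−1)·(k−1)!/(e·k)` vertices; that is,
`n'(k) ≥ (k−1)·(k−1)!/(e·k)`. -/
theorem stmt_2 (k : ℕ) (hk : 2 ≤ k) (V : Type*) [Fintype V]
    (E : Finset (Fin k → V))
    (hinj : ∀ e ∈ E, Function.Injective e)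
    (hdist : ∀ e ∈ E, ∀ f ∈ E, Set.range e = Set.range f → e = f)
    (hlin : ∀ e ∈ E, ∀ f ∈ E, e ≠ f → (Set.range e ∩ Set.range f).Subsingleton)
    (hO : ∀ σ : V → ℕ, Function.Injective σ →
      ∃ e ∈ E, ∀ i j : Fin k, i < j → σ (e i) < σ (e j)) :
    ((k : ℝ) - 1) * (Nat.factorial (k - 1) : ℝ) / (Real.exp 1 * (k : ℝ)) <
      (Fintype.card V : ℝ) := by
  classical
  by_cases hall : ∀ v : V, (((E.filter (fun e => v ∈ eset e)).card : ℝ) * k ≤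
      (Nat.factorial k : ℝ) * ((1 : ℝ) - 1/k) ^ (k - 1))
  · exfalso
    have hpos := g_pos E hinj hk hall (Finset.univ.card) Finset.univ rfl
    obtain ⟨l, hl⟩ := Finset.card_pos.1 hpos
    rw [mem_goodF] at hl
    obtain ⟨hperm, hgood⟩ := hl
    obtain ⟨hnd, htf, hlen⟩ := perm_facts hperm
    have hmem : ∀ x : V, x ∈ l := fun x => by
      rw [← List.mem_toFinset, htf]; exact Finset.mem_univ x
    have hσ : Function.Injective (fun x : V => (l.idxOf x : ℕ)) := by
      intro x y hxy
      have hx := List.getElem_idxOf (List.idxOf_lt_length_iff.2 (hmem x))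
      have hy := List.getElem_idxOf (List.idxOf_lt_length_iff.2 (hmem y))
      simp only at hxy
      rw [← hx, ← hy]
      congr 1
    obtain ⟨e, he, hmono⟩ := hO _ hσ
    exact hgood e he (consistent_sublist hnd hmem e hmono)
  · push_neg at hall
    obtain ⟨v, hv⟩ := hall
    set c : ℝ := (k:ℝ) - 1 with hcdef
    set f : ℝ := (Nat.factorial (k-1) : ℝ) with hfdef
    set βp : ℝ := ((1 : ℝ) - 1/k) ^ (k - 1) with hβpdef
    set D : ℝ := ((E.filter (fun e => v ∈ eset e)).card : ℝ) with hDdef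
    have hk0 : (0:ℝ) < k := by positivity
    have hkR : (2:ℝ) ≤ (k:ℝ) := by exact_mod_cast hk
    have hc0 : (0:ℝ) < c := by rw [hcdef]; linarith
    have hf0 : (0:ℝ) < f := by
      rw [hfdef]; exact_mod_cast Nat.factorial_pos (k-1)
    have hβ0 : (0 : ℝ) < 1 - 1/k := by
      have : (1 : ℝ)/k ≤ 1/2 := by
        apply div_le_div_of_nonneg_left <;> norm_num
        exact_mod_cast hk
      linarith
    have hβp0 : (0:ℝ) < βp := by rw [hβpdef]; positivity
    have he0 : (0:ℝ) < Real.exp 1 := Real.exp_pos 1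
    have hexp : 1 ≤ Real.exp 1 * βp := exp_bound hk
    have hKf : (Nat.factorial k : ℝ) = (k:ℝ) * f := by
      obtain ⟨j, hj⟩ : ∃ j, k = j + 1 := ⟨k-1, by omega⟩
      rw [hfdef, hj, Nat.factorial_succ, Nat.add_sub_cancel]
      push_cast
      ring
    have hD' : f * βp < D := by
      rw [hKf] at hv
      have h4 : (f * βp) * k < D * k := by nlinarith [hv]
      exact lt_of_mul_lt_mul_right h4 hk0.le
    have hdeg := degree_bound E hinj hlin v
    have hV1 : 1 ≤ Fintype.card V := Fintype.card_pos_iff.2 ⟨v⟩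
    have hdegR : D * c ≤ (Fintype.card V : ℝ) - 1 := by
      have hdeg' : (E.filter (fun e => v ∈ eset e)).card * (k - 1) + 1 ≤ Fintype.card V := by
        omega
      have := (Nat.cast_le (α := ℝ)).2 hdeg'
      push_cast [Nat.cast_sub (show 1 ≤ k by omega)] at this
      rw [hDdef, hcdef]
      linarith
    calc c * f / (Real.exp 1 * k) ≤ c * (f * βp) / k := by
          rw [div_le_div_iff₀ (by positivity) hk0]
          nlinarith [mul_le_mul_of_nonneg_left hexp (le_of_lt (show (0:ℝ) < c*f*k by positivity))]
      _ < c * D / k := by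
          apply (div_lt_div_iff_of_pos_right hk0).2
          exact mul_lt_mul_of_pos_left hD' hc0
      _ ≤ c * D := by
          apply div_le_self (by positivity)
          linarith
      _ ≤ (Fintype.card V : ℝ) - 1 := by linarith [hdegR]
      _ < (Fintype.card V : ℝ) := by linarith
end

section
/- For every ε > 0 there exists k₀ such that for all integers k ≥ k₀ there exists an oriented linear k-graph with Property O having at most (1+ε)·4k⁴(ln k)·k! vertices; that is, n'(k) ≤ (1+o(1))·4k⁴ ln k·k!. -/
open Function Finset

namespace Stmt3Aux


variable {k q : ℕ}

/-- encode a (column, field element) pair into `Fin (q*k)` -/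
def enc [NeZero q] (p : Fin k × ZMod q) : Fin (q * k) :=
  ⟨(p.2).val * k + p.1.val, by
    have h1 : (p.2).val < q := ZMod.val_lt p.2
    have h2 : (p.1 : ℕ) < k := p.1.isLt
    calc (p.2).val * k + (p.1 : ℕ) < (p.2).val * k + k := by omega
    _ = ((p.2).val + 1) * k := by ring
    _ ≤ q * k := Nat.mul_le_mul_right k h1⟩

lemma enc_injective [NeZero q] : Function.Injective (enc (k := k) (q := q)) := by
  rintro ⟨j, x⟩ ⟨j', x'⟩ h
  have h' : x.val * k + (j : ℕ) = x'.val * k + (j' : ℕ) := congrArg Fin.val h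
  have hj : (j : ℕ) < k := j.isLt
  have hj' : (j' : ℕ) < k := j'.isLt
  have hk : 0 < k := lt_of_le_of_lt (Nat.zero_le _) hj
  have hx : x.val = x'.val := by
    have e1 : (x.val * k + (j : ℕ)) / k = x.val := by
      rw [add_comm, Nat.add_mul_div_right _ _ hk, Nat.div_eq_of_lt hj, Nat.zero_add]
    have e2 : (x'.val * k + (j' : ℕ)) / k = x'.val := by
      rw [add_comm, Nat.add_mul_div_right _ _ hk, Nat.div_eq_of_lt hj', Nat.zero_add]
    rw [← e1, ← e2, h']
  rw [hx] at h'
  have hjj : (j : ℕ) = (j' : ℕ) := by omega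
  have hxx : x = x' := ZMod.val_injective _ hx
  simp [Prod.ext_iff, hxx, Fin.ext_iff, hjj]

/-- the `j`-th point of the line `y = m x + c` -/
def pt [NeZero q] (mc : ZMod q × ZMod q) (j : Fin k) : Fin (q * k) :=
  enc (j, mc.1 * ((j : ℕ) : ZMod q) + mc.2)

lemma pt_injective [NeZero q] (mc : ZMod q × ZMod q) :
    Function.Injective (pt (k := k) (q := q) mc) := by
  intro j j' h
  have := enc_injective h
  exact (Prod.ext_iff.1 this).1

lemma pt_eq_iff [NeZero q] {mc mc' : ZMod q × ZMod q} {j j' : Fin k}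
    (h : pt mc j = pt mc' j') :
    j = j' ∧ mc.1 * ((j : ℕ) : ZMod q) + mc.2 = mc'.1 * ((j' : ℕ) : ZMod q) + mc'.2 := by
  have := enc_injective h
  exact ⟨(Prod.ext_iff.1 this).1, (Prod.ext_iff.1 this).2⟩

lemma cast_fin_injective [NeZero q] (hkq : k ≤ q) {j j' : Fin k}
    (h : ((j : ℕ) : ZMod q) = ((j' : ℕ) : ZMod q)) : j = j' := by
  have h1 : ((j : ℕ) : ZMod q).val = (j : ℕ) := ZMod.val_cast_of_lt (lt_of_lt_of_le j.isLt hkq)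
  have h2 : ((j' : ℕ) : ZMod q).val = (j' : ℕ) := ZMod.val_cast_of_lt (lt_of_lt_of_le j'.isLt hkq)
  have h3 : ((j : ℕ) : ZMod q).val = ((j' : ℕ) : ZMod q).val := congrArg ZMod.val h
  rw [h1, h2] at h3
  exact Fin.ext h3

lemma inter_subsingleton [NeZero q] (hq : Nat.Prime q) (hkq : k ≤ q)
    {mc mc' : ZMod q × ZMod q} (hne : mc ≠ mc') :
    (Set.range (pt (k := k) mc) ∩ Set.range (pt mc')).Subsingleton := by
  haveI : Fact (Nat.Prime q) := ⟨hq⟩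
  rintro x ⟨⟨j1, hx1⟩, ⟨j1', hx1'⟩⟩ y ⟨⟨j2, hy2⟩, ⟨j2', hy2'⟩⟩
  obtain ⟨hj1, he1⟩ := pt_eq_iff (hx1.trans hx1'.symm)
  obtain ⟨hj2, he2⟩ := pt_eq_iff (hy2.trans hy2'.symm)
  by_cases hjj : j1 = j2
  · rw [← hx1, ← hy2, hjj]
  · exfalso
    have hc : ((j1 : ℕ) : ZMod q) ≠ ((j2 : ℕ) : ZMod q) := fun h => hjj (cast_fin_injective hkq h)
    rw [← hj1] at he1
    rw [← hj2] at he2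
    have hsub : (mc.1 - mc'.1) * (((j1 : ℕ) : ZMod q) - ((j2 : ℕ) : ZMod q)) = 0 := by
      linear_combination he1 - he2
    rcases mul_eq_zero.1 hsub with hm | hj
    · have hm' : mc.1 = mc'.1 := by linear_combination hm
      have hcc : mc.2 = mc'.2 := by
        rw [hm'] at he1; linear_combination he1
      exact hne (Prod.ext hm' hcc)
    · exact hc (by linear_combination hj)



lemma two_mul_pow_le {a : ℕ} (ha : 1 ≤ a) : 2 * a ^ a ≤ (a + 1) ^ a := by
  have h0 : (0 : ℝ) < (a : ℝ) := by exact_mod_cast ha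
  have hinv : (-2 : ℝ) ≤ ((a : ℝ))⁻¹ := by
    have : (0 : ℝ) ≤ ((a : ℝ))⁻¹ := by positivity
    linarith
  have h := one_add_mul_le_pow hinv a
  have h2 : (2 : ℝ) ≤ (1 + (a : ℝ)⁻¹) ^ a := by
    have : (1 : ℝ) + (a : ℝ) * (a : ℝ)⁻¹ = 2 := by
      rw [mul_inv_cancel₀ h0.ne']; norm_num
    linarith [h, this ▸ h]
  have h3 : (2 : ℝ) * (a : ℝ) ^ a ≤ ((a : ℝ) + 1) ^ a := by
    have hx : ((1 : ℝ) + (a : ℝ)⁻¹) ^ a * (a : ℝ) ^ a = ((a : ℝ) + 1) ^ a := by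
      rw [← mul_pow]
      congr 1
      field_simp
    calc (2 : ℝ) * (a : ℝ) ^ a ≤ (1 + (a : ℝ)⁻¹) ^ a * (a : ℝ) ^ a := by
          apply mul_le_mul_of_nonneg_right h2 (by positivity)
      _ = ((a : ℝ) + 1) ^ a := hx
  exact_mod_cast h3

lemma pow_factor {a m : ℕ} (ha : 1 ≤ a) : 2 ^ (m / a) * a ^ m ≤ (a + 1) ^ m := by
  have ha0 : 0 < a := ha
  set s := m / a with hs
  set r := m % a with hr
  have hm : a * s + r = m := Nat.div_add_mod m a
  calc 2 ^ s * a ^ m = 2 ^ s * (a ^ (a * s) * a ^ r) := by rw [← pow_add, hm]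
    _ = (2 ^ s * (a ^ a) ^ s) * a ^ r := by rw [pow_mul]; ring
    _ = (2 * a ^ a) ^ s * a ^ r := by rw [mul_pow]
    _ ≤ ((a + 1) ^ a) ^ s * (a + 1) ^ r := by
        apply Nat.mul_le_mul
        · exact Nat.pow_le_pow_left (two_mul_pow_le ha) s
        · exact Nat.pow_le_pow_left (Nat.le_succ a) r
    _ = (a + 1) ^ (a * s + r) := by rw [← pow_mul, ← pow_add]
    _ = (a + 1) ^ m := by rw [hm]

lemma sq_le_two_pow {k : ℕ} (hk : 4 ≤ k) : k ^ 2 ≤ 2 ^ k := by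
  induction k, hk using Nat.le_induction with
  | base => norm_num
  | succ n hn ih =>
      have h1 : 2 * n + 1 ≤ n ^ 2 := by nlinarith
      calc (n + 1) ^ 2 = n ^ 2 + (2 * n + 1) := by ring
        _ ≤ 2 ^ n + 2 ^ n := by omega
        _ = 2 ^ (n + 1) := by ring



lemma card_avoid {A B : Type*} [Fintype A] [DecidableEq A] [Fintype B] [DecidableEq B] (f : A → B) :
    Fintype.card {ω : A → B // ∀ a, ω a ≠ f a} = (Fintype.card B - 1) ^ Fintype.card A := by
  classical
  rw [Fintype.card_congr (Equiv.subtypePiEquivPi (p := fun a b => b ≠ f a))]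
  rw [Fintype.card_pi]
  have h : ∀ a : A, Fintype.card {b : B // b ≠ f a} = Fintype.card B - 1 := by
    intro a
    rw [Fintype.card_subtype_compl, Fintype.card_subtype_eq]
  simp only [h]
  rw [Finset.prod_const, Finset.card_univ]

lemma exists_good [NeZero q]
    (hbig : (q * k) ^ (q * k) * (Nat.factorial k - 1) ^ (q * q) <
      (Nat.factorial k) ^ (q * q)) :
    ∃ ω : ZMod q × ZMod q → Equiv.Perm (Fin k),
      ∀ τ : Fin (q * k) → Fin (q * k), Function.Injective τ →
        ∃ mc : ZMod q × ZMod q, StrictMono (fun i => τ (pt mc (ω mc i))) := by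
  classical
  have hgood : ∀ (τ : Fin (q * k) → Fin (q * k)), Function.Injective τ → ∀ mc,
      ∃ ρ : Equiv.Perm (Fin k), StrictMono (fun i => τ (pt mc (ρ i))) := by
    intro τ hτ mc
    set f : Fin k → Fin (q * k) := fun j => τ (pt mc j) with hf_def
    have hf : Function.Injective f := hτ.comp (pt_injective mc)
    refine ⟨Tuple.sort f, ?_⟩
    have hmono : Monotone (f ∘ Tuple.sort f) := Tuple.monotone_sort f
    exact hmono.strictMono_of_injective (hf.comp (Equiv.injective _))
  by_contra hcon
  push_neg at hcon
  set g : (Fin (q * k) → Fin (q * k)) → (ZMod q × ZMod q) → Equiv.Perm (Fin k) := fun τ mc =>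
    if h : ∃ ρ : Equiv.Perm (Fin k), StrictMono (fun i => τ (pt mc (ρ i))) then h.choose
    else 1 with hg_def
  set A : (Fin (q * k) → Fin (q * k)) → Finset ((ZMod q × ZMod q) → Equiv.Perm (Fin k)) :=
    fun τ => univ.filter (fun ω => ∀ mc, ω mc ≠ g τ mc) with hA_def
  have hcover : (univ : Finset ((ZMod q × ZMod q) → Equiv.Perm (Fin k))) ⊆
      univ.biUnion A := by
    intro ω _
    obtain ⟨τ, hτinj, hτbad⟩ := hcon ω
    refine mem_biUnion.2 ⟨τ, mem_univ _, mem_filter.2 ⟨mem_univ _, ?_⟩⟩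
    intro mc heq
    have hex := hgood τ hτinj mc
    have hsm : StrictMono (fun i => τ (pt mc ((g τ mc) i))) := by
      simp only [hg_def, dif_pos hex]
      exact hex.choose_spec
    exact hτbad mc (heq ▸ hsm)
  have hAcard : ∀ τ, (A τ).card ≤ (Nat.factorial k - 1) ^ (q * q) := by
    intro τ
    have h1 : (A τ).card = Fintype.card {ω : (ZMod q × ZMod q) → Equiv.Perm (Fin k) //
        ∀ mc, ω mc ≠ g τ mc} := (Fintype.card_subtype _).symm
    rw [h1, card_avoid (g τ)]
    apply le_of_eq
    congr 1
    · rw [Fintype.card_perm, Fintype.card_fin]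
    · rw [Fintype.card_prod, ZMod.card]
  have htotal : Fintype.card ((ZMod q × ZMod q) → Equiv.Perm (Fin k)) =
      (Nat.factorial k) ^ (q * q) := by
    rw [Fintype.card_fun, Fintype.card_perm, Fintype.card_fin, Fintype.card_prod, ZMod.card]
  have hle : (Nat.factorial k) ^ (q * q) ≤ (q * k) ^ (q * k) *
      (Nat.factorial k - 1) ^ (q * q) := by
    calc (Nat.factorial k) ^ (q * q)
        = (univ : Finset ((ZMod q × ZMod q) → Equiv.Perm (Fin k))).card := by
          rw [card_univ, htotal]
      _ ≤ (univ.biUnion A).card := Finset.card_le_card hcover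
      _ ≤ ∑ τ : Fin (q * k) → Fin (q * k), (A τ).card := Finset.card_biUnion_le
      _ ≤ ∑ _τ : Fin (q * k) → Fin (q * k), (Nat.factorial k - 1) ^ (q * q) :=
          Finset.sum_le_sum (fun τ _ => hAcard τ)
      _ = (q * k) ^ (q * k) * (Nat.factorial k - 1) ^ (q * q) := by
          rw [Finset.sum_const, card_univ, Fintype.card_fun, Fintype.card_fin, smul_eq_mul]
  exact absurd hbig (not_lt.2 hle)


end Stmt3Aux

open Stmt3Aux in

/-- For every `ε > 0` there exists `k₀` such that for all `k ≥ k₀`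
there exists an oriented linear `k`-graph with Property O having at most
`(1+ε)·4k⁴(ln k)·k!` vertices; that is, `n'(k) ≤ (1+o(1))·4k⁴ ln k·k!`. -/
theorem stmt_3 :
    ∀ ε : ℝ, 0 < ε → ∃ k₀ : ℕ, ∀ k : ℕ, k₀ ≤ k →
      ∃ (n : ℕ) (E : Finset (Fin k → Fin n)),
        (∀ e ∈ E, Function.Injective e) ∧
        (∀ e ∈ E, ∀ f ∈ E, Set.range e = Set.range f → e = f) ∧
        (∀ e ∈ E, ∀ f ∈ E, e ≠ f → (Set.range e ∩ Set.range f).Subsingleton) ∧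
        (∀ σ : Fin n → ℕ, Function.Injective σ →
          ∃ e ∈ E, ∀ i j : Fin k, i < j → σ (e i) < σ (e j)) ∧
        (n : ℝ) ≤ (1 + ε) * 4 * (k : ℝ) ^ 4 * Real.log k * (Nat.factorial k : ℝ) := by
  classical
  intro ε hε
  refine ⟨8, fun k hk => ?_⟩
  set F := Nat.factorial k with hFdef
  have hF1 : 1 ≤ F := Nat.factorial_pos k
  have hFk : k ≤ F := Nat.self_le_factorial k
  have hk0 : 0 < k := by omega
  -- choose a prime q with 4k³F < q ≤ 8k³F
  have hne : 4 * k ^ 3 * F ≠ 0 := by positivity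
  obtain ⟨q, hqp, hql, hqu⟩ := Nat.exists_prime_lt_and_le_two_mul (4 * k ^ 3 * F) hne
  haveI : NeZero q := ⟨hqp.pos.ne'⟩
  have hkq : k ≤ q := by
    have hk3 : k ≤ k ^ 3 := Nat.le_self_pow (by norm_num) k
    have h1 : k ^ 3 * 1 ≤ k ^ 3 * (4 * F) := Nat.mul_le_mul_left _ (by omega)
    have h2 : k ^ 3 * (4 * F) = 4 * k ^ 3 * F := by ring
    omega
  -- the key counting inequality
  have hbig : (q * k) ^ (q * k) * (F - 1) ^ (q * q) < F ^ (q * q) := by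
    have ha1 : 1 ≤ F - 1 := by
      have : 2 ≤ F := le_trans (by omega) hFk
      omega
    have haF : (F - 1) + 1 = F := by omega
    set a := F - 1 with hadef
    set s := (q * q) / a with hsdef
    have hstep1 : 2 ^ s * a ^ (q * q) ≤ F ^ (q * q) := by
      have := pow_factor (m := q * q) ha1
      rwa [haF] at this
    -- n ≤ 2^(2k²)
    have hk4 : 4 ≤ k := by omega
    have hpow1 : k ^ 4 ≤ 2 ^ (2 * k) := by
      calc k ^ 4 = (k ^ 2) ^ 2 := by ring
        _ ≤ (2 ^ k) ^ 2 := Nat.pow_le_pow_left (sq_le_two_pow hk4) 2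
        _ = 2 ^ (2 * k) := by rw [← pow_mul]; ring_nf
    have hpow2 : F ≤ 2 ^ (k * k) := by
      calc F ≤ k ^ k := Nat.factorial_le_pow k
        _ ≤ (2 ^ k) ^ k := Nat.pow_le_pow_left (Nat.le_of_lt (Nat.lt_two_pow_self (n := k))) k
        _ = 2 ^ (k * k) := by rw [← pow_mul]
    have hexp : 3 + 2 * k + k * k ≤ 2 * k ^ 2 := by nlinarith
    have hn1 : q * k ≤ 2 ^ (2 * k ^ 2) := by
      calc q * k ≤ 8 * k ^ 3 * F * k := by
            have : q ≤ 2 * (4 * k ^ 3 * F) := hqu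
            nlinarith
        _ = 8 * (k ^ 4 * F) := by ring
        _ ≤ 2 ^ 3 * (2 ^ (2 * k) * 2 ^ (k * k)) := by
            have := Nat.mul_le_mul hpow1 hpow2
            omega
        _ = 2 ^ (3 + 2 * k + k * k) := by rw [← pow_add, ← pow_add]; ring_nf
        _ ≤ 2 ^ (2 * k ^ 2) := Nat.pow_le_pow_right (by norm_num) hexp
    -- 2k²·(qk) < s
    have hs : 2 * k ^ 2 * (q * k) < s := by
      have hF0 : 0 < F := hF1
      have h1 : s ≥ (q * q) / F := by
        apply Nat.div_le_div_left (by omega) (by omega)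
      have h2 : (q * q) / F ≥ 4 * k ^ 3 * q := by
        have hqq : F * (4 * k ^ 3 * q) ≤ q * q := by nlinarith
        calc 4 * k ^ 3 * q = F * (4 * k ^ 3 * q) / F := by rw [Nat.mul_div_cancel_left _ hF0]
          _ ≤ (q * q) / F := Nat.div_le_div_right hqq
      have h3 : 2 * k ^ 2 * (q * k) = 2 * k ^ 3 * q := by ring
      have h4 : 2 * k ^ 3 * q < 4 * k ^ 3 * q := by
        have : 0 < k ^ 3 * q := Nat.mul_pos (pow_pos hk0 3) hqp.pos
        nlinarith
      omega
    have hn2 : (q * k) ^ (q * k) < 2 ^ s := by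
      calc (q * k) ^ (q * k) ≤ (2 ^ (2 * k ^ 2)) ^ (q * k) := Nat.pow_le_pow_left hn1 _
        _ = 2 ^ (2 * k ^ 2 * (q * k)) := by rw [← pow_mul]
        _ < 2 ^ s := Nat.pow_lt_pow_right (by norm_num) hs
    calc (q * k) ^ (q * k) * a ^ (q * q) < 2 ^ s * a ^ (q * q) := by
          exact (Nat.mul_lt_mul_right (pow_pos ha1 _)).2 hn2
      _ ≤ F ^ (q * q) := hstep1
  obtain ⟨ω, hω⟩ := exists_good (k := k) (q := q) hbig
  set n := q * k with hndef
  set tup : ZMod q × ZMod q → (Fin k → Fin n) := fun mc => fun i => pt mc (ω mc i) with htup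
  set E : Finset (Fin k → Fin n) := Finset.image tup Finset.univ with hE
  have htupinj : ∀ mc, Function.Injective (tup mc) := by
    intro mc i j h
    exact (ω mc).injective (pt_injective mc h)
  have htuprange : ∀ mc, Set.range (tup mc) = Set.range (pt (k := k) (q := q) mc) := by
    intro mc
    have : tup mc = (pt mc) ∘ (ω mc) := rfl
    rw [this, Set.range_comp, Equiv.range_eq_univ, Set.image_univ]
  -- two distinct indices in Fin k
  have hk2 : 2 ≤ k := by omega
  have hi01 : (⟨0, by omega⟩ : Fin k) ≠ (⟨1, by omega⟩ : Fin k) := by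
    simp [Fin.ext_iff]
  have hdistinct : ∀ {mc mc' : ZMod q × ZMod q}, mc ≠ mc' →
      Set.range (tup mc) ≠ Set.range (tup mc') := by
    intro mc mc' hmm heq
    have hsub := inter_subsingleton hqp hkq hmm
    rw [← htuprange, ← htuprange, heq, Set.inter_self] at hsub
    have h1 : tup mc' (⟨0, by omega⟩ : Fin k) ∈ Set.range (tup mc') := ⟨_, rfl⟩
    have h2 : tup mc' (⟨1, by omega⟩ : Fin k) ∈ Set.range (tup mc') := ⟨_, rfl⟩
    exact hi01 (htupinj mc' (hsub h1 h2))
  refine ⟨n, E, ?_, ?_, ?_, ?_, ?_⟩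
  · rintro e he
    obtain ⟨mc, -, rfl⟩ := Finset.mem_image.1 he
    exact htupinj mc
  · rintro e he f hf hrange
    obtain ⟨mc, -, rfl⟩ := Finset.mem_image.1 he
    obtain ⟨mc', -, rfl⟩ := Finset.mem_image.1 hf
    by_cases hmm : mc = mc'
    · rw [hmm]
    · exact absurd hrange (hdistinct hmm)
  · rintro e he f hf hef
    obtain ⟨mc, -, rfl⟩ := Finset.mem_image.1 he
    obtain ⟨mc', -, rfl⟩ := Finset.mem_image.1 hf
    have hmm : mc ≠ mc' := by rintro rfl; exact hef rfl
    rw [htuprange, htuprange]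
    exact inter_subsingleton hqp hkq hmm
  · intro σ hσ
    -- reduce σ to an order-preserving relabelling τ : Fin n → Fin n
    set s : Finset ℕ := Finset.image σ Finset.univ with hsdef
    have hcard : s.card = n := by
      rw [hsdef, Finset.card_image_of_injective _ hσ, Finset.card_univ, Fintype.card_fin]
    set oi := s.orderIsoOfFin hcard with hoi
    have hmem : ∀ i, σ i ∈ s := fun i => Finset.mem_image.2 ⟨i, Finset.mem_univ i, rfl⟩
    set τ : Fin n → Fin n := fun i => oi.symm ⟨σ i, hmem i⟩ with hτ
    have hτlt : ∀ i j, σ i < σ j ↔ τ i < τ j := by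
      intro i j
      rw [hτ]
      simp only
      exact Iff.symm ((oi.symm.lt_iff_lt).trans Subtype.mk_lt_mk)
    have hτinj : Function.Injective τ := by
      intro i j h
      apply hσ
      have := congrArg oi h
      simp only [hτ, OrderIso.apply_symm_apply] at this
      exact congrArg Subtype.val this
    obtain ⟨mc, hmc⟩ := hω τ hτinj
    refine ⟨tup mc, Finset.mem_image.2 ⟨mc, Finset.mem_univ _, rfl⟩, ?_⟩
    intro i j hij
    rw [hτlt]
    exact hmc hij
  · -- size bound
    have hq8 : q ≤ 8 * k ^ 3 * F := by
      calc q ≤ 2 * (4 * k ^ 3 * F) := hqu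
        _ = 8 * k ^ 3 * F := by ring
    have hnR : (n : ℝ) ≤ 8 * (k : ℝ) ^ 4 * (F : ℝ) := by
      have : n ≤ 8 * k ^ 4 * F := by
        calc n = q * k := hndef
          _ ≤ (8 * k ^ 3 * F) * k := Nat.mul_le_mul_right k hq8
          _ = 8 * k ^ 4 * F := by ring
      exact_mod_cast this
    have hlog : (2 : ℝ) ≤ Real.log k := by
      rw [Real.le_log_iff_exp_le (by exact_mod_cast hk0)]
      have he : Real.exp 1 < 2.7182818286 := Real.exp_one_lt_d9
      have h8 : (8 : ℝ) ≤ (k : ℝ) := by exact_mod_cast hk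
      calc Real.exp 2 = Real.exp 1 * Real.exp 1 := by
            rw [← Real.exp_add]; norm_num
        _ ≤ 2.7182818286 * 2.7182818286 := by nlinarith [Real.exp_pos 1]
        _ ≤ 8 := by norm_num
        _ ≤ (k : ℝ) := h8
    have hε1 : (1 : ℝ) ≤ 1 + ε := by linarith
    calc (n : ℝ) ≤ 8 * (k : ℝ) ^ 4 * (F : ℝ) := hnR
      _ = 1 * 4 * (k : ℝ) ^ 4 * 2 * (F : ℝ) := by ring
      _ ≤ (1 + ε) * 4 * (k : ℝ) ^ 4 * Real.log k * (F : ℝ) := by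
          have hF0 : (0 : ℝ) ≤ (F : ℝ) := by positivity
          apply mul_le_mul_of_nonneg_right _ hF0
          have hlogpos : (0 : ℝ) ≤ Real.log k := by linarith
          calc (1 : ℝ) * 4 * (k : ℝ) ^ 4 * 2 = 2 * (4 * (k : ℝ) ^ 4) := by ring
            _ ≤ Real.log k * (4 * (k : ℝ) ^ 4) := mul_le_mul_of_nonneg_right hlog (by positivity)
            _ = 1 * (4 * (k : ℝ) ^ 4 * Real.log k) := by ring
            _ ≤ (1 + ε) * (4 * (k : ℝ) ^ 4 * Real.log k) := by
                apply mul_le_mul_of_nonneg_right hε1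
                have : (0 : ℝ) ≤ 4 * (k : ℝ) ^ 4 := by positivity
                exact mul_nonneg this hlogpos
            _ = (1 + ε) * 4 * (k : ℝ) ^ 4 * Real.log k := by ring
end

section
/- For every integer k ≥ 3, every k-graph with the weak Erdős–Szekeres property has at least k!/2 + 1 edges; that is, f_wES(k) ≥ k!/2 + 1. -/
open Finset

/-- A self-map of a finite set that is strictly compatible with an injective
ranking `σ` fixes every point of the set. -/
lemma fix_pts {V : Type*} (σ : V → ℕ) (hσ : Function.Injective σ) (e : Finset V)
    (h : V → V) (hmap : ∀ x ∈ e, h x ∈ e)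
    (hmono : ∀ x ∈ e, ∀ y ∈ e, (σ x < σ y ↔ σ (h x) < σ (h y))) :
    ∀ x ∈ e, h x = x := by
  classical
  have hinj : ∀ x ∈ e, ∀ y ∈ e, h x = h y → x = y := by
    intro x hx y hy hxy
    rcases lt_trichotomy (σ x) (σ y) with hl | hl | hl
    · exact absurd ((hmono x hx y hy).1 hl) (by rw [hxy]; exact lt_irrefl _)
    · exact hσ hl
    · exact absurd ((hmono y hy x hx).1 hl) (by rw [hxy]; exact lt_irrefl _)
  have hsurj : ∀ x ∈ e, ∃ z, ∃ hz : z ∈ e, x = h z := by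
    intro x hx
    exact Finset.surj_on_of_inj_on_of_card_le (fun a _ => h a) (fun a ha => hmap a ha)
      (fun a₁ a₂ ha₁ ha₂ hq => hinj a₁ ha₁ a₂ ha₂ hq) le_rfl x hx
  have key : ∀ N : ℕ, ∀ x ∈ e, σ x = N → h x = x := by
    intro N
    induction N using Nat.strong_induction_on with
    | _ N ih =>
      intro x hx hxN
      rcases lt_trichotomy (σ (h x)) (σ x) with hl | hl | hl
      · have hhx : h x ∈ e := hmap x hx
        have hfix : h (h x) = h x := ih (σ (h x)) (hxN ▸ hl) (h x) hhx rfl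
        have := (hmono (h x) hhx x hx).1 hl
        rw [hfix] at this
        exact absurd this (lt_irrefl _)
      · exact hσ hl
      · obtain ⟨z, hz, hzx⟩ := hsurj x hx
        have hlt : σ z < σ x := by
          have := (hmono z hz x hx).2 (by rw [← hzx]; exact hl)
          exact this
        have hfix : h z = z := ih (σ z) (hxN ▸ hlt) z hz rfl
        rw [hfix] at hzx
        subst hzx
        exact absurd hlt (lt_irrefl _)
  intro x hx
  exact key (σ x) x hx rfl

/-- Counting lemma: the number of orders (equivs `V ≃ Fin n`) that are strictly
increasing w.r.t. `σ` on a `k`-element set `e`, multiplied by `k!`, is at most `n!`. -/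
lemma mono_count {V : Type*} [Fintype V] (σ : V → ℕ) (hσ : Function.Injective σ)
    {n k : ℕ} (hn : Fintype.card V = n) (e : Finset V) (he : e.card = k)
    (S : Finset (V ≃ Fin n))
    (hS : ∀ τ ∈ S, ∀ x ∈ e, ∀ y ∈ e, σ x < σ y → τ x < τ y) :
    S.card * k.factorial ≤ n.factorial := by
  classical
  have hV : V ≃ Fin n := Fintype.equivFinOfCardEq hn
  have hcardΩ : (Finset.univ : Finset (V ≃ Fin n)).card = n.factorial := by
    rw [Finset.card_univ, Fintype.card_equiv hV, hn]
  have hsub : Fintype.card {x // x ∈ e} = k := by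
    rw [Fintype.card_coe, he]
  have f : Fin k ≃ {x // x ∈ e} := (Fintype.equivFinOfCardEq hsub).symm
  have hmapse : ∀ (q : Equiv.Perm (Fin k)), ∀ x ∈ e, (q.extendDomain f) x ∈ e := by
    intro q x hx
    rw [Equiv.Perm.extendDomain_apply_subtype q f hx]
    exact (f (q (f.symm ⟨x, hx⟩))).2
  -- iff version of monotonicity
  have hiff : ∀ τ ∈ S, ∀ x ∈ e, ∀ y ∈ e, (σ x < σ y ↔ τ x < τ y) := by
    intro τ hτ x hx y hy
    constructor
    · exact hS τ hτ x hx y hy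
    · intro hlt
      rcases lt_trichotomy (σ x) (σ y) with hl | hl | hl
      · exact hl
      · rw [hσ hl] at hlt; exact absurd hlt (lt_irrefl _)
      · exact absurd (hS τ hτ y hy x hx hl) (not_lt.mpr hlt.le)
  have hinj : Set.InjOn
      (fun q : (V ≃ Fin n) × Equiv.Perm (Fin k) => (q.2.extendDomain f).trans q.1)
      ↑(S ×ˢ (Finset.univ : Finset (Equiv.Perm (Fin k)))) := by
    rintro ⟨τ₁, p₁⟩ hm₁ ⟨τ₂, p₂⟩ hm₂ heq
    simp only [Finset.mem_coe, Finset.mem_product, Finset.mem_univ, and_true] at hm₁ hm₂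
    have heq' : ∀ v, τ₁ ((p₁.extendDomain f) v) = τ₂ ((p₂.extendDomain f) v) := by
      intro v
      have := congrArg (fun (g : V ≃ Fin n) => g v) heq
      simpa using this
    set r : Equiv.Perm (Fin k) := p₁ * p₂⁻¹ with hr
    set h : V → V := fun v => (r.extendDomain f) v with hh
    have hτ₂ : ∀ v, τ₂ v = τ₁ (h v) := by
      intro v
      have h3 : (r.extendDomain f) v = (p₁.extendDomain f) ((p₂⁻¹.extendDomain f) v) := by
        rw [hr, ← Equiv.Perm.extendDomain_mul]
        rfl
      have h2 : (p₂.extendDomain f) ((p₂⁻¹.extendDomain f) v) = v := by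
        rw [← Equiv.Perm.extendDomain_inv]
        exact Equiv.apply_symm_apply _ v
      have h4 := heq' ((p₂⁻¹.extendDomain f) v)
      rw [h2] at h4
      rw [← h4]
      exact (congrArg τ₁ h3).symm
    have hmape : ∀ x ∈ e, h x ∈ e := fun x hx => hmapse r x hx
    have hmono : ∀ x ∈ e, ∀ y ∈ e, (σ x < σ y ↔ σ (h x) < σ (h y)) := by
      intro x hx y hy
      calc σ x < σ y ↔ τ₂ x < τ₂ y := hiff τ₂ hm₂ x hx y hy
        _ ↔ τ₁ (h x) < τ₁ (h y) := by rw [hτ₂ x, hτ₂ y]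
        _ ↔ σ (h x) < σ (h y) := (hiff τ₁ hm₁ (h x) (hmape x hx) (h y) (hmape y hy)).symm
    have hfix : ∀ x ∈ e, h x = x := fix_pts σ hσ e h hmape hmono
    have hone : r.extendDomain f = 1 := by
      ext v
      by_cases hv : v ∈ e
      · exact hfix v hv
      · exact Equiv.Perm.extendDomain_apply_not_subtype r f hv
    have hr1 : r = 1 := by
      rwa [Equiv.Perm.extendDomain_eq_one_iff] at hone
    have hp : p₁ = p₂ := by
      rw [hr] at hr1
      rwa [mul_inv_eq_one] at hr1
    have hhv : ∀ v, h v = v := by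
      intro v
      show (r.extendDomain f) v = v
      rw [hone]
      rfl
    have hτ : τ₁ = τ₂ := by
      ext v
      rw [hτ₂ v, hhv v]
    simp [hp, hτ]
  have hle : (S ×ˢ (Finset.univ : Finset (Equiv.Perm (Fin k)))).card
      ≤ (Finset.univ : Finset (V ≃ Fin n)).card :=
    Finset.card_le_card_of_injOn _ (fun q _ => Finset.mem_univ _) hinj
  rw [Finset.card_product, Finset.card_univ, Fintype.card_perm, Fintype.card_fin] at hle
  rw [hcardΩ] at hle
  exact hle

/-- For every integer `k ≥ 3`, every `k`-graph with the weak
Erdős–Szekeres property has at least `k!/2 + 1` edges; that is, `f_wES(k) ≥ k!/2 + 1`.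

A `k`-graph is a finite set `E` of `k`-element finsets of a finite vertex type `V`.
Linear orders on `V` are encoded by injective maps into `ℕ`. Orders `σ` and `τ` are
monotonically consistent on an edge `e` if `τ` induces on `e` the same order as `σ`
or its reverse. -/
theorem stmt_4 (k : ℕ) (hk : 3 ≤ k) (V : Type*) [Fintype V]
    (E : Finset (Finset V))
    (hcard : ∀ e ∈ E, e.card = k)
    (hwES : ∃ σ : V → ℕ, Function.Injective σ ∧
      ∀ τ : V → ℕ, Function.Injective τ →
        ∃ e ∈ E, (∀ x ∈ e, ∀ y ∈ e, σ x < σ y → τ x < τ y) ∨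
                 (∀ x ∈ e, ∀ y ∈ e, σ x < σ y → τ y < τ x)) :
    (Nat.factorial k : ℝ) / 2 + 1 ≤ E.card := by
  classical
  obtain ⟨σ, hσ, hES⟩ := hwES
  set n := Fintype.card V with hnn
  -- build the order isomorphism ρ : V ≃ Fin n compatible with σ
  set s : Finset ℕ := Finset.univ.image σ with hs
  have hscard : s.card = n := by
    rw [hs, Finset.card_image_of_injective _ hσ, Finset.card_univ]
  set iso := s.orderIsoOfFin hscard with hiso
  have hmem : ∀ v : V, σ v ∈ s := fun v => Finset.mem_image_of_mem σ (Finset.mem_univ v)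
  set ρfun : V → Fin n := fun v => iso.symm ⟨σ v, hmem v⟩ with hρfun
  have hρ : ∀ x y : V, σ x < σ y ↔ ρfun x < ρfun y := by
    intro x y
    rw [hρfun]
    simp only [OrderIso.lt_iff_lt, Subtype.mk_lt_mk]
  have hρinj : Function.Injective ρfun := by
    intro x y hxy
    rcases lt_trichotomy (σ x) (σ y) with hl | hl | hl
    · exact absurd ((hρ x y).1 hl) (by rw [hxy]; exact lt_irrefl _)
    · exact hσ hl
    · exact absurd ((hρ y x).1 hl) (by rw [hxy]; exact lt_irrefl _)
  have hρbij : Function.Bijective ρfun := by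
    rw [Fintype.bijective_iff_injective_and_card]
    exact ⟨hρinj, by simp [hnn]⟩
  set ρ : V ≃ Fin n := Equiv.ofBijective ρfun hρbij with hρdef
  have hρapp : ∀ v, ρ v = ρfun v := fun v => rfl
  -- the reversed ranking σ'
  set N : ℕ := Finset.univ.sup σ with hN
  have hσle : ∀ v : V, σ v ≤ N := fun v => Finset.le_sup (Finset.mem_univ v)
  set σ' : V → ℕ := fun v => N - σ v with hσ'
  have hσ'lt : ∀ x y : V, (σ' x < σ' y ↔ σ y < σ x) := by
    intro x y
    have hx := hσle x; have hy := hσle y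
    simp only [hσ']
    omega
  have hσ'inj : Function.Injective σ' := by
    intro x y hxy
    apply hσ
    have hx := hσle x; have hy := hσle y
    simp only [hσ'] at hxy
    omega
  -- the two special orders
  set τ₀ : V ≃ Fin n := ρ with hτ₀
  set τ₁ : V ≃ Fin n := ρ.trans Fin.revPerm with hτ₁
  -- the covering families
  set mono : Finset V → Finset (V ≃ Fin n) :=
    fun e => Finset.univ.filter
      (fun τ : V ≃ Fin n => ∀ x ∈ e, ∀ y ∈ e, σ x < σ y → τ x < τ y) with hmono
  set anti : Finset V → Finset (V ≃ Fin n) :=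
    fun e => Finset.univ.filter
      (fun τ : V ≃ Fin n => ∀ x ∈ e, ∀ y ∈ e, σ' x < σ' y → τ x < τ y) with hanti
  have hτ₀mem : ∀ e : Finset V, τ₀ ∈ mono e := by
    intro e
    rw [hmono, Finset.mem_filter]
    refine ⟨Finset.mem_univ _, fun x _ y _ hxy => ?_⟩
    rw [hτ₀, hρapp, hρapp]
    exact (hρ x y).1 hxy
  have hτ₁mem : ∀ e : Finset V, τ₁ ∈ anti e := by
    intro e
    rw [hanti, Finset.mem_filter]
    refine ⟨Finset.mem_univ _, fun x _ y _ hxy => ?_⟩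
    have h1 : σ y < σ x := (hσ'lt x y).1 hxy
    have h2 : ρfun y < ρfun x := (hρ y x).1 h1
    show Fin.revPerm (ρ x) < Fin.revPerm (ρ y)
    simp only [Fin.revPerm, Function.Involutive.coe_toPerm]
    rw [Fin.rev_lt_rev]
    exact h2
  -- there is at least one edge, so k ≤ n
  obtain ⟨e₀, he₀, _⟩ := hES σ hσ
  have hkn : k ≤ n := by
    rw [← hcard e₀ he₀, hnn, ← Finset.card_univ]
    exact Finset.card_le_card (Finset.subset_univ e₀)
  set m : ℕ := n.factorial / k.factorial with hm
  have hmk : m * k.factorial = n.factorial :=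
    Nat.div_mul_cancel (Nat.factorial_dvd_factorial hkn)
  have hmpos : 1 ≤ m := by
    rcases Nat.eq_zero_or_pos m with h0 | h1
    · rw [h0, zero_mul] at hmk
      exact absurd hmk.symm (Nat.factorial_pos n).ne'
    · exact h1
  -- each mono/anti set has at most m elements
  have hmonole : ∀ e ∈ E, (mono e).card ≤ m := by
    intro e he
    have h1 := mono_count σ hσ rfl e (hcard e he) (mono e) (by
      intro τ hτ
      rw [hmono, Finset.mem_filter] at hτ
      exact hτ.2)
    rw [hm, Nat.le_div_iff_mul_le (Nat.factorial_pos k)]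
    exact h1
  have hantile : ∀ e ∈ E, (anti e).card ≤ m := by
    intro e he
    have h1 := mono_count σ' hσ'inj rfl e (hcard e he) (anti e) (by
      intro τ hτ
      rw [hanti, Finset.mem_filter] at hτ
      exact hτ.2)
    rw [hm, Nat.le_div_iff_mul_le (Nat.factorial_pos k)]
    exact h1
  -- the covering
  set F : Finset V → Finset (V ≃ Fin n) :=
    fun e => ((mono e).erase τ₀) ∪ ((anti e).erase τ₁) with hF
  have hcover : (Finset.univ : Finset (V ≃ Fin n))
      ⊆ insert τ₀ (insert τ₁ (E.biUnion F)) := by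
    intro τ _
    by_cases h0 : τ = τ₀
    · rw [h0]
      exact Finset.mem_insert_self _ _
    · by_cases h1 : τ = τ₁
      · rw [h1]
        exact Finset.mem_insert_of_mem (Finset.mem_insert_self _ _)
      · have hτinj : Function.Injective (fun v => ((τ v : Fin n) : ℕ)) := by
          intro x y hxy
          exact τ.injective (Fin.val_injective hxy)
        obtain ⟨e, he, hcons⟩ := hES (fun v => ((τ v : Fin n) : ℕ)) hτinj
        apply Finset.mem_insert_of_mem
        apply Finset.mem_insert_of_mem
        rw [Finset.mem_biUnion]
        refine ⟨e, he, ?_⟩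
        rw [hF, Finset.mem_union]
        rcases hcons with hc | hc
        · left
          rw [Finset.mem_erase]
          refine ⟨h0, ?_⟩
          rw [hmono, Finset.mem_filter]
          refine ⟨Finset.mem_univ _, fun x hx y hy hxy => ?_⟩
          have := hc x hx y hy hxy
          exact this
        · right
          rw [Finset.mem_erase]
          refine ⟨h1, ?_⟩
          rw [hanti, Finset.mem_filter]
          refine ⟨Finset.mem_univ _, fun x hx y hy hxy => ?_⟩
          have hyx : σ y < σ x := (hσ'lt x y).1 hxy
          exact hc y hy x hx hyx
  -- cardinality chain
  have hcardΩ : (Finset.univ : Finset (V ≃ Fin n)).card = n.factorial := by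
    rw [Finset.card_univ, Fintype.card_equiv (Fintype.equivFinOfCardEq rfl)]
  have hFle : ∀ e ∈ E, (F e).card ≤ 2 * (m - 1) := by
    intro e he
    rw [hF]
    calc (((mono e).erase τ₀) ∪ ((anti e).erase τ₁)).card
        ≤ ((mono e).erase τ₀).card + ((anti e).erase τ₁).card := Finset.card_union_le _ _
      _ ≤ (m - 1) + (m - 1) := by
          apply Nat.add_le_add
          · rw [Finset.card_erase_of_mem (hτ₀mem e)]
            exact Nat.sub_le_sub_right (hmonole e he) 1
          · rw [Finset.card_erase_of_mem (hτ₁mem e)]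
            exact Nat.sub_le_sub_right (hantile e he) 1
      _ = 2 * (m - 1) := by ring
  have hmain : n.factorial ≤ 2 + E.card * (2 * (m - 1)) := by
    calc n.factorial = (Finset.univ : Finset (V ≃ Fin n)).card := hcardΩ.symm
      _ ≤ (insert τ₀ (insert τ₁ (E.biUnion F))).card := Finset.card_le_card hcover
      _ ≤ (insert τ₁ (E.biUnion F)).card + 1 := Finset.card_insert_le _ _
      _ ≤ ((E.biUnion F).card + 1) + 1 := Nat.add_le_add_right (Finset.card_insert_le _ _) 1
      _ = 2 + (E.biUnion F).card := by ring
      _ ≤ 2 + ∑ e ∈ E, (F e).card := Nat.add_le_add_left (Finset.card_biUnion_le) 2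
      _ ≤ 2 + ∑ e ∈ E, 2 * (m - 1) := Nat.add_le_add_left (Finset.sum_le_sum hFle) 2
      _ = 2 + E.card * (2 * (m - 1)) := by rw [Finset.sum_const, smul_eq_mul]
  -- final arithmetic
  have hfact6 : 6 ≤ k.factorial := by
    calc 6 = Nat.factorial 3 := rfl
      _ ≤ k.factorial := Nat.factorial_le hk
  have hdvd : 2 ∣ k.factorial := Nat.dvd_factorial (by norm_num) (by omega)
  have hfin : k.factorial + 2 ≤ 2 * E.card := by
    by_contra hlt
    push_neg at hlt
    obtain ⟨d, hd⟩ := hdvd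
    have h2E : 2 * E.card ≤ k.factorial := by omega
    rw [← hmk] at hmain
    have hstep : E.card * (2 * (m - 1)) ≤ k.factorial * (m - 1) := by
      calc E.card * (2 * (m - 1)) = (2 * E.card) * (m - 1) := by ring
        _ ≤ k.factorial * (m - 1) := Nat.mul_le_mul_right _ h2E
    obtain ⟨t, ht⟩ : ∃ t, m = t + 1 := ⟨m - 1, by omega⟩
    rw [ht] at hmain hstep
    simp only [Nat.add_sub_cancel] at hmain hstep
    have h1 : (t + 1) * k.factorial = k.factorial * t + k.factorial := by ring
    have : k.factorial ≤ 2 := by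
      have := le_trans hmain (Nat.add_le_add_left hstep 2)
      omega
    omega
  have hcast : ((k.factorial + 2 : ℕ) : ℝ) ≤ ((2 * E.card : ℕ) : ℝ) := Nat.cast_le.mpr hfin
  push_cast at hcast
  linarith
end

section
/- For every integer k ≥ 3, there exists a k-graph with the weak Erdős–Szekeres property having exactly C((k−1)²+1, k) − C((k−1)²−1, k−1) edges; that is, f_wES(k) ≤ C((k−1)²+1, k) − C((k−1)²−1, k−1), where C(n, m) denotes the binomial coefficient. -/
open Finset

/-- Key combinatorial lemma: in a sequence of `(k-1)^2` distinct values with no monotone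
subset of size `k`, there are both an increasing and a decreasing subset of size `k-1`
containing the first position. -/
lemma exists_chains_from_zero {k m : ℕ} [NeZero m] (hk : 2 ≤ k) (hm : m = (k - 1) ^ 2)
    (g : Fin m → ℕ) (hg : Function.Injective g)
    (H : ∀ t : Finset (Fin m), t.card = k → ¬ StrictMonoOn g ↑t ∧ ¬ StrictAntiOn g ↑t) :
    (∃ t : Finset (Fin m), t.card = k - 1 ∧ 0 ∈ t ∧ StrictMonoOn g ↑t) ∧
    (∃ t : Finset (Fin m), t.card = k - 1 ∧ 0 ∈ t ∧ StrictAntiOn g ↑t) := by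
  classical
  -- chains starting at `i`
  set inc : Fin m → Finset (Finset (Fin m)) := fun i =>
    Finset.univ.filter (fun t => i ∈ t ∧ (∀ j ∈ t, i ≤ j) ∧ StrictMonoOn g ↑t) with hinc
  set dcc : Fin m → Finset (Finset (Fin m)) := fun i =>
    Finset.univ.filter (fun t => i ∈ t ∧ (∀ j ∈ t, i ≤ j) ∧ StrictAntiOn g ↑t) with hdcc
  have mem_inc : ∀ (i : Fin m) (t : Finset (Fin m)),
      t ∈ inc i ↔ i ∈ t ∧ (∀ j ∈ t, i ≤ j) ∧ StrictMonoOn g ↑t := by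
    intro i t; simp [hinc]
  have mem_dcc : ∀ (i : Fin m) (t : Finset (Fin m)),
      t ∈ dcc i ↔ i ∈ t ∧ (∀ j ∈ t, i ≤ j) ∧ StrictAntiOn g ↑t := by
    intro i t; simp [hdcc]
  set a : Fin m → ℕ := fun i => (inc i).sup Finset.card with ha
  set b : Fin m → ℕ := fun i => (dcc i).sup Finset.card with hb
  have hsing_inc : ∀ i : Fin m, ({i} : Finset (Fin m)) ∈ inc i := by
    intro i
    refine (mem_inc i _).2 ⟨mem_singleton_self i, ?_, ?_⟩
    · intro j hj; rw [mem_singleton] at hj; exact le_of_eq hj.symm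
    · intro x hx y hy hxy
      simp only [coe_singleton, Set.mem_singleton_iff] at hx hy
      subst hx; subst hy; exact absurd hxy (lt_irrefl _)
  have hsing_dcc : ∀ i : Fin m, ({i} : Finset (Fin m)) ∈ dcc i := by
    intro i
    refine (mem_dcc i _).2 ⟨mem_singleton_self i, ?_, ?_⟩
    · intro j hj; rw [mem_singleton] at hj; exact le_of_eq hj.symm
    · intro x hx y hy hxy
      simp only [coe_singleton, Set.mem_singleton_iff] at hx hy
      subst hx; subst hy; exact absurd hxy (lt_irrefl _)
  have ha1 : ∀ i, 1 ≤ a i := by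
    intro i
    have h := Finset.le_sup (f := Finset.card) (hsing_inc i)
    rw [Finset.card_singleton] at h
    exact h
  have hb1 : ∀ i, 1 ≤ b i := by
    intro i
    have h := Finset.le_sup (f := Finset.card) (hsing_dcc i)
    rw [Finset.card_singleton] at h
    exact h
  have hale : ∀ i, a i ≤ k - 1 := by
    intro i
    refine Finset.sup_le ?_
    intro t ht
    by_contra hlt
    have hk' : k ≤ t.card := by omega
    obtain ⟨u, hu, hucard⟩ := Finset.exists_subset_card_eq hk'
    have hmono : StrictMonoOn g ↑u :=
      ((mem_inc i t).1 ht).2.2.mono (coe_subset.2 hu)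
    exact (H u hucard).1 hmono
  have hble : ∀ i, b i ≤ k - 1 := by
    intro i
    refine Finset.sup_le ?_
    intro t ht
    by_contra hlt
    have hk' : k ≤ t.card := by omega
    obtain ⟨u, hu, hucard⟩ := Finset.exists_subset_card_eq hk'
    have hmono : StrictAntiOn g ↑u :=
      ((mem_dcc i t).1 ht).2.2.mono (coe_subset.2 hu)
    exact (H u hucard).2 hmono
  have hatt_a : ∀ i, ∃ t ∈ inc i, t.card = a i := by
    intro i
    obtain ⟨t, ht, hts⟩ := Finset.exists_mem_eq_sup (inc i) ⟨{i}, hsing_inc i⟩ Finset.card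
    exact ⟨t, ht, hts.symm⟩
  have hatt_b : ∀ i, ∃ t ∈ dcc i, t.card = b i := by
    intro i
    obtain ⟨t, ht, hts⟩ := Finset.exists_mem_eq_sup (dcc i) ⟨{i}, hsing_dcc i⟩ Finset.card
    exact ⟨t, ht, hts.symm⟩
  -- key growth step
  have hstep_a : ∀ i j : Fin m, i < j → g i < g j → a j < a i := by
    intro i j hij hgij
    obtain ⟨t, ht, hcard⟩ := hatt_a j
    obtain ⟨hjt, hmin, hmono⟩ := (mem_inc j t).1 ht
    have hint : i ∉ t := fun h => absurd (hmin i h) (not_le.2 hij)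
    have hmem : insert i t ∈ inc i := by
      refine (mem_inc i _).2 ⟨mem_insert_self i t, ?_, ?_⟩
      · intro l hl
        rcases mem_insert.1 hl with rfl | hl
        · exact le_refl l
        · exact le_of_lt (lt_of_lt_of_le hij (hmin l hl))
      · intro x hx y hy hxy
        rw [coe_insert, Set.mem_insert_iff] at hx hy
        rcases hx with rfl | hx
        · rcases hy with rfl | hy
          · exact absurd hxy (lt_irrefl _)
          · have hjy : j ≤ y := hmin y hy
            rcases eq_or_lt_of_le hjy with rfl | hjy'
            · exact hgij
            · exact hgij.trans (hmono hjt hy hjy')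
        · rcases hy with rfl | hy
          · exact absurd (lt_of_le_of_lt (hmin x hx) hxy) (not_lt.2 (le_of_lt hij))
          · exact hmono hx hy hxy
    have h := Finset.le_sup (f := Finset.card) hmem
    rw [Finset.card_insert_of_notMem hint, hcard] at h
    exact Nat.lt_of_succ_le h
  have hstep_b : ∀ i j : Fin m, i < j → g j < g i → b j < b i := by
    intro i j hij hgij
    obtain ⟨t, ht, hcard⟩ := hatt_b j
    obtain ⟨hjt, hmin, hmono⟩ := (mem_dcc j t).1 ht
    have hint : i ∉ t := fun h => absurd (hmin i h) (not_le.2 hij)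
    have hmem : insert i t ∈ dcc i := by
      refine (mem_dcc i _).2 ⟨mem_insert_self i t, ?_, ?_⟩
      · intro l hl
        rcases mem_insert.1 hl with rfl | hl
        · exact le_refl l
        · exact le_of_lt (lt_of_lt_of_le hij (hmin l hl))
      · intro x hx y hy hxy
        rw [coe_insert, Set.mem_insert_iff] at hx hy
        rcases hx with rfl | hx
        · rcases hy with rfl | hy
          · exact absurd hxy (lt_irrefl _)
          · have hjy : j ≤ y := hmin y hy
            rcases eq_or_lt_of_le hjy with rfl | hjy'
            · exact hgij
            · exact (hmono hjt hy hjy').trans hgij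
        · rcases hy with rfl | hy
          · exact absurd (lt_of_le_of_lt (hmin x hx) hxy) (not_lt.2 (le_of_lt hij))
          · exact hmono hx hy hxy
    have h := Finset.le_sup (f := Finset.card) hmem
    rw [Finset.card_insert_of_notMem hint, hcard] at h
    exact Nat.lt_of_succ_le h
  -- the pair map is injective
  have hpair : Function.Injective (fun i : Fin m => (a i, b i)) := by
    intro i j hij
    by_contra hne
    have hgne : g i ≠ g j := fun h => hne (hg h)
    have hij' : (a i, b i) = (a j, b j) := hij
    have hab : a i = a j ∧ b i = b j :=
      ⟨congrArg Prod.fst hij', congrArg Prod.snd hij'⟩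
    rcases Ne.lt_or_gt hne with hlt | hlt
    · rcases hgne.lt_or_gt with hg' | hg'
      · exact absurd hab.1 (ne_of_gt (hstep_a i j hlt hg'))
      · exact absurd hab.2 (ne_of_gt (hstep_b i j hlt hg'))
    · rcases hgne.lt_or_gt with hg' | hg'
      · exact absurd hab.2 (ne_of_lt (hstep_b j i hlt hg'))
      · exact absurd hab.1 (ne_of_lt (hstep_a j i hlt hg'))
  -- image is all of Icc 1 (k-1) × Icc 1 (k-1), so (k-1, k-1) is attained
  set S : Finset (ℕ × ℕ) := Finset.Icc 1 (k - 1) ×ˢ Finset.Icc 1 (k - 1) with hS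
  have hsub : Finset.univ.image (fun i : Fin m => (a i, b i)) ⊆ S := by
    intro p hp
    obtain ⟨i, _, rfl⟩ := Finset.mem_image.1 hp
    rw [hS, Finset.mem_product]
    exact ⟨Finset.mem_Icc.2 ⟨ha1 i, hale i⟩, Finset.mem_Icc.2 ⟨hb1 i, hble i⟩⟩
  have hScard : S.card = m := by
    rw [hS, Finset.card_product, Nat.card_Icc, hm, pow_two]
    congr 1 <;> omega
  have himg : Finset.univ.image (fun i : Fin m => (a i, b i)) = S := by
    refine Finset.eq_of_subset_of_card_le hsub ?_
    rw [hScard, Finset.card_image_of_injective _ hpair, Finset.card_univ, Fintype.card_fin]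
  have hmemS : ((k - 1, k - 1) : ℕ × ℕ) ∈ S := by
    rw [hS, Finset.mem_product]
    constructor <;> exact Finset.mem_Icc.2 ⟨by omega, le_refl _⟩
  rw [← himg, Finset.mem_image] at hmemS
  obtain ⟨p, _, hp⟩ := hmemS
  have hp' : (a p, b p) = (k - 1, k - 1) := hp
  have hap : a p = k - 1 := congrArg Prod.fst hp'
  have hbp : b p = k - 1 := congrArg Prod.snd hp'
  -- the point attaining (k-1, k-1) must be 0
  have hp0 : p = 0 := by
    by_contra hne
    have h0p : (0 : Fin m) < p := lt_of_le_of_ne (Fin.zero_le p) (Ne.symm hne)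
    have hgne : g 0 ≠ g p := fun h => hne (hg h).symm
    rcases hgne.lt_or_gt with hg' | hg'
    · have := hstep_a 0 p h0p hg'
      have := hale 0
      omega
    · have := hstep_b 0 p h0p hg'
      have := hble 0
      omega
  subst hp0
  constructor
  · obtain ⟨t, ht, hcard⟩ := hatt_a 0
    obtain ⟨h0, _, hmono⟩ := (mem_inc 0 t).1 ht
    exact ⟨t, by rw [hcard, hap], h0, hmono⟩
  · obtain ⟨t, ht, hcard⟩ := hatt_b 0
    obtain ⟨h0, _, hmono⟩ := (mem_dcc 0 t).1 ht
    exact ⟨t, by rw [hcard, hbp], h0, hmono⟩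

/-- For every integer `k ≥ 3`, there exists a `k`-graph with the weak
Erdős–Szekeres property having exactly `C((k−1)²+1, k) − C((k−1)²−1, k−1)` edges;
that is, `f_wES(k) ≤ C((k−1)²+1, k) − C((k−1)²−1, k−1)`. -/
theorem stmt_5 (k : ℕ) (hk : 3 ≤ k) :
    ∃ (n : ℕ) (E : Finset (Finset (Fin n))),
      (∀ e ∈ E, e.card = k) ∧
      (∃ σ : Fin n → ℕ, Function.Injective σ ∧
        ∀ τ : Fin n → ℕ, Function.Injective τ →
          ∃ e ∈ E, (∀ x ∈ e, ∀ y ∈ e, σ x < σ y → τ x < τ y) ∨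
                   (∀ x ∈ e, ∀ y ∈ e, σ x < σ y → τ y < τ x)) ∧
      E.card = Nat.choose ((k - 1) ^ 2 + 1) k - Nat.choose ((k - 1) ^ 2 - 1) (k - 1) := by
  classical
  set m : ℕ := (k - 1) ^ 2 with hmdef
  have hm4 : 4 ≤ m := by
    have h2 : 2 ≤ k - 1 := by omega
    calc 4 = 2 ^ 2 := by norm_num
    _ ≤ (k - 1) ^ 2 := Nat.pow_le_pow_left h2 2
  haveI : NeZero m := ⟨by omega⟩
  set n : ℕ := m + 1 with hndef
  -- facts about 0 and 1 in Fin n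
  have hval1 : ((1 : Fin n) : ℕ) = 1 := by
    rw [Fin.val_one']
    exact Nat.mod_eq_of_lt (by omega)
  have h01 : (Fin.succ (0 : Fin m)) = (1 : Fin n) := by
    apply Fin.ext
    rw [Fin.val_succ, hval1, Fin.val_zero]
  have hne01 : (0 : Fin n) ≠ 1 := by
    intro h
    have := congrArg Fin.val h
    rw [Fin.val_zero, hval1] at this
    exact absurd this (by omega)
  set E : Finset (Finset (Fin n)) :=
    (Finset.univ.powersetCard k).filter (fun e => (0 : Fin n) ∈ e → (1 : Fin n) ∈ e) with hE
  have memE : ∀ e : Finset (Fin n),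
      e ∈ E ↔ e.card = k ∧ ((0 : Fin n) ∈ e → (1 : Fin n) ∈ e) := by
    intro e
    rw [hE, Finset.mem_filter, Finset.mem_powersetCard_univ]
  refine ⟨n, E, fun e he => ((memE e).1 he).1, ?_, ?_⟩
  · -- the weak Erdős–Szekeres property
    refine ⟨Fin.val, Fin.val_injective, ?_⟩
    intro τ hτ
    set emb : Fin m ↪ Fin n := ⟨Fin.succ, Fin.succ_injective m⟩ with hemb
    set g : Fin m → ℕ := fun i => τ (Fin.succ i) with hgdef
    have hg : Function.Injective g := fun i j h => Fin.succ_injective m (hτ h)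
    by_cases Hc : ∃ t : Finset (Fin m), t.card = k ∧ (StrictMonoOn g ↑t ∨ StrictAntiOn g ↑t)
    · -- a monotone k-set avoiding position 0
      obtain ⟨t, hcard, hmono⟩ := Hc
      refine ⟨t.map emb, ?_, ?_⟩
      · refine (memE _).2 ⟨by rw [Finset.card_map, hcard], fun h0 => ?_⟩
        exfalso
        obtain ⟨i, _, hi⟩ := Finset.mem_map.1 h0
        exact Fin.succ_ne_zero i hi
      · have key : ∀ x ∈ t.map emb, ∀ y ∈ t.map emb,
            ∀ (P : ℕ → ℕ → Prop), (∀ i ∈ t, ∀ j ∈ t, i < j → P (g i) (g j)) →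
            (x : ℕ) < y → P (τ x) (τ y) := by
          intro x hx y hy P hP hxy
          obtain ⟨i, hi, rfl⟩ := Finset.mem_map.1 hx
          obtain ⟨j, hj, rfl⟩ := Finset.mem_map.1 hy
          have hij : i < j := by
            rw [Fin.lt_def]
            have : (emb i : ℕ) = i + 1 := rfl
            have : (emb j : ℕ) = j + 1 := rfl
            simp only [hemb, Function.Embedding.coeFn_mk, Fin.val_succ] at hxy
            omega
          exact hP i hi j hj hij
        rcases hmono with hmono | hmono
        · exact Or.inl (fun x hx y hy hxy =>
            key x hx y hy (· < ·) (fun i hi j hj hij => hmono hi hj hij) hxy)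
        · exact Or.inr (fun x hx y hy hxy =>
            key x hx y hy (fun u v => v < u) (fun i hi j hj hij => hmono hi hj hij) hxy)
    · -- no monotone k-set among positions 1..m: use the chains from position 1
      push_neg at Hc
      have H : ∀ t : Finset (Fin m), t.card = k → ¬ StrictMonoOn g ↑t ∧ ¬ StrictAntiOn g ↑t := by
        intro t ht
        have := Hc t ht
        tauto
      obtain ⟨⟨t₁, hc₁, h0₁, hm₁⟩, ⟨t₂, hc₂, h0₂, hm₂⟩⟩ :=
        exists_chains_from_zero (by omega) hmdef g hg H
      have hτne : τ 0 ≠ τ (Fin.succ (0 : Fin m)) := by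
        intro h
        exact (Fin.succ_ne_zero (0 : Fin m)) (hτ h).symm
      rcases hτne.lt_or_gt with hlt | hlt
      · -- increasing: 0 followed by the increasing chain through position 1
        refine ⟨insert 0 (t₁.map emb), ?_, Or.inl ?_⟩
        · have h0notin : (0 : Fin n) ∉ t₁.map emb := by
            intro h0
            obtain ⟨i, _, hi⟩ := Finset.mem_map.1 h0
            exact Fin.succ_ne_zero i hi
          refine (memE _).2 ⟨?_, fun _ => ?_⟩
          · rw [Finset.card_insert_of_notMem h0notin, Finset.card_map, hc₁]
            omega
          · refine Finset.mem_insert_of_mem ?_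
            rw [← h01]
            exact Finset.mem_map_of_mem emb h0₁
        · intro x hx y hy hxy
          rcases Finset.mem_insert.1 hx with rfl | hx
          · rcases Finset.mem_insert.1 hy with rfl | hy
            · exact absurd hxy (lt_irrefl _)
            · obtain ⟨j, hj, rfl⟩ := Finset.mem_map.1 hy
              have : g 0 ≤ g j := by
                rcases eq_or_lt_of_le (Fin.zero_le j) with rfl | hj0
                · exact le_refl _
                · exact le_of_lt (hm₁ h0₁ hj hj0)
              calc τ 0 < g 0 := hlt
              _ ≤ g j := this
          · rcases Finset.mem_insert.1 hy with rfl | hy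
            · exact absurd hxy (by simp)
            · obtain ⟨i, hi, rfl⟩ := Finset.mem_map.1 hx
              obtain ⟨j, hj, rfl⟩ := Finset.mem_map.1 hy
              have hij : i < j := by
                rw [Fin.lt_def]
                simp only [hemb, Function.Embedding.coeFn_mk, Fin.val_succ] at hxy
                omega
              exact hm₁ hi hj hij
      · -- decreasing: 0 followed by the decreasing chain through position 1
        refine ⟨insert 0 (t₂.map emb), ?_, Or.inr ?_⟩
        · have h0notin : (0 : Fin n) ∉ t₂.map emb := by
            intro h0
            obtain ⟨i, _, hi⟩ := Finset.mem_map.1 h0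
            exact Fin.succ_ne_zero i hi
          refine (memE _).2 ⟨?_, fun _ => ?_⟩
          · rw [Finset.card_insert_of_notMem h0notin, Finset.card_map, hc₂]
            omega
          · refine Finset.mem_insert_of_mem ?_
            rw [← h01]
            exact Finset.mem_map_of_mem emb h0₂
        · intro x hx y hy hxy
          rcases Finset.mem_insert.1 hx with rfl | hx
          · rcases Finset.mem_insert.1 hy with rfl | hy
            · exact absurd hxy (lt_irrefl _)
            · obtain ⟨j, hj, rfl⟩ := Finset.mem_map.1 hy
              have : g j ≤ g 0 := by
                rcases eq_or_lt_of_le (Fin.zero_le j) with rfl | hj0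
                · exact le_refl _
                · exact le_of_lt (hm₂ h0₂ hj hj0)
              calc τ (emb j) = g j := rfl
              _ ≤ g 0 := this
              _ < τ 0 := hlt
          · rcases Finset.mem_insert.1 hy with rfl | hy
            · exact absurd hxy (by simp)
            · obtain ⟨i, hi, rfl⟩ := Finset.mem_map.1 hx
              obtain ⟨j, hj, rfl⟩ := Finset.mem_map.1 hy
              have hij : i < j := by
                rw [Fin.lt_def]
                simp only [hemb, Function.Embedding.coeFn_mk, Fin.val_succ] at hxy
                omega
              exact hm₂ hi hj hij
  · -- cardinality computation
    have hsplit := Finset.card_filter_add_card_filter_not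
      (s := Finset.univ.powersetCard k (α := Fin n))
      (p := fun e => (0 : Fin n) ∈ e → (1 : Fin n) ∈ e)
    have htot : (Finset.univ.powersetCard k (α := Fin n)).card = Nat.choose n k := by
      rw [Finset.card_powersetCard, Finset.card_univ, Fintype.card_fin]
    -- count the removed sets: those containing 0 but not 1
    set F := (Finset.univ.powersetCard k (α := Fin n)).filter
      (fun e => ¬((0 : Fin n) ∈ e → (1 : Fin n) ∈ e)) with hF
    have memF : ∀ e, e ∈ F ↔ e.card = k ∧ (0 : Fin n) ∈ e ∧ (1 : Fin n) ∉ e := by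
      intro e
      rw [hF, Finset.mem_filter, Finset.mem_powersetCard_univ]
      tauto
    set T := ((Finset.univ.erase (0 : Fin n)).erase 1).powersetCard (k - 1) with hT
    have memT : ∀ s, s ∈ T ↔ s ⊆ (Finset.univ.erase (0 : Fin n)).erase 1 ∧ s.card = k - 1 := by
      intro s
      rw [hT, Finset.mem_powersetCard]
    have hFT : F.card = T.card := by
      refine Finset.card_nbij' (fun e => e.erase 0) (fun s => insert 0 s) ?_ ?_ ?_ ?_
      · intro e he
        obtain ⟨hcard, h0, h1⟩ := (memF e).1 he
        refine (memT _).2 ⟨?_, ?_⟩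
        · intro x hx
          obtain ⟨hx0, hxe⟩ := Finset.mem_erase.1 hx
          refine Finset.mem_erase.2 ⟨?_, Finset.mem_erase.2 ⟨hx0, Finset.mem_univ x⟩⟩
          intro h; exact h1 (h ▸ hxe)
        · rw [Finset.card_erase_of_mem h0, hcard]
      · intro s hs
        obtain ⟨hsub, hcard⟩ := (memT _).1 hs
        have h0s : (0 : Fin n) ∉ s := by
          intro h
          exact (Finset.mem_erase.1 (Finset.mem_erase.1 (hsub h)).2).1 rfl
        refine (memF _).2 ⟨?_, Finset.mem_insert_self _ _, ?_⟩
        · rw [Finset.card_insert_of_notMem h0s, hcard]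
          omega
        · intro h
          rcases Finset.mem_insert.1 h with h | h
          · exact hne01 h.symm
          · exact (Finset.mem_erase.1 (hsub h)).1 rfl
      · intro e he
        exact Finset.insert_erase ((memF e).1 he).2.1
      · intro s hs
        have h0s : (0 : Fin n) ∉ s := by
          intro h
          exact (Finset.mem_erase.1 (Finset.mem_erase.1 (((memT _).1 hs).1 h)).2).1 rfl
        exact Finset.erase_insert h0s
    have hTcard : T.card = Nat.choose (m - 1) (k - 1) := by
      rw [hT, Finset.card_powersetCard]
      congr 1
      rw [Finset.card_erase_of_mem, Finset.card_erase_of_mem (Finset.mem_univ _),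
        Finset.card_univ, Fintype.card_fin]
      · omega
      · exact Finset.mem_erase.2 ⟨hne01.symm, Finset.mem_univ _⟩
    have h1 : E.card + F.card = Nat.choose n k := by
      rw [← htot]
      exact hsplit
    have h2 : F.card = Nat.choose (m - 1) (k - 1) := hFT.trans hTcard
    have h3 : Nat.choose ((k - 1) ^ 2 + 1) k = Nat.choose n k := rfl
    have h4 : Nat.choose ((k - 1) ^ 2 - 1) (k - 1) = Nat.choose (m - 1) (k - 1) := rfl
    omega
end

section
/- For every ε > 0 there exists k₀ such that for all integers k ≥ k₀ there exists a linear k-graph with the strong Erdős–Szekeres property having at most (1+ε)·16k⁸(ln k)²·C((k−1)²+1, k)² edges, where C(n, m) denotes the binomial coefficient; that is, f'_sES(k) ≤ (1+o(1))·16k⁸ ln²k·C((k−1)²+1, k)². -/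
open scoped Classical
open Function Finset

set_option maxHeartbeats 1000000

namespace StrongES


variable {α : Type*} [LinearOrder α]

/-- Erdős–Szekeres (copied from mathlib Archive, Bhavik Mehta). -/
theorem erdos_szekeres {r s n : ℕ} {f : Fin n → α} (hn : r * s < n) (hf : Injective f) :
    (∃ t : Finset (Fin n), r < #t ∧ StrictMonoOn f ↑t) ∨
      ∃ t : Finset (Fin n), s < #t ∧ StrictAntiOn f ↑t := by
  let inc_sequences_ending_in : Fin n → Finset (Finset (Fin n)) := fun i =>
    univ.powerset.filter fun t => Finset.max t = i ∧ StrictMonoOn f ↑t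
  let dec_sequences_ending_in : Fin n → Finset (Finset (Fin n)) := fun i =>
    univ.powerset.filter fun t => Finset.max t = i ∧ StrictAntiOn f ↑t
  have inc_i : ∀ i, {i} ∈ inc_sequences_ending_in i := fun i => by
    simp [inc_sequences_ending_in, StrictMonoOn]
  have dec_i : ∀ i, {i} ∈ dec_sequences_ending_in i := fun i => by
    simp [dec_sequences_ending_in, StrictAntiOn]
  let ab' : Fin n → ℕ × ℕ := by
    intro i
    apply
      (max' ((inc_sequences_ending_in i).image card) (Nonempty.image ⟨{i}, inc_i i⟩ _),
        max' ((dec_sequences_ending_in i).image card) (Nonempty.image ⟨{i}, dec_i i⟩ _))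
  generalize hab : ab' = ab
  rsuffices ⟨i, hi⟩ : ∃ i, r < (ab i).1 ∨ s < (ab i).2
  · refine Or.imp ?_ ?_ hi
    on_goal 1 =>
      have : (ab i).1 ∈ image card (inc_sequences_ending_in i) := by
        simp only [← hab]; exact max'_mem _ (Nonempty.image ⟨{i}, inc_i i⟩ _)
    on_goal 2 =>
      have : (ab i).2 ∈ image card (dec_sequences_ending_in i) := by
        simp only [← hab]; exact max'_mem _ (Nonempty.image ⟨{i}, dec_i i⟩ _)
    all_goals
      intro hi
      rw [mem_image] at this
      obtain ⟨t, ht₁, ht₂⟩ := this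
      refine ⟨t, by rwa [ht₂], ?_⟩
      rw [mem_filter] at ht₁
      apply ht₁.2.2
  have : Injective ab := by
    simp only [← hab]
    apply Function.Injective.of_lt_imp_ne
    intro i j k q
    injection q with q₁ q₂
    cases lt_or_gt_of_ne fun _ => ne_of_lt ‹i < j› (hf ‹f i = f j›)
    on_goal 1 =>
      apply ne_of_lt _ q₁
      have : (ab' i).1 ∈ image card (inc_sequences_ending_in i) := by exact max'_mem _ (Nonempty.image ⟨{i}, inc_i i⟩ _)
    on_goal 2 =>
      apply ne_of_lt _ q₂
      have : (ab' i).2 ∈ image card (dec_sequences_ending_in i) := by exact max'_mem _ (Nonempty.image ⟨{i}, dec_i i⟩ _)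
    all_goals
      rw [Nat.lt_iff_add_one_le]
      apply le_max'
      rw [mem_image] at this ⊢
      rcases this with ⟨t, ht₁, ht₂⟩
      rw [mem_filter] at ht₁
      have : t.max = i := by simp only [ht₁.2.1]
      refine ⟨insert j t, ?_, ?_⟩
      · rw [mem_filter]
        refine ⟨?_, ?_, ?_⟩
        · rw [mem_powerset]; apply subset_univ
        · convert max_insert (a := j) (s := t)
          rw [ht₁.2.1, max_eq_left]
          apply WithBot.coe_le_coe.mpr (le_of_lt ‹i < j›)
        simp only [StrictMonoOn, StrictAntiOn, coe_insert, Set.mem_insert_iff, mem_coe]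
        rintro x ⟨rfl | _⟩ y ⟨rfl | _⟩ _
        · apply (irrefl _ ‹j < j›).elim
        · exfalso
          apply not_le_of_gt (_root_.trans ‹i < j› ‹j < y›) (le_max_of_eq ‹y ∈ t› ‹t.max = i›)
        · first
          | apply lt_of_le_of_lt _ ‹f i < f j›
          | apply lt_of_lt_of_le ‹f j < f i› _
          rcases lt_or_eq_of_le (le_max_of_eq ‹x ∈ t› ‹t.max = i›) with (_ | rfl)
          · apply le_of_lt (ht₁.2.2 ‹x ∈ t› (mem_of_max ‹t.max = i›) ‹x < i›)
          · rfl
        · apply ht₁.2.2 ‹x ∈ t› ‹y ∈ t› ‹x < y›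
      · rw [card_insert_of_notMem, ht₂]
        intro
        apply not_le_of_gt ‹i < j› (le_max_of_eq ‹j ∈ t› ‹t.max = i›)
  by_contra! q
  let ran : Finset (ℕ × ℕ) := (range r).image Nat.succ ×ˢ (range s).image Nat.succ
  have : image ab univ ⊆ ran := by
    rintro ⟨x₁, x₂⟩
    simp only [ran, mem_image, exists_prop, mem_range, mem_univ, mem_product, true_and,
      Prod.ext_iff]
    rintro ⟨i, rfl, rfl⟩
    specialize q i
    have z : 1 ≤ (ab i).1 ∧ 1 ≤ (ab i).2 := by
      simp only [← hab]
      constructor <;>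
        · apply le_max'
          rw [mem_image]
          exact ⟨{i}, by solve_by_elim, card_singleton i⟩
    exact ⟨⟨(ab i).1 - 1, by omega⟩, (ab i).2 - 1, by omega⟩
  apply not_le_of_gt hn
  simpa [ran, Nat.succ_injective, card_image_of_injective, ‹Injective ab›] using card_le_card this

/-- Monotone consistency of two labelings on a finite set. -/
def Cons {V : Type*} (σ τ : V → ℕ) (e : Finset V) : Prop :=
  (∀ x ∈ e, ∀ y ∈ e, σ x < σ y → τ x < τ y) ∨
  (∀ x ∈ e, ∀ y ∈ e, σ x < σ y → τ y < τ x)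

theorem cons_congr {V : Type*} {σ τ σ' τ' : V → ℕ} {e : Finset V}
    (h1 : ∀ x y, σ x < σ y ↔ σ' x < σ' y) (h2 : ∀ x y, τ x < τ y ↔ τ' x < τ' y) :
    Cons σ τ e → Cons σ' τ' e := by
  rintro (h | h)
  · exact Or.inl fun x hx y hy hlt => (h2 _ _).1 (h x hx y hy ((h1 _ _).2 hlt))
  · exact Or.inr fun x hx y hy hlt => (h2 _ _).1 (h x hx y hy ((h1 _ _).2 hlt))

theorem cons_image {V W : Type*} [DecidableEq W] {σ τ : W → ℕ} {v : V → W} {S : Finset V}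
    (h : Cons (σ ∘ v) (τ ∘ v) S) : Cons σ τ (S.image v) := by
  rcases h with h | h
  · refine Or.inl fun x hx y hy hlt => ?_
    obtain ⟨a, ha, rfl⟩ := Finset.mem_image.1 hx
    obtain ⟨b, hb, rfl⟩ := Finset.mem_image.1 hy
    exact h a ha b hb hlt
  · refine Or.inr fun x hx y hy hlt => ?_
    obtain ⟨a, ha, rfl⟩ := Finset.mem_image.1 hx
    obtain ⟨b, hb, rfl⟩ := Finset.mem_image.1 hy
    exact h a ha b hb hlt

/-- Two-order Erdős–Szekeres: among `(k-1)*(k-1)+1` points with two injective labelings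
there is a `k`-subset on which the labelings are monotonically consistent. -/
theorem two_order_ES {k : ℕ} (hk : 1 ≤ k) {n : ℕ} (hn : (k - 1) * (k - 1) + 1 ≤ n)
    (f g : Fin n → ℕ) (hf : Injective f) (hg : Injective g) :
    ∃ S : Finset (Fin n), S.card = k ∧ Cons f g S := by
  classical
  set w := Tuple.sort f with hw
  have hfw : StrictMono (f ∘ w) :=
    (Tuple.monotone_sort f).strictMono_of_injective (hf.comp w.injective)
  have hgw : Injective (g ∘ w) := hg.comp w.injective
  have hlt : (k - 1) * (k - 1) < n := hn
  rcases erdos_szekeres hlt hgw with ⟨t, ht, hmono⟩ | ⟨t, ht, hanti⟩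
  · obtain ⟨t', ht's, ht'c⟩ := Finset.exists_subset_card_eq (show k ≤ t.card by omega)
    refine ⟨t'.image w, ?_, ?_⟩
    · rw [Finset.card_image_of_injective _ w.injective, ht'c]
    · refine cons_image (Or.inl ?_)
      intro x hx y hy hlt'
      have hxy : x < y := by
        by_contra hcon
        rcases lt_or_eq_of_le (not_lt.1 hcon) with h | h
        · exact absurd (hfw h) (by simpa using le_of_lt hlt')
        · subst h; exact lt_irrefl _ hlt'
      exact (hmono.mono (by exact_mod_cast ht's)) hx hy hxy
  · obtain ⟨t', ht's, ht'c⟩ := Finset.exists_subset_card_eq (show k ≤ t.card by omega)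
    refine ⟨t'.image w, ?_, ?_⟩
    · rw [Finset.card_image_of_injective _ w.injective, ht'c]
    · refine cons_image (Or.inr ?_)
      intro x hx y hy hlt'
      have hxy : x < y := by
        by_contra hcon
        rcases lt_or_eq_of_le (not_lt.1 hcon) with h | h
        · exact absurd (hfw h) (by simpa using le_of_lt hlt')
        · subst h; exact lt_irrefl _ hlt'
      exact (hanti.mono (by exact_mod_cast ht's)) hx hy hxy



/-- Union-bound / counting existence lemma. -/
theorem exists_good {ι α β : Type*} [Fintype ι] [DecidableEq ι] [DecidableEq α]
    (Asets : Finset α) (P : Finset β) (Bad : β → ι → α → Prop)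
    (hex : ∀ b ∈ P, ∀ i : ι, ∃ a ∈ Asets, ¬ Bad b i a)
    (hcard : P.card * (Asets.card - 1) ^ Fintype.card ι < Asets.card ^ Fintype.card ι) :
    ∃ F : ι → α, (∀ i, F i ∈ Asets) ∧ ∀ b ∈ P, ∃ i, ¬ Bad b i (F i) := by
  by_contra hcon
  push_neg at hcon
  have hsub : (Fintype.piFinset fun _ : ι => Asets) ⊆
      P.biUnion fun b => Fintype.piFinset fun i => Asets.filter fun a => Bad b i a := by
    intro F hF
    have hFi : ∀ i, F i ∈ Asets := by simpa [Fintype.mem_piFinset] using hF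
    obtain ⟨b, hbP, hball⟩ := hcon F hFi
    exact Finset.mem_biUnion.2 ⟨b, hbP, by
      simp only [Fintype.mem_piFinset, Finset.mem_filter]
      exact fun i => ⟨hFi i, hball i⟩⟩
  have h1 : (Fintype.piFinset fun _ : ι => Asets).card = Asets.card ^ Fintype.card ι := by
    simp [Fintype.card_piFinset]
  have h2 : ∀ b ∈ P, (Fintype.piFinset fun i => Asets.filter fun a => Bad b i a).card ≤
      (Asets.card - 1) ^ Fintype.card ι := by
    intro b hb
    rw [Fintype.card_piFinset]
    calc (∏ i, (Asets.filter fun a => Bad b i a).card)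
        ≤ ∏ _i : ι, (Asets.card - 1) := by
          refine Finset.prod_le_prod' ?_ |>.trans (le_of_eq rfl)
          intro i _
          obtain ⟨a, ha, hna⟩ := hex b hb i
          have hsub' : (Asets.filter fun a' => Bad b i a') ⊆ Asets.erase a := by
            intro x hx
            rw [Finset.mem_filter] at hx
            exact Finset.mem_erase.2 ⟨fun h => hna (h ▸ hx.2), hx.1⟩
          calc (Asets.filter fun a' => Bad b i a').card ≤ (Asets.erase a).card :=
                Finset.card_le_card hsub'
            _ = Asets.card - 1 := Finset.card_erase_of_mem ha
      _ = (Asets.card - 1) ^ Fintype.card ι := by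
          rw [Finset.prod_const, Finset.card_univ]
  have hle : Asets.card ^ Fintype.card ι ≤ P.card * (Asets.card - 1) ^ Fintype.card ι := by
    calc Asets.card ^ Fintype.card ι
        = (Fintype.piFinset fun _ : ι => Asets).card := h1.symm
      _ ≤ (P.biUnion fun b => Fintype.piFinset fun i => Asets.filter fun a => Bad b i a).card :=
          Finset.card_le_card hsub
      _ ≤ ∑ b ∈ P, (Fintype.piFinset fun i => Asets.filter fun a => Bad b i a).card :=
          Finset.card_biUnion_le
      _ ≤ ∑ _b ∈ P, (Asets.card - 1) ^ Fintype.card ι := Finset.sum_le_sum h2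
      _ = P.card * (Asets.card - 1) ^ Fintype.card ι := by rw [Finset.sum_const, smul_eq_mul]
  exact absurd hcard (not_lt.2 hle)

/-- Normalize an injective ℕ-labeling of a fintype to an order-equivalent equiv into `Fin`. -/
theorem exists_orderEquiv {V : Type*} [Fintype V] [DecidableEq V] (σ : V → ℕ)
    (hσ : Injective σ) :
    ∃ ρ : V ≃ Fin (Fintype.card V), ∀ x y, σ x < σ y ↔ ((ρ x : ℕ) < (ρ y : ℕ)) := by
  classical
  set s : Finset ℕ := Finset.image σ Finset.univ with hs
  have hcard : s.card = Fintype.card V := by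
    rw [hs, Finset.card_image_of_injective _ hσ, Finset.card_univ]
  let iso := s.orderIsoOfFin hcard
  have hmem : ∀ x : V, σ x ∈ s := fun x => Finset.mem_image_of_mem _ (Finset.mem_univ x)
  let ρf : V → Fin (Fintype.card V) := fun x => iso.symm ⟨σ x, hmem x⟩
  have hρlt : ∀ x y, σ x < σ y ↔ ((ρf x : ℕ) < (ρf y : ℕ)) := by
    intro x y
    have : (⟨σ x, hmem x⟩ : s) < ⟨σ y, hmem y⟩ ↔ σ x < σ y := Subtype.mk_lt_mk
    rw [← this]
    constructor
    · intro h
      exact (iso.symm.lt_iff_lt.2 h : ρf x < ρf y)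
    · intro h
      exact iso.symm.lt_iff_lt.1 (h : ρf x < ρf y)
  have hinj : Injective ρf := by
    intro x y hxy
    apply hσ
    have := iso.symm.injective hxy
    exact congrArg Subtype.val this
  have hbij : Bijective ρf :=
    (Fintype.bijective_iff_injective_and_card ρf).2 ⟨hinj, by simp⟩
  exact ⟨Equiv.ofBijective ρf hbij, hρlt⟩



theorem log_k_ge_two {k : ℕ} (hk : 100 ≤ k) : (2 : ℝ) ≤ Real.log k := by
  have hk0 : (0:ℝ) < k := by positivity
  rw [Real.le_log_iff_exp_le hk0]
  have h1 : Real.exp 1 < 2.7182818286 := Real.exp_one_lt_d9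
  have h2 : Real.exp 2 = Real.exp 1 * Real.exp 1 := by
    rw [← Real.exp_add]; norm_num
  have h3 : Real.exp 2 < 8 := by
    rw [h2]; nlinarith [Real.exp_pos 1]
  have : (100 : ℝ) ≤ k := by exact_mod_cast hk
  linarith

theorem numeric_lt {k N C K m₀ p : ℕ} (hk : 100 ≤ k)
    (hN : N = (k - 1) ^ 2 + 1) (hC : C = N.choose k)
    (hK : K = k ^ 2 * ⌊Real.log k⌋₊) (hm : m₀ = 2 * N * C * K)
    (hp1 : m₀ < p) (hp2 : p ≤ 2 * m₀) :
    ((N * p).factorial) ^ 2 * (C - 1) ^ (p * p) < C ^ (p * p) := by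
  have hk1 : 1 ≤ k := by omega
  have hkN : k ≤ N := by
    have : k - 1 ≤ (k - 1) ^ 2 := Nat.le_self_pow two_ne_zero _
    omega
  have hC1 : 1 ≤ C := hC ▸ Nat.choose_pos hkN
  have hCN : C ≤ 2 ^ N := by
    rw [hC, ← Nat.sum_range_choose N]
    exact Finset.single_le_sum (fun i _ => Nat.zero_le _) (Finset.mem_range.2 (by omega))
  have hNk : N ≤ k ^ 2 := by
    have : (k - 1) ^ 2 < k ^ 2 := Nat.pow_lt_pow_left (by omega) two_ne_zero
    omega
  have hflo2 : 2 ≤ ⌊Real.log k⌋₊ := Nat.le_floor (log_k_ge_two hk)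
  have hfloK : ⌊Real.log k⌋₊ ≤ k := by
    have h1 : Real.log k ≤ ((k:ℕ) : ℝ) := by
      have := Real.log_le_sub_one_of_pos (show (0:ℝ) < k by positivity)
      linarith
    calc ⌊Real.log k⌋₊ ≤ ⌊((k:ℕ):ℝ)⌋₊ := Nat.floor_le_floor h1
      _ = k := Nat.floor_natCast k
  have hKk3 : K ≤ k ^ 3 := by
    rw [hK]
    calc k ^ 2 * ⌊Real.log k⌋₊ ≤ k ^ 2 * k := Nat.mul_le_mul_left _ hfloK
      _ = k ^ 3 := by ring
  have hNpbound : N * p ≤ k ^ 8 * 2 ^ k ^ 2 := by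
    have h1 : N * p ≤ N * (2 * m₀) := Nat.mul_le_mul_left _ hp2
    have h2 : N * (2 * m₀) = 4 * N ^ 2 * C * K := by rw [hm]; ring
    have h3 : 4 * N ^ 2 * C * K ≤ 4 * (k ^ 2) ^ 2 * 2 ^ k ^ 2 * k ^ 3 := by
      have hN2 := Nat.pow_le_pow_left hNk 2
      have hC2 : C ≤ 2 ^ k ^ 2 := hCN.trans (Nat.pow_le_pow_right (by norm_num) hNk)
      calc 4 * N ^ 2 * C * K ≤ 4 * (k^2)^2 * C * K :=
            Nat.mul_le_mul_right _ (Nat.mul_le_mul_right _ (Nat.mul_le_mul_left _ hN2))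
        _ ≤ 4 * (k^2)^2 * (2 ^ k ^ 2) * K := Nat.mul_le_mul_right _ (Nat.mul_le_mul_left _ hC2)
        _ ≤ 4 * (k^2)^2 * (2 ^ k ^ 2) * k ^ 3 := Nat.mul_le_mul_left _ hKk3
    have h4 : 4 * (k ^ 2) ^ 2 * 2 ^ k ^ 2 * k ^ 3 ≤ k ^ 8 * 2 ^ k ^ 2 := by
      have h5 : 4 * (k ^ 2) ^ 2 * k ^ 3 ≤ k ^ 8 := by
        have h6 : 4 ≤ k := by omega
        calc 4 * (k ^ 2) ^ 2 * k ^ 3 = 4 * k ^ 7 := by ring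
          _ ≤ k * k ^ 7 := Nat.mul_le_mul_right _ h6
          _ = k ^ 8 := by ring
      calc 4 * (k ^ 2) ^ 2 * 2 ^ k ^ 2 * k ^ 3 = (4 * (k ^ 2) ^ 2 * k ^ 3) * 2 ^ k ^ 2 := by ring
        _ ≤ k ^ 8 * 2 ^ k ^ 2 := Nat.mul_le_mul_right _ h5
    omega
  have hNp1 : 1 ≤ N * p := by
    have hN1 : 1 ≤ N := by omega
    have hp0 : 1 ≤ p := by omega
    exact Nat.one_le_iff_ne_zero.2 (by positivity)
  have hlog : Real.log ((N * p : ℕ) : ℝ) ≤ (K : ℝ) := by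
    have hle : ((N * p : ℕ) : ℝ) ≤ ((k:ℝ) ^ 8 * 2 ^ k ^ 2) := by
      exact_mod_cast hNpbound
    have hlog2 : Real.log ((N * p : ℕ) : ℝ) ≤ Real.log ((k:ℝ) ^ 8 * 2 ^ k ^ 2) :=
      Real.log_le_log (by exact_mod_cast hNp1) hle
    have hk0 : (0:ℝ) < k := by positivity
    have heq : Real.log ((k:ℝ) ^ 8 * 2 ^ k ^ 2) =
        8 * Real.log k + (k:ℝ) ^ 2 * Real.log 2 := by
      rw [Real.log_mul (by positivity) (by positivity), Real.log_pow, Real.log_pow]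
      push_cast
      ring
    have hlogk : Real.log k ≤ (k:ℝ) := by
      have := Real.log_le_sub_one_of_pos hk0; linarith
    have hlog2' : Real.log 2 ≤ 1 := by
      have := Real.log_le_sub_one_of_pos (show (0:ℝ) < 2 by norm_num); linarith
    have hkR : (100:ℝ) ≤ k := by exact_mod_cast hk
    have hsum : 8 * Real.log k + (k:ℝ) ^ 2 * Real.log 2 ≤ 2 * (k:ℝ) ^ 2 := by
      have hlogk0 : 0 ≤ Real.log k := Real.log_nonneg (by linarith)
      have hlog20 : 0 ≤ Real.log 2 := Real.log_nonneg (by norm_num)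
      nlinarith
    have hKge : 2 * (k:ℝ) ^ 2 ≤ (K : ℝ) := by
      rw [hK]
      push_cast
      have h2f : (2:ℝ) ≤ (⌊Real.log k⌋₊ : ℝ) := by exact_mod_cast hflo2
      nlinarith [sq_nonneg (k:ℝ), show (0:ℝ) ≤ (k:ℝ)^2 by positivity]
    calc Real.log ((N * p : ℕ) : ℝ) ≤ _ := hlog2
      _ = _ := heq
      _ ≤ 2 * (k:ℝ)^2 := hsum
      _ ≤ (K:ℝ) := hKge
  have hp0 : 0 < p := by omega
  have hpR : (0:ℝ) < p := by exact_mod_cast hp0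
  have hCR : (1:ℝ) ≤ C := by exact_mod_cast hC1
  have hCR0 : (0:ℝ) < C := by linarith
  set M := N * p with hM
  set L := p * p with hL
  have hMR1 : (1:ℝ) ≤ (M:ℝ) := by exact_mod_cast hNp1
  have hMR0 : (0:ℝ) < (M:ℝ) := by linarith
  have hexp : 2 * (M:ℝ) * Real.log (M:ℝ) * (C:ℝ) < (L:ℝ) := by
    have h1 : 2 * (N:ℝ) * C * Real.log (M:ℝ) ≤ (m₀ : ℝ) := by
      have hm' : (m₀ : ℝ) = 2 * N * C * K := by rw [hm]; push_cast; ring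
      rw [hm']
      exact mul_le_mul_of_nonneg_left hlog (by positivity)
    have h2 : (m₀ : ℝ) < p := by exact_mod_cast hp1
    have h3 : (2 * (N:ℝ) * C * Real.log (M:ℝ)) * p < (p:ℝ) * p :=
      mul_lt_mul_of_pos_right (h1.trans_lt h2) hpR
    have hMeq : (M : ℝ) = (N:ℝ) * p := by rw [hM]; push_cast; ring
    have hLeq : (L : ℝ) = (p:ℝ) * p := by rw [hL]; push_cast; ring
    rw [hLeq]
    nlinarith [h3, hMeq]
  have h0 : (0:ℝ) ≤ ((M.factorial : ℕ) : ℝ) := by positivity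
  have hfac : ((M.factorial : ℕ) : ℝ) ≤ Real.exp ((M:ℝ) * Real.log (M:ℝ)) := by
    have h1 : ((M.factorial : ℕ) : ℝ) ≤ ((M:ℝ)) ^ (M:ℕ) := by
      exact_mod_cast Nat.factorial_le_pow M
    have h2 : Real.exp ((M:ℝ) * Real.log (M:ℝ)) = ((M:ℝ)) ^ (M:ℕ) := by
      rw [show (M:ℝ) * Real.log (M:ℝ) = ((M:ℕ):ℝ) * Real.log (M:ℝ) by norm_num,
        Real.exp_nat_mul, Real.exp_log hMR0]
    rw [h2]
    exact h1
  have hfac2 : ((M.factorial : ℕ) : ℝ) ^ 2 ≤ Real.exp (2 * (M:ℝ) * Real.log (M:ℝ)) := by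
    have h := mul_le_mul hfac hfac h0 (Real.exp_pos _).le
    rw [← Real.exp_add] at h
    have heq2 : Real.exp ((M:ℝ) * Real.log (M:ℝ) + (M:ℝ) * Real.log (M:ℝ)) =
        Real.exp (2 * (M:ℝ) * Real.log (M:ℝ)) := by congr 1; ring
    calc ((M.factorial : ℕ) : ℝ) ^ 2 = ((M.factorial : ℕ) : ℝ) * ((M.factorial : ℕ) : ℝ) := sq _
      _ ≤ Real.exp ((M:ℝ) * Real.log (M:ℝ) + (M:ℝ) * Real.log (M:ℝ)) := h
      _ = _ := heq2
  have hCm1 : ((C:ℝ) - 1) ≤ (C:ℝ) * Real.exp (-(1 / (C:ℝ))) := by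
    have h := Real.add_one_le_exp (-(1 / (C:ℝ)))
    have h2 : (C:ℝ) * (-(1 / (C:ℝ)) + 1) ≤ (C:ℝ) * Real.exp (-(1 / (C:ℝ))) :=
      mul_le_mul_of_nonneg_left h (by positivity)
    have h3 : (C:ℝ) * (-(1 / (C:ℝ)) + 1) = (C:ℝ) - 1 := by
      field_simp
      ring
    linarith
  have hCm1L : ((C:ℝ) - 1) ^ (L:ℕ) ≤ (C:ℝ) ^ (L:ℕ) * Real.exp (-((L:ℝ) / (C:ℝ))) := by
    calc ((C:ℝ) - 1) ^ (L:ℕ) ≤ ((C:ℝ) * Real.exp (-(1 / (C:ℝ)))) ^ (L:ℕ) :=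
          pow_le_pow_left₀ (by linarith) hCm1 _
      _ = (C:ℝ) ^ (L:ℕ) * Real.exp (-(1 / (C:ℝ))) ^ (L:ℕ) := mul_pow _ _ _
      _ = (C:ℝ) ^ (L:ℕ) * Real.exp (-((L:ℝ) / (C:ℝ))) := by
          rw [← Real.exp_nat_mul]
          congr 1
          field_simp
  have key : ((M.factorial : ℕ) : ℝ) ^ 2 * ((C:ℝ) - 1) ^ (L:ℕ) < (C:ℝ) ^ (L:ℕ) := by
    have hCL0 : (0:ℝ) < (C:ℝ) ^ (L:ℕ) := by positivity
    have hprod : ((M.factorial : ℕ) : ℝ) ^ 2 * ((C:ℝ) - 1) ^ (L:ℕ) ≤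
        Real.exp (2 * (M:ℝ) * Real.log (M:ℝ)) * ((C:ℝ) ^ (L:ℕ) * Real.exp (-((L:ℝ) / (C:ℝ)))) :=
      mul_le_mul hfac2 hCm1L (pow_nonneg (by linarith) _) (by positivity)
    have hlt1 : Real.exp (2 * (M:ℝ) * Real.log (M:ℝ)) * Real.exp (-((L:ℝ) / (C:ℝ))) < 1 := by
      rw [← Real.exp_add]
      apply Real.exp_lt_one_iff.2
      have hdiv : 2 * (M:ℝ) * Real.log (M:ℝ) < (L:ℝ) / (C:ℝ) := by
        rw [lt_div_iff₀ hCR0]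
        exact hexp
      linarith
    nlinarith [hprod, hlt1, hCL0, Real.exp_pos (2 * (M:ℝ) * Real.log (M:ℝ)),
      Real.exp_pos (-((L:ℝ) / (C:ℝ)))]
  have hcast : (((C - 1 : ℕ)) : ℝ) = (C:ℝ) - 1 := by
    rw [Nat.cast_sub hC1]; norm_num
  have hgoal : ((M.factorial : ℕ) : ℝ) ^ 2 * (((C - 1 : ℕ)) : ℝ) ^ (L:ℕ) < ((C:ℕ):ℝ) ^ (L:ℕ) := by
    rw [hcast]; exact key
  exact_mod_cast hgoal


end StrongES

open StrongES

set_option maxHeartbeats 1600000 in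

/-- For every `ε > 0` there exists `k₀` such that for all `k ≥ k₀`
there exists a linear `k`-graph with the strong Erdős–Szekeres property having at most
`(1+ε)·16k⁸(ln k)²·C((k−1)²+1, k)²` edges; that is,
`f'_sES(k) ≤ (1+o(1))·16k⁸ ln²k·C((k−1)²+1, k)²`. -/
theorem stmt_7 :
    ∀ ε : ℝ, 0 < ε → ∃ k₀ : ℕ, ∀ k : ℕ, k₀ ≤ k →
      ∃ (n : ℕ) (E : Finset (Finset (Fin n))),
        (∀ e ∈ E, e.card = k) ∧
        (∀ e ∈ E, ∀ f ∈ E, e ≠ f → (e ∩ f).card ≤ 1) ∧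
        (∀ σ τ : Fin n → ℕ, Function.Injective σ → Function.Injective τ →
          ∃ e ∈ E, (∀ x ∈ e, ∀ y ∈ e, σ x < σ y → τ x < τ y) ∨
                   (∀ x ∈ e, ∀ y ∈ e, σ x < σ y → τ y < τ x)) ∧
        (E.card : ℝ) ≤ (1 + ε) * 16 * (k : ℝ) ^ 8 * Real.log k ^ 2 *
          (Nat.choose ((k - 1) ^ 2 + 1) k : ℝ) ^ 2 := by
  intro ε hε
  refine ⟨100, fun k hk => ?_⟩
  have hk1 : 1 ≤ k := by omega
  -- parameters
  set N : ℕ := (k - 1) ^ 2 + 1 with hN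
  set C : ℕ := N.choose k with hC
  set K : ℕ := k ^ 2 * ⌊Real.log k⌋₊ with hK
  set m₀ : ℕ := 2 * N * C * K with hm
  have hkN : k ≤ N := by
    have : k - 1 ≤ (k - 1) ^ 2 := Nat.le_self_pow two_ne_zero _
    omega
  have hC1 : 1 ≤ C := hC ▸ Nat.choose_pos hkN
  have hflo2 : 2 ≤ ⌊Real.log k⌋₊ := Nat.le_floor (log_k_ge_two hk)
  have hK1 : 1 ≤ K := by
    have : 1 ≤ k ^ 2 := Nat.one_le_pow _ _ (by omega)
    calc 1 = 1 * 1 := rfl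
      _ ≤ k ^ 2 * ⌊Real.log k⌋₊ := Nat.mul_le_mul this (by omega)
  have hm0 : m₀ ≠ 0 := by
    have hN1 : 1 ≤ N := by omega
    have : 1 ≤ 2 * N * C * K := by
      calc 1 = 2 * 1 * 1 * 1 / 2 := rfl
        _ ≤ 2 * N * C * K := by
            have := Nat.mul_le_mul (Nat.mul_le_mul (Nat.mul_le_mul (le_refl 2) hN1) hC1) hK1
            omega
    omega
  obtain ⟨p, hpprime, hp1, hp2⟩ := Nat.exists_prime_lt_and_le_two_mul m₀ hm0
  haveI : Fact p.Prime := ⟨hpprime⟩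
  haveI : NeZero p := ⟨hpprime.pos.ne'⟩
  have hNm : N ≤ m₀ := by
    have h1 : 1 ≤ 2 * C * K := by
      calc 1 = 1 * 1 * 1 := rfl
        _ ≤ 2 * C * K := Nat.mul_le_mul (Nat.mul_le_mul (by norm_num) hC1) hK1
    calc N = N * 1 := (Nat.mul_one N).symm
      _ ≤ N * (2 * C * K) := Nat.mul_le_mul_left _ h1
      _ = 2 * N * C * K := by ring
  have hNp : N < p := lt_of_le_of_lt hNm hp1
  -- the construction
  set V := (Fin N × ZMod p) with hV
  have hnV : Fintype.card V = N * p := by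
    simp [hV, ZMod.card]
  set nV := Fintype.card V with hnVdef
  -- lines
  have hcastinj : ∀ a b : Fin N, ((a : ℕ) : ZMod p) = ((b : ℕ) : ZMod p) → a = b := by
    intro a b hab
    have ha : (((a : ℕ) : ZMod p)).val = (a : ℕ) := ZMod.val_cast_of_lt (lt_trans a.2 hNp)
    have hb : (((b : ℕ) : ZMod p)).val = (b : ℕ) := ZMod.val_cast_of_lt (lt_trans b.2 hNp)
    exact Fin.ext (by rw [← ha, ← hb, hab])
  set vline : (ZMod p × ZMod p) → Fin N → V :=
    fun ℓ a => (a, ℓ.1 * ((a : ℕ) : ZMod p) + ℓ.2) with hvline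
  have hvinj : ∀ ℓ, Injective (vline ℓ) := by
    intro ℓ a b hab
    exact congrArg Prod.fst hab
  set edge : (ZMod p × ZMod p) → Finset (Fin N) → Finset V :=
    fun ℓ A => A.image (vline ℓ) with hedge
  set Asets := Finset.powersetCard k (Finset.univ : Finset (Fin N)) with hAsets
  set P := (Finset.univ : Finset ((V ≃ Fin nV) × (V ≃ Fin nV))) with hP
  set Bad : ((V ≃ Fin nV) × (V ≃ Fin nV)) → (ZMod p × ZMod p) → Finset (Fin N) → Prop :=
    fun b ℓ A =>
      ¬ Cons (fun v => ((b.1 v : Fin nV) : ℕ)) (fun v => ((b.2 v : Fin nV) : ℕ)) (edge ℓ A)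
    with hBad
  -- every ranking pair has a good k-subset on every line (two-order Erdős–Szekeres)
  have hex : ∀ b ∈ P, ∀ ℓ : ZMod p × ZMod p, ∃ A ∈ Asets, ¬ Bad b ℓ A := by
    intro b _ ℓ
    have hnle : (k - 1) * (k - 1) + 1 ≤ N := by
      rw [hN, pow_two]
    have hf : Injective (fun a : Fin N => ((b.1 (vline ℓ a) : Fin nV) : ℕ)) :=
      Fin.val_injective.comp ((b.1.injective).comp (hvinj ℓ))
    have hg : Injective (fun a : Fin N => ((b.2 (vline ℓ a) : Fin nV) : ℕ)) :=
      Fin.val_injective.comp ((b.2.injective).comp (hvinj ℓ))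
    obtain ⟨S, hScard, hScons⟩ := two_order_ES hk1 hnle _ _ hf hg
    refine ⟨S, Finset.mem_powersetCard_univ.2 hScard, ?_⟩
    rw [hBad]
    exact not_not_intro (cons_image hScons)
  -- cardinalities
  have hAcard : Asets.card = C := by
    rw [hAsets, Finset.card_powersetCard, Finset.card_univ, Fintype.card_fin, hC]
  have hιcard : Fintype.card (ZMod p × ZMod p) = p * p := by
    simp [ZMod.card]
  have hPcard : P.card = (N * p).factorial * (N * p).factorial := by
    have h1 : Fintype.card (V ≃ Fin nV) = (N * p).factorial := by
      rw [Fintype.card_equiv (Fintype.equivFin V), ← hnVdef, hnV]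
    rw [hP, Finset.card_univ, Fintype.card_prod, h1]
  have hnum := numeric_lt (N := N) (C := C) (K := K) (m₀ := m₀) hk rfl rfl rfl rfl hp1 hp2
  have hcard : P.card * (Asets.card - 1) ^ Fintype.card (ZMod p × ZMod p) <
      Asets.card ^ Fintype.card (ZMod p × ZMod p) := by
    rw [hPcard, hAcard, hιcard]
    rw [pow_two] at hnum
    exact hnum
  obtain ⟨F, hF1, hF2⟩ := exists_good Asets P Bad hex hcard
  -- transport to Fin nV
  set φ := Fintype.equivFin V with hφ
  refine ⟨nV, Finset.image (fun ℓ => (edge ℓ (F ℓ)).image φ) Finset.univ, ?_, ?_, ?_, ?_⟩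
  · -- edges have k elements
    intro e he
    obtain ⟨ℓ, -, rfl⟩ := Finset.mem_image.1 he
    rw [Finset.card_image_of_injective _ φ.injective, hedge,
      Finset.card_image_of_injective _ (hvinj ℓ)]
    exact Finset.mem_powersetCard_univ.1 (hF1 ℓ)
  · -- linearity
    intro e he f hf hef
    obtain ⟨ℓ₁, -, rfl⟩ := Finset.mem_image.1 he
    obtain ⟨ℓ₂, -, rfl⟩ := Finset.mem_image.1 hf
    have hne : ℓ₁ ≠ ℓ₂ := fun h => hef (by rw [h])
    rw [← Finset.image_inter _ _ φ.injective,
      Finset.card_image_of_injective _ φ.injective]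
    rw [Finset.card_le_one]
    intro u hu v hv
    rw [Finset.mem_inter] at hu hv
    obtain ⟨a₁, -, hua⟩ := Finset.mem_image.1 hu.1
    obtain ⟨a₂, -, hub⟩ := Finset.mem_image.1 hu.2
    obtain ⟨b₁, -, hva⟩ := Finset.mem_image.1 hv.1
    obtain ⟨b₂, -, hvb⟩ := Finset.mem_image.1 hv.2
    -- u lies on both lines
    have hu1 : u.1 = (a₁ : Fin N) ∧ u.2 = ℓ₁.1 * ((a₁ : ℕ) : ZMod p) + ℓ₁.2 := by
      rw [← hua]; exact ⟨rfl, rfl⟩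
    have hu2 : u.1 = (a₂ : Fin N) ∧ u.2 = ℓ₂.1 * ((a₂ : ℕ) : ZMod p) + ℓ₂.2 := by
      rw [← hub]; exact ⟨rfl, rfl⟩
    have hv1 : v.1 = (b₁ : Fin N) ∧ v.2 = ℓ₁.1 * ((b₁ : ℕ) : ZMod p) + ℓ₁.2 := by
      rw [← hva]; exact ⟨rfl, rfl⟩
    have hv2 : v.1 = (b₂ : Fin N) ∧ v.2 = ℓ₂.1 * ((b₂ : ℕ) : ZMod p) + ℓ₂.2 := by
      rw [← hvb]; exact ⟨rfl, rfl⟩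
    -- same first coordinates
    have ha12 : a₁ = a₂ := congrArg Prod.fst (hua.trans hub.symm)
    have hb12 : b₁ = b₂ := congrArg Prod.fst (hva.trans hvb.symm)
    have hequa : ℓ₁.1 * ((a₁ : ℕ) : ZMod p) + ℓ₁.2 = ℓ₂.1 * ((a₁ : ℕ) : ZMod p) + ℓ₂.2 := by
      have h := congrArg Prod.snd (hua.trans hub.symm)
      rw [← ha12] at h
      exact h
    have hequb : ℓ₁.1 * ((b₁ : ℕ) : ZMod p) + ℓ₁.2 = ℓ₂.1 * ((b₁ : ℕ) : ZMod p) + ℓ₂.2 := by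
      have h := congrArg Prod.snd (hva.trans hvb.symm)
      rw [← hb12] at h
      exact h
    by_cases hab : a₁ = b₁
    · rw [← hua, ← hva, hab]
    · exfalso
      have hdiff : (ℓ₁.1 - ℓ₂.1) * (((a₁ : ℕ) : ZMod p) - ((b₁ : ℕ) : ZMod p)) = 0 := by
        linear_combination hequa - hequb
      have hab' : (((a₁ : ℕ) : ZMod p) - ((b₁ : ℕ) : ZMod p)) ≠ 0 :=
        sub_ne_zero.2 fun h => hab (hcastinj _ _ h)
      have hs : ℓ₁.1 = ℓ₂.1 := by
        rcases mul_eq_zero.1 hdiff with h | h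
        · exact sub_eq_zero.1 h
        · exact absurd h hab'
      have ht : ℓ₁.2 = ℓ₂.2 := by
        rw [hs] at hequa
        exact add_left_cancel hequa
      exact hne (Prod.ext hs ht)
  · -- strong Erdős–Szekeres property
    intro σ τ hσ hτ
    obtain ⟨ρ₁, hρ₁⟩ := exists_orderEquiv (σ ∘ φ) (hσ.comp φ.injective)
    obtain ⟨ρ₂, hρ₂⟩ := exists_orderEquiv (τ ∘ φ) (hτ.comp φ.injective)
    obtain ⟨ℓ, hℓ⟩ := hF2 (ρ₁, ρ₂) (Finset.mem_univ _)
    simp only [hBad, not_not] at hℓ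
    have hc1 : Cons (σ ∘ φ) (τ ∘ φ) (edge ℓ (F ℓ)) :=
      cons_congr (fun x y => (hρ₁ x y).symm) (fun x y => (hρ₂ x y).symm) hℓ
    have hc2 : Cons σ τ ((edge ℓ (F ℓ)).image φ) := cons_image hc1
    exact ⟨_, Finset.mem_image_of_mem _ (Finset.mem_univ ℓ), hc2⟩
  · -- cardinality bound
    have hE : (Finset.image (fun ℓ => (edge ℓ (F ℓ)).image φ) Finset.univ).card ≤ p * p := by
      calc (Finset.image (fun ℓ => (edge ℓ (F ℓ)).image φ) Finset.univ).card
          ≤ (Finset.univ : Finset (ZMod p × ZMod p)).card := Finset.card_image_le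
        _ = p * p := by rw [Finset.card_univ, hιcard]
    have hNk : N ≤ k ^ 2 := by
      have : (k - 1) ^ 2 < k ^ 2 := Nat.pow_lt_pow_left (by omega) two_ne_zero
      omega
    have hkR1 : (1:ℝ) ≤ (k:ℝ) := by exact_mod_cast hk1
    have hlogk0 : 0 ≤ Real.log k := Real.log_nonneg hkR1
    have hNR : (N:ℝ) ≤ (k:ℝ) ^ 2 := by exact_mod_cast hNk
    have hKR : (K:ℝ) ≤ (k:ℝ) ^ 2 * Real.log k := by
      have h1 : ((⌊Real.log k⌋₊ : ℕ) : ℝ) ≤ Real.log k := Nat.floor_le hlogk0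
      have h2 : (K:ℝ) = (k:ℝ) ^ 2 * ((⌊Real.log k⌋₊ : ℕ) : ℝ) := by
        rw [hK]; push_cast; ring
      rw [h2]
      exact mul_le_mul_of_nonneg_left h1 (by positivity)
    have hCR0 : (0:ℝ) ≤ (C:ℝ) := by positivity
    have hKR0 : (0:ℝ) ≤ (K:ℝ) := by positivity
    have hp4 : (p:ℝ) ≤ 4 * (C:ℝ) * ((N:ℝ) * (K:ℝ)) := by
      have h2 : (p:ℝ) ≤ 2 * (m₀:ℝ) := by exact_mod_cast hp2
      have h3 : (m₀:ℝ) = 2 * N * C * K := by rw [hm]; push_cast; ring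
      rw [h3] at h2
      linarith [h2]
    have hNKR : (N:ℝ) * (K:ℝ) ≤ (k:ℝ)^2 * ((k:ℝ)^2 * Real.log k) :=
      mul_le_mul hNR hKR hKR0 (by positivity)
    have hp5 : (p:ℝ) ≤ 4 * (C:ℝ) * ((k:ℝ)^4 * Real.log k) := by
      have h4 : 4 * (C:ℝ) * ((N:ℝ) * (K:ℝ)) ≤ 4 * (C:ℝ) * ((k:ℝ)^2 * ((k:ℝ)^2 * Real.log k)) :=
        mul_le_mul_of_nonneg_left hNKR (by positivity)
      have h5 : 4 * (C:ℝ) * ((k:ℝ)^2 * ((k:ℝ)^2 * Real.log k)) =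
          4 * (C:ℝ) * ((k:ℝ)^4 * Real.log k) := by ring
      linarith [hp4, h4, h5.le, h5.ge]
    have hpp : (p:ℝ) * (p:ℝ) ≤ 16 * (k:ℝ)^8 * Real.log k ^ 2 * (C:ℝ)^2 := by
      have h6 : (p:ℝ) * (p:ℝ) ≤ (4 * (C:ℝ) * ((k:ℝ)^4 * Real.log k)) *
          (4 * (C:ℝ) * ((k:ℝ)^4 * Real.log k)) :=
        mul_le_mul hp5 hp5 (by positivity) (by positivity)
      have h7 : (4 * (C:ℝ) * ((k:ℝ)^4 * Real.log k)) * (4 * (C:ℝ) * ((k:ℝ)^4 * Real.log k)) =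
          16 * (k:ℝ)^8 * Real.log k ^ 2 * (C:ℝ)^2 := by ring
      linarith [h6, h7.le, h7.ge]
    have hEcast : ((Finset.image (fun ℓ => (edge ℓ (F ℓ)).image φ) Finset.univ).card : ℝ) ≤
        (p:ℝ) * (p:ℝ) := by exact_mod_cast hE
    have hfinal : 16 * (k:ℝ)^8 * Real.log k ^ 2 * (C:ℝ)^2 ≤
        (1 + ε) * 16 * (k:ℝ)^8 * Real.log k ^ 2 * (C:ℝ)^2 := by
      have hX : (0:ℝ) ≤ 16 * (k:ℝ)^8 * Real.log k ^ 2 * (C:ℝ)^2 := by positivity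
      nlinarith [hX, hε]
    linarith [hEcast, hpp, hfinal]
end

section
/- For every ε > 0 there exists k₀ such that for all integers k ≥ k₀ there exists a linear k-graph with the strong Erdős–Szekeres property having at most (1+ε)·4k⁷(ln k)·C((k−1)²+1, k) vertices, where C(n, m) denotes the binomial coefficient; that is, n'_sES(k) ≤ (1+o(1))·4k⁷ ln k·C((k−1)²+1, k). -/
open scoped Classical

open Function Finset

namespace Stmt9Aux


/-- Erdős–Szekeres, copied from Mathlib Archive (Bhavik Mehta). -/
theorem seq_es {r s n : ℕ} {f : Fin n → ℕ} (hn : r * s < n) (hf : Injective f) :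
    (∃ t : Finset (Fin n), r < #t ∧ StrictMonoOn f ↑t) ∨
      ∃ t : Finset (Fin n), s < #t ∧ StrictAntiOn f ↑t := by
  let inc_sequences_ending_in : Fin n → Finset (Finset (Fin n)) := fun i =>
    univ.powerset.filter fun t => Finset.max t = i ∧ StrictMonoOn f ↑t
  let dec_sequences_ending_in : Fin n → Finset (Finset (Fin n)) := fun i =>
    univ.powerset.filter fun t => Finset.max t = i ∧ StrictAntiOn f ↑t
  have inc_i : ∀ i, {i} ∈ inc_sequences_ending_in i := fun i => by
    simp [inc_sequences_ending_in, StrictMonoOn]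
  have dec_i : ∀ i, {i} ∈ dec_sequences_ending_in i := fun i => by
    simp [dec_sequences_ending_in, StrictAntiOn]
  let ab' : Fin n → ℕ × ℕ := by
    intro i
    apply
      (max' ((inc_sequences_ending_in i).image card) (Nonempty.image ⟨{i}, inc_i i⟩ _),
        max' ((dec_sequences_ending_in i).image card) (Nonempty.image ⟨{i}, dec_i i⟩ _))
  generalize hab : ab' = ab
  rsuffices ⟨i, hi⟩ : ∃ i, r < (ab i).1 ∨ s < (ab i).2
  · refine Or.imp ?_ ?_ hi
    on_goal 1 =>
      have : (ab i).1 ∈ image card (inc_sequences_ending_in i) := by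
        simp only [← hab]; exact max'_mem _ (Nonempty.image ⟨{i}, inc_i i⟩ _)
    on_goal 2 =>
      have : (ab i).2 ∈ image card (dec_sequences_ending_in i) := by
        simp only [← hab]; exact max'_mem _ (Nonempty.image ⟨{i}, dec_i i⟩ _)
    all_goals
      intro hi
      rw [mem_image] at this
      obtain ⟨t, ht₁, ht₂⟩ := this
      refine ⟨t, by rwa [ht₂], ?_⟩
      rw [mem_filter] at ht₁
      apply ht₁.2.2
  have : Injective ab := by
    simp only [← hab]
    apply Function.Injective.of_lt_imp_ne
    intro i j k q
    injection q with q₁ q₂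
    cases lt_or_gt_of_ne fun _ => ne_of_lt ‹i < j› (hf ‹f i = f j›)
    on_goal 1 =>
      apply ne_of_lt _ q₁
      have : (ab' i).1 ∈ image card (inc_sequences_ending_in i) := by exact max'_mem _ (Nonempty.image ⟨{i}, inc_i i⟩ _)
    on_goal 2 =>
      apply ne_of_lt _ q₂
      have : (ab' i).2 ∈ image card (dec_sequences_ending_in i) := by exact max'_mem _ (Nonempty.image ⟨{i}, dec_i i⟩ _)
    all_goals
      rw [Nat.lt_iff_add_one_le]
      apply le_max'
      rw [mem_image] at this ⊢
      rcases this with ⟨t, ht₁, ht₂⟩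
      rw [mem_filter] at ht₁
      have : t.max = i := by simp only [ht₁.2.1]
      refine ⟨insert j t, ?_, ?_⟩
      · rw [mem_filter]
        refine ⟨?_, ?_, ?_⟩
        · rw [mem_powerset]; apply subset_univ
        · convert max_insert (a := j) (s := t)
          rw [ht₁.2.1, max_eq_left]
          apply WithBot.coe_le_coe.mpr (le_of_lt ‹i < j›)
        simp only [StrictMonoOn, StrictAntiOn, coe_insert, Set.mem_insert_iff, mem_coe]
        rintro x ⟨rfl | _⟩ y ⟨rfl | _⟩ _
        · apply (irrefl _ ‹j < j›).elim
        · exfalso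
          apply not_le_of_gt (_root_.trans ‹i < j› ‹j < y›) (le_max_of_eq ‹y ∈ t› ‹t.max = i›)
        · first
          | apply lt_of_le_of_lt _ ‹f i < f j›
          | apply lt_of_lt_of_le ‹f j < f i› _
          rcases lt_or_eq_of_le (le_max_of_eq ‹x ∈ t› ‹t.max = i›) with (_ | rfl)
          · apply le_of_lt (ht₁.2.2 ‹x ∈ t› (mem_of_max ‹t.max = i›) ‹x < i›)
          · rfl
        · apply ht₁.2.2 ‹x ∈ t› ‹y ∈ t› ‹x < y›
      · rw [card_insert_of_notMem, ht₂]
        intro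
        apply not_le_of_gt ‹i < j› (le_max_of_eq ‹j ∈ t› ‹t.max = i›)
  by_contra! q
  let ran : Finset (ℕ × ℕ) := (range r).image Nat.succ ×ˢ (range s).image Nat.succ
  have : image ab univ ⊆ ran := by
    rintro ⟨x₁, x₂⟩
    simp only [ran, mem_image, exists_prop, mem_range, mem_univ, mem_product, true_and,
      Prod.ext_iff]
    rintro ⟨i, rfl, rfl⟩
    specialize q i
    have z : 1 ≤ (ab i).1 ∧ 1 ≤ (ab i).2 := by
      simp only [← hab]
      constructor <;>
        · apply le_max'
          rw [mem_image]
          exact ⟨{i}, by solve_by_elim, card_singleton i⟩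
    exact ⟨⟨(ab i).1 - 1, by omega⟩, (ab i).2 - 1, by omega⟩
  apply not_le_of_gt hn
  simpa [ran, Nat.succ_injective, card_image_of_injective, ‹Injective ab›] using card_le_card this

/-- Two-orders Erdős–Szekeres: among `(k-1)^2+1` points with two injective labellings,
there are `k` points on which the labellings are monotonically consistent. -/
theorem pair_es' {k n : ℕ} (hn : (k - 1) * (k - 1) < n) (f g : Fin n → ℕ)
    (hf : Injective f) (hg : Injective g) :
    ∃ S : Finset (Fin n), S.card = k ∧
      ((∀ x ∈ S, ∀ y ∈ S, f x < f y → g x < g y) ∨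
       (∀ x ∈ S, ∀ y ∈ S, f x < f y → g y < g x)) := by
  let σ := Tuple.sort f
  have hσinj : Injective (⇑σ) := σ.injective
  have hfσ : StrictMono (f ∘ ⇑σ) :=
    (Tuple.monotone_sort f).strictMono_of_injective (hf.comp hσinj)
  have hq : Injective (g ∘ ⇑σ) := hg.comp hσinj
  -- helper to convert a monotone index set into the conclusion
  have key : ∀ t : Finset (Fin n), k ≤ t.card →
      ∀ mode : Bool,
      (if mode then StrictMonoOn (g ∘ ⇑σ) ↑t else StrictAntiOn (g ∘ ⇑σ) ↑t) →
      ∃ S : Finset (Fin n), S.card = k ∧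
        ((∀ x ∈ S, ∀ y ∈ S, f x < f y → g x < g y) ∨
         (∀ x ∈ S, ∀ y ∈ S, f x < f y → g y < g x)) := by
    intro t ht mode hmono
    obtain ⟨t', ht't, ht'card⟩ := Finset.exists_subset_card_eq ht
    refine ⟨t'.image ⇑σ, by rw [Finset.card_image_of_injective _ hσinj, ht'card], ?_⟩
    have main : ∀ x ∈ t'.image ⇑σ, ∀ y ∈ t'.image ⇑σ, f x < f y →
        (if mode then g x < g y else g y < g x) := by
      intro x hx y hy hfxy
      obtain ⟨i, hi, rfl⟩ := Finset.mem_image.1 hx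
      obtain ⟨j, hj, rfl⟩ := Finset.mem_image.1 hy
      have hij : i < j := by
        rcases lt_trichotomy i j with h | h | h
        · exact h
        · subst h; exact absurd hfxy (lt_irrefl _)
        · exact absurd (hfσ h) (lt_asymm hfxy)
      cases mode with
      | true =>
        simp only [if_true] at hmono ⊢
        exact hmono (ht't hi) (ht't hj) hij
      | false =>
        simp only [Bool.false_eq_true, if_false] at hmono ⊢
        exact hmono (ht't hi) (ht't hj) hij
    cases mode with
    | true => exact Or.inl (by simpa using main)
    | false => exact Or.inr (by simpa using main)
  rcases seq_es (f := g ∘ ⇑σ) hn hq with ⟨t, htc, hmono⟩ | ⟨t, htc, hmono⟩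
  · exact key t (by omega) true (by simpa using hmono)
  · exact key t (by omega) false (by simpa using hmono)

theorem core (k N q : ℕ) (hNbig : (k - 1) * (k - 1) < N) (hq : q.Prime) (hNq : N < q)
    (hcount : (q * N) ^ (2 * (q * N)) * (N.choose k - 1) ^ (q * q)
      < N.choose k ^ (q * q)) :
    ∃ E : Finset (Finset (Fin (q * N))),
      (∀ e ∈ E, e.card = k) ∧
      (∀ e ∈ E, ∀ f ∈ E, e ≠ f → (e ∩ f).card ≤ 1) ∧
      (∀ σ τ : Fin (q * N) → ℕ, Injective σ → Injective τ →
        ∃ e ∈ E, (∀ x ∈ e, ∀ y ∈ e, σ x < σ y → τ x < τ y) ∨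
                 (∀ x ∈ e, ∀ y ∈ e, σ x < σ y → τ y < τ x)) := by
  haveI : Fact q.Prime := ⟨hq⟩
  haveI : NeZero q := ⟨hq.ne_zero⟩
  set V := ZMod q × Fin N with hV
  have hcardV : Fintype.card V = q * N := by
    simp [hV, ZMod.card]
  let ι : V ≃ Fin (q * N) := Fintype.equivFinOfCardEq hcardV
  -- the point map
  let χ : Fin N → ZMod q := fun x => ((x : ℕ) : ZMod q)
  have hχ : Injective χ := by
    intro x y h
    have hx := ZMod.val_natCast_of_lt (lt_trans x.isLt hNq)
    have hy := ZMod.val_natCast_of_lt (lt_trans y.isLt hNq)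
    have := congrArg ZMod.val h
    rw [hx, hy] at this
    exact Fin.ext this
  let pt : ZMod q × ZMod q → Fin N → V := fun ab x => (ab.1 * χ x + ab.2, x)
  have hpt : ∀ ab, Injective (pt ab) := by
    intro ab x y h
    exact congrArg Prod.snd h
  have sep : ∀ ab ab' : ZMod q × ZMod q, ∀ x y : Fin N, x ≠ y →
      pt ab x = pt ab' x → pt ab y = pt ab' y → ab = ab' := by
    rintro ⟨a, b⟩ ⟨a', b'⟩ x y hxy h1 h2
    have e1 : a * χ x + b = a' * χ x + b' := congrArg Prod.fst h1
    have e2 : a * χ y + b = a' * χ y + b' := congrArg Prod.fst h2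
    have hz : (a - a') * (χ x - χ y) = 0 := by ring_nf; linear_combination e1 - e2
    rcases mul_eq_zero.1 hz with h | h
    · have ha : a = a' := sub_eq_zero.1 h
      have hb : b = b' := by
        have := e1; rw [ha] at this; exact add_left_cancel this
      rw [ha, hb]
    · exact absurd (hχ (sub_eq_zero.1 h)) hxy
  -- choices
  set C := N.choose k with hC
  let K : Finset (Finset (Fin N)) := Finset.univ.powersetCard k
  have hKmem : ∀ s, s ∈ K ↔ s.card = k := by
    intro s; simp [K, Finset.mem_powersetCard_univ]
  have hKcard : K.card = C := by
    simp [K, hC, Finset.card_powersetCard]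
  let edge : ZMod q × ZMod q → Finset (Fin N) → Finset V := fun ab s => s.image (pt ab)
  -- bad choices for a pair of orders
  let bad : (V → Fin (q * N)) → (V → Fin (q * N)) → ZMod q × ZMod q → Finset (Finset (Fin N)) :=
    fun f g ab => K.filter fun s =>
      ¬ ((∀ x ∈ edge ab s, ∀ y ∈ edge ab s, f x < f y → g x < g y) ∨
         (∀ x ∈ edge ab s, ∀ y ∈ edge ab s, f x < f y → g y < g x))
  have goodEx : ∀ f g : V → Fin (q * N), Injective f → Injective g →
      ∀ ab, ∃ s ∈ K, s ∉ bad f g ab := by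
    intro f g hf hg ab
    obtain ⟨S, hScard, hS⟩ := pair_es' (k := k) (n := N) hNbig
      (fun x => (f (pt ab x) : ℕ)) (fun x => (g (pt ab x) : ℕ))
      (Fin.val_injective.comp (hf.comp (hpt ab)))
      (Fin.val_injective.comp (hg.comp (hpt ab)))
    refine ⟨S, (hKmem S).2 hScard, ?_⟩
    simp only [bad, Finset.mem_filter, not_and, not_not]
    intro _
    have trans : ∀ (P : Prop), ((∀ i ∈ S, ∀ j ∈ S, (f (pt ab i) : ℕ) < (f (pt ab j) : ℕ) →
        (g (pt ab i) : ℕ) < (g (pt ab j) : ℕ)) → P) →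
        ((∀ i ∈ S, ∀ j ∈ S, (f (pt ab i) : ℕ) < (f (pt ab j) : ℕ) →
        (g (pt ab j) : ℕ) < (g (pt ab i) : ℕ)) → P) → P := by
      intro P h1 h2
      rcases hS with h | h
      · exact h1 h
      · exact h2 h
    rcases hS with h | h
    · left
      intro x hx y hy hfxy
      obtain ⟨i, hi, rfl⟩ := Finset.mem_image.1 hx
      obtain ⟨j, hj, rfl⟩ := Finset.mem_image.1 hy
      have : (g (pt ab i) : ℕ) < (g (pt ab j) : ℕ) := h i hi j hj (by exact hfxy)
      exact this
    · right
      intro x hx y hy hfxy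
      obtain ⟨i, hi, rfl⟩ := Finset.mem_image.1 hx
      obtain ⟨j, hj, rfl⟩ := Finset.mem_image.1 hy
      exact h i hi j hj (by exact hfxy)
  have hbadcard : ∀ f g : V → Fin (q * N), Injective f → Injective g →
      ∀ ab, (bad f g ab).card ≤ C - 1 := by
    intro f g hf hg ab
    obtain ⟨s, hsK, hsbad⟩ := goodEx f g hf hg ab
    have hss : bad f g ab ⊂ K :=
      (Finset.ssubset_iff_of_subset (Finset.filter_subset _ _)).2 ⟨s, hsK, hsbad⟩
    have := Finset.card_lt_card hss
    omega
  -- the probability space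
  let Ω : Finset ((ZMod q × ZMod q) → Finset (Fin N)) :=
    Fintype.piFinset fun _ => K
  have hT : Fintype.card (ZMod q × ZMod q) = q * q := by simp [ZMod.card]
  have hΩcard : Ω.card = C ^ (q * q) := by
    rw [Fintype.card_piFinset]
    simp [hKcard, Finset.prod_const, hT]
  let Pairs : Finset ((V → Fin (q * N)) × (V → Fin (q * N))) :=
    Finset.univ.filter fun fg => Injective fg.1 ∧ Injective fg.2
  have hPairs : Pairs.card ≤ (q * N) ^ (2 * (q * N)) := by
    refine le_trans (Finset.card_filter_le _ _) ?_
    rw [Finset.card_univ]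
    simp only [Fintype.card_prod, Fintype.card_fun, hcardV, Fintype.card_fin]
    rw [two_mul, pow_add]
  let Bad : ((V → Fin (q * N)) × (V → Fin (q * N))) → Finset ((ZMod q × ZMod q) → Finset (Fin N)) :=
    fun fg => Fintype.piFinset fun ab => bad fg.1 fg.2 ab
  have hBadcard : ∀ fg ∈ Pairs, (Bad fg).card ≤ (C - 1) ^ (q * q) := by
    intro fg hfg
    rw [Finset.mem_filter] at hfg
    rw [Fintype.card_piFinset]
    calc ∏ ab : ZMod q × ZMod q, (bad fg.1 fg.2 ab).card
        ≤ ∏ _ab : ZMod q × ZMod q, (C - 1) :=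
          Finset.prod_le_prod' fun ab _ => hbadcard fg.1 fg.2 hfg.2.1 hfg.2.2 ab
      _ = (C - 1) ^ (q * q) := by rw [Finset.prod_const, Finset.card_univ, hT]
  let allbad := Pairs.biUnion Bad
  have hallbad : allbad.card < Ω.card := by
    calc allbad.card ≤ ∑ fg ∈ Pairs, (Bad fg).card := Finset.card_biUnion_le
      _ ≤ ∑ _fg ∈ Pairs, (C - 1) ^ (q * q) := Finset.sum_le_sum hBadcard
      _ = Pairs.card * (C - 1) ^ (q * q) := by rw [Finset.sum_const, smul_eq_mul]
      _ ≤ (q * N) ^ (2 * (q * N)) * (C - 1) ^ (q * q) :=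
          Nat.mul_le_mul_right _ hPairs
      _ < C ^ (q * q) := hcount
      _ = Ω.card := hΩcard.symm
  have hgood : ∃ ω ∈ Ω, ω ∉ allbad := by
    by_contra hcon
    push_neg at hcon
    have : Ω ⊆ allbad := fun ω hω => hcon ω hω
    exact absurd (Finset.card_le_card this) (not_le_of_gt hallbad)
  obtain ⟨ω, hωΩ, hωgood⟩ := hgood
  have hωK : ∀ ab, ω ab ∈ K := Fintype.mem_piFinset.1 hωΩ
  -- the hypergraph
  refine ⟨Finset.univ.image fun ab => (edge ab (ω ab)).image ι, ?_, ?_, ?_⟩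
  · -- cards
    intro e he
    obtain ⟨ab, _, rfl⟩ := Finset.mem_image.1 he
    rw [Finset.card_image_of_injective _ ι.injective,
      Finset.card_image_of_injective _ (hpt ab)]
    exact (hKmem _).1 (hωK ab)
  · -- linearity
    intro e he e' he' hne
    obtain ⟨ab, _, rfl⟩ := Finset.mem_image.1 he
    obtain ⟨ab', _, rfl⟩ := Finset.mem_image.1 he'
    have habne : ab ≠ ab' := by
      rintro rfl; exact hne rfl
    rw [← Finset.image_inter _ _ ι.injective,
      Finset.card_image_of_injective _ ι.injective]
    rw [Finset.card_le_one]
    intro p hp p' hp'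
    rw [Finset.mem_inter] at hp hp'
    obtain ⟨x₁, _, hx₁⟩ := Finset.mem_image.1 hp.1
    obtain ⟨y₁, _, hy₁⟩ := Finset.mem_image.1 hp.2
    obtain ⟨x₂, _, hx₂⟩ := Finset.mem_image.1 hp'.1
    obtain ⟨y₂, _, hy₂⟩ := Finset.mem_image.1 hp'.2
    have hxy₁ : y₁ = x₁ := congrArg Prod.snd (hy₁.trans hx₁.symm)
    have hxy₂ : y₂ = x₂ := congrArg Prod.snd (hy₂.trans hx₂.symm)
    rw [hxy₁] at hy₁
    rw [hxy₂] at hy₂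
    by_contra hpp
    have hx12 : x₁ ≠ x₂ := by
      rintro rfl
      exact hpp (hx₁.symm.trans hx₂)
    exact habne (sep ab ab' x₁ x₂ hx12 (hx₁.trans hy₁.symm) (hx₂.trans hy₂.symm))
  · -- the strong ES property
    intro σ τ hσ hτ
    -- rank maps
    have hrk_lt : ∀ (h : V → ℕ) (v : V), #(Finset.univ.filter fun w => h w < h v) < q * N := by
      intro h v
      calc #(Finset.univ.filter fun w => h w < h v) < #(Finset.univ : Finset V) := by
            apply Finset.card_lt_card
            refine (Finset.ssubset_iff_of_subset (Finset.subset_univ _)).2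
              ⟨v, Finset.mem_univ v, by simp⟩
        _ = q * N := by rw [Finset.card_univ, hcardV]
    let rk : (V → ℕ) → V → Fin (q * N) := fun h v => ⟨_, hrk_lt h v⟩
    have hrk_mono : ∀ (h : V → ℕ), ∀ v w, h v < h w → rk h v < rk h w := by
      intro h v w hvw
      show (⟨_, _⟩ : Fin _) < ⟨_, _⟩
      rw [Fin.mk_lt_mk]
      apply Finset.card_lt_card
      refine (Finset.ssubset_iff_of_subset ?_).2 ⟨v, by simp [hvw], by simp⟩
      intro z hz
      simp only [Finset.mem_filter, Finset.mem_univ, true_and] at hz ⊢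
      exact lt_trans hz hvw
    have hrk_iff : ∀ (h : V → ℕ), Injective h → ∀ v w, rk h v < rk h w ↔ h v < h w := by
      intro h hinj v w
      constructor
      · intro hlt
        rcases lt_trichotomy (h v) (h w) with hc | hc | hc
        · exact hc
        · rw [hinj hc] at hlt; exact absurd hlt (lt_irrefl _)
        · exact absurd (hrk_mono h w v hc) (lt_asymm hlt)
      · exact hrk_mono h v w
    have hrk_inj : ∀ (h : V → ℕ), Injective h → Injective (rk h) := by
      intro h hinj v w heq
      rcases lt_trichotomy (h v) (h w) with hc | hc | hc
      · exact absurd heq (ne_of_lt (hrk_mono h v w hc))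
      · exact hinj hc
      · exact absurd heq.symm (ne_of_lt (hrk_mono h w v hc))
    have hσι : Injective (σ ∘ ⇑ι) := hσ.comp ι.injective
    have hτι : Injective (τ ∘ ⇑ι) := hτ.comp ι.injective
    let f := rk (σ ∘ ⇑ι)
    let g := rk (τ ∘ ⇑ι)
    have hfg : (f, g) ∈ Pairs := by
      simp only [Pairs, Finset.mem_filter, Finset.mem_univ, true_and]
      exact ⟨hrk_inj _ hσι, hrk_inj _ hτι⟩
    have hnotbad : ω ∉ Bad (f, g) := by
      intro hmem
      exact hωgood (Finset.mem_biUnion.2 ⟨(f, g), hfg, hmem⟩)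
    have : ¬ ∀ ab, ω ab ∈ bad f g ab := fun hall => hnotbad (Fintype.mem_piFinset.2 hall)
    push_neg at this
    obtain ⟨ab, hab⟩ := this
    have hMC : (∀ x ∈ edge ab (ω ab), ∀ y ∈ edge ab (ω ab), f x < f y → g x < g y) ∨
        (∀ x ∈ edge ab (ω ab), ∀ y ∈ edge ab (ω ab), f x < f y → g y < g x) := by
      by_contra hcon
      exact hab (Finset.mem_filter.2 ⟨hωK ab, hcon⟩)
    refine ⟨(edge ab (ω ab)).image ι, Finset.mem_image.2 ⟨ab, Finset.mem_univ ab, rfl⟩, ?_⟩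
    rcases hMC with hMC | hMC
    · left
      intro x hx y hy hσxy
      obtain ⟨p, hp, rfl⟩ := Finset.mem_image.1 hx
      obtain ⟨p', hp', rfl⟩ := Finset.mem_image.1 hy
      have h1 : f p < f p' := hrk_mono _ p p' hσxy
      have h2 : g p < g p' := hMC p hp p' hp' h1
      exact (hrk_iff _ hτι p p').1 h2
    · right
      intro x hx y hy hσxy
      obtain ⟨p, hp, rfl⟩ := Finset.mem_image.1 hx
      obtain ⟨p', hp', rfl⟩ := Finset.mem_image.1 hy
      have h1 : f p < f p' := hrk_mono _ p p' hσxy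
      have h2 : g p' < g p := hMC p hp p' hp' h1
      exact (hrk_iff _ hτι p' p).1 h2


end Stmt9Aux


/-- For every `ε > 0` there exists `k₀` such that for all `k ≥ k₀`
there exists a linear `k`-graph with the strong Erdős–Szekeres property having at most
`(1+ε)·4k⁷(ln k)·C((k−1)²+1, k)` vertices; that is,
`n'_sES(k) ≤ (1+o(1))·4k⁷ ln k·C((k−1)²+1, k)`. -/
theorem stmt_9 :
    ∀ ε : ℝ, 0 < ε → ∃ k₀ : ℕ, ∀ k : ℕ, k₀ ≤ k →
      ∃ (n : ℕ) (E : Finset (Finset (Fin n))),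
        (∀ e ∈ E, e.card = k) ∧
        (∀ e ∈ E, ∀ f ∈ E, e ≠ f → (e ∩ f).card ≤ 1) ∧
        (∀ σ τ : Fin n → ℕ, Function.Injective σ → Function.Injective τ →
          ∃ e ∈ E, (∀ x ∈ e, ∀ y ∈ e, σ x < σ y → τ x < τ y) ∨
                   (∀ x ∈ e, ∀ y ∈ e, σ x < σ y → τ y < τ x)) ∧
        (n : ℝ) ≤ (1 + ε) * 4 * (k : ℝ) ^ 7 * Real.log k *
          (Nat.choose ((k - 1) ^ 2 + 1) k : ℝ) := by
  intro ε hε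
  refine ⟨⌈(1:ℝ) + ε⌉₊ + 11, ?_⟩
  intro k hk
  have hk11 : 11 ≤ k := by omega
  have hk3 : 3 ≤ k := by omega
  have hk0R : (0:ℝ) < k := by
    have : 0 < k := by omega
    exact_mod_cast this
  have hk11R : (11:ℝ) ≤ (k:ℝ) := by exact_mod_cast hk11
  have hkε : (1:ℝ) + ε ≤ (k:ℝ) := by
    have h1 : (⌈(1:ℝ) + ε⌉₊ : ℝ) ≤ (k:ℝ) := by
      have h2 : ⌈(1:ℝ) + ε⌉₊ ≤ k := by omega
      exact_mod_cast h2
    exact le_trans (Nat.le_ceil _) h1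
  -- main quantities
  set N : ℕ := (k - 1) ^ 2 + 1 with hN
  clear_value N
  set C : ℕ := N.choose k with hCdef
  clear_value C
  set lk : ℝ := Real.log k with hlk
  clear_value lk
  have hNk2 : N ≤ k ^ 2 := by
    have h1 : k - 1 + 1 = k := by omega
    calc N = (k-1)^2 + 1 := hN
      _ ≤ (k-1)^2 + (2*(k-1) + 1) := by omega
      _ = ((k-1)+1)^2 := by ring
      _ = k^2 := by rw [h1]
  have hNge : k + 1 ≤ N := by
    have h2 : 2 ≤ k - 1 := by omega
    have h3 : 2 * (k-1) ≤ (k-1) * (k-1) := Nat.mul_le_mul_right _ h2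
    have h4 : N = (k-1)*(k-1) + 1 := by rw [hN, pow_two]
    omega
  have hC2 : 2 ≤ C := by
    rw [hCdef]
    calc 2 ≤ k + 1 := by omega
      _ = (k+1).choose k := (Nat.choose_succ_self_right k).symm
      _ ≤ N.choose k := Nat.choose_le_choose k hNge
  have hC1 : 1 ≤ C := by omega
  have hC0R : (0:ℝ) < (C:ℝ) := by
    have : 0 < C := by omega
    exact_mod_cast this
  have hC1R : (1:ℝ) ≤ (C:ℝ) := by exact_mod_cast hC1
  have hCne : (C:ℝ) ≠ 0 := ne_of_gt hC0R
  have hN0 : 0 < N := by omega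
  have hN0R : (0:ℝ) < (N:ℝ) := by exact_mod_cast hN0
  have hlk1 : 1 ≤ lk := by
    rw [hlk, Real.le_log_iff_exp_le hk0R]
    calc Real.exp 1 ≤ 3 := le_of_lt (lt_trans Real.exp_one_lt_d9 (by norm_num))
      _ ≤ (k:ℝ) := by exact_mod_cast hk3
  have hlk0 : 0 < lk := lt_of_lt_of_le one_pos hlk1
  -- positivity facts
  have p1 : (0:ℝ) < 1 + ε := by linarith
  have p2 : (0:ℝ) < (1+ε) * 4 := by linarith
  have p3 : (0:ℝ) < (1+ε) * 4 * (k:ℝ)^7 := mul_pos p2 (pow_pos hk0R 7)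
  have p4 : (0:ℝ) < (1+ε) * 4 * (k:ℝ)^7 * lk := mul_pos p3 hlk0
  have p5 : (0:ℝ) < (1+ε) * 4 * (k:ℝ)^7 * lk * (C:ℝ) := mul_pos p4 hC0R
  -- the target bound
  set nmax : ℝ := (1 + ε) * 4 * (k : ℝ) ^ 7 * lk * (C : ℝ) with hnmaxdef
  clear_value nmax
  have hnmax_pos : 0 < nmax := p5
  have hk7 : (1:ℝ) ≤ (k:ℝ)^7 := by
    calc (1:ℝ) = 1^7 := by norm_num
      _ ≤ (k:ℝ)^7 := pow_le_pow_left₀ (by norm_num) (by linarith) 7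
  have hnmax4 : (4:ℝ) ≤ nmax := by
    have m1 : (4:ℝ) ≤ (1+ε) * 4 := by linarith
    have m2 : (1+ε) * 4 ≤ (1+ε) * 4 * (k:ℝ)^7 :=
      le_mul_of_one_le_right (le_of_lt p2) hk7
    have m3 : (1+ε) * 4 * (k:ℝ)^7 ≤ (1+ε) * 4 * (k:ℝ)^7 * lk :=
      le_mul_of_one_le_right (le_of_lt p3) hlk1
    have m4 : (1+ε) * 4 * (k:ℝ)^7 * lk ≤ (1+ε) * 4 * (k:ℝ)^7 * lk * (C:ℝ) :=
      le_mul_of_one_le_right (le_of_lt p4) hC1R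
    rw [hnmaxdef]; linarith
  set U : ℝ := Real.log nmax with hUdef
  clear_value U
  have hU1 : 1 ≤ U := by
    rw [hUdef, Real.le_log_iff_exp_le hnmax_pos]
    calc Real.exp 1 ≤ 3 := le_of_lt (lt_trans Real.exp_one_lt_d9 (by norm_num))
      _ ≤ nmax := by linarith
  have hU0 : 0 < U := lt_of_lt_of_le one_pos hU1
  -- upper bound on U
  have hU3 : U ≤ 3 * (k:ℝ) * lk := by
    have e1 : U = Real.log (1+ε) + Real.log 4 + 7 * lk + Real.log lk + Real.log C := by
      rw [hUdef, hnmaxdef]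
      rw [Real.log_mul (ne_of_gt p4) hCne,
          Real.log_mul (ne_of_gt p3) (ne_of_gt hlk0),
          Real.log_mul (ne_of_gt p2) (ne_of_gt (pow_pos hk0R 7)),
          Real.log_mul (ne_of_gt p1) (by norm_num : (4:ℝ) ≠ 0),
          Real.log_pow]
      rw [hlk]
      push_cast
      ring
    have b1 : Real.log (1+ε) ≤ lk := by
      rw [hlk]
      exact Real.log_le_log p1 hkε
    have b2 : Real.log 4 ≤ 2 := by
      rw [Real.log_le_iff_le_exp (by norm_num)]
      have h2 : Real.exp 2 = Real.exp 1 * Real.exp 1 := by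
        rw [← Real.exp_add]; norm_num
      have he2 : (2:ℝ) ≤ Real.exp 1 := by linarith [Real.exp_one_gt_d9]
      calc (4:ℝ) = 2 * 2 := by norm_num
        _ ≤ Real.exp 1 * Real.exp 1 :=
            mul_le_mul he2 he2 (by norm_num) (le_of_lt (Real.exp_pos 1))
        _ = Real.exp 2 := h2.symm
    have b3 : Real.log lk ≤ lk := by
      calc Real.log lk ≤ lk - 1 := Real.log_le_sub_one_of_pos hlk0
        _ ≤ lk := by linarith
    have b4 : Real.log C ≤ 2 * (k:ℝ) * lk := by
      have c1 : (C:ℝ) ≤ ((k:ℝ)^2)^k := by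
        calc (C:ℝ) ≤ ((N:ℕ):ℝ)^k := by
              have h5 : C ≤ N ^ k := by rw [hCdef]; exact Nat.choose_le_pow N k
              exact_mod_cast h5
          _ ≤ ((k:ℝ)^2)^k := by
              apply pow_le_pow_left₀ (le_of_lt hN0R)
              exact_mod_cast hNk2
      calc Real.log C ≤ Real.log (((k:ℝ)^2)^k) := Real.log_le_log hC0R c1
        _ = (k:ℝ) * Real.log ((k:ℝ)^2) := by rw [Real.log_pow]
        _ = 2 * (k:ℝ) * lk := by rw [Real.log_pow, hlk]; push_cast; ring
    have sum : U ≤ 2*(k:ℝ)*lk + 9 * lk + 2 := by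
      rw [e1]; linarith
    have w : (2:ℝ) ≤ ((k:ℝ) - 9) * lk := by
      have := mul_le_mul (by linarith : (2:ℝ) ≤ (k:ℝ) - 9) hlk1
        (by norm_num) (by linarith)
      linarith
    linarith [sum, w]
  -- Bertrand prime
  set X : ℝ := 2 * (N:ℝ) * (C:ℝ) * U with hXdef
  clear_value X
  have hXpos : 0 < X := by
    rw [hXdef]
    exact mul_pos (mul_pos (by linarith : (0:ℝ) < 2*(N:ℝ)) hC0R) hU0
  set M : ℕ := ⌈X⌉₊ with hMdef
  clear_value M
  have hM0 : M ≠ 0 := by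
    have : 0 < M := by rw [hMdef]; exact Nat.ceil_pos.2 hXpos
    omega
  obtain ⟨q, hq, hMq, hq2M⟩ := Nat.exists_prime_lt_and_le_two_mul M hM0
  have hXM : X ≤ (M:ℝ) := by rw [hMdef]; exact Nat.le_ceil X
  have hCU : (1:ℝ) ≤ (C:ℝ) * U := by
    calc (1:ℝ) = 1 * 1 := by norm_num
      _ ≤ (C:ℝ) * U := mul_le_mul hC1R hU1 (by norm_num) (by linarith)
  have hX2N : 2 * (N:ℝ) ≤ X := by
    have hXe : X = 2 * (N:ℝ) * ((C:ℝ) * U) := by rw [hXdef]; ring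
    rw [hXe]
    exact le_mul_of_one_le_right (by linarith) hCU
  have hNq : N < q := by
    have h1 : (N:ℝ) < (M:ℝ) := by linarith
    have h2 : N < M := by exact_mod_cast h1
    omega
  have hq0 : 0 < q := hq.pos
  have hq0R : (0:ℝ) < (q:ℝ) := by exact_mod_cast hq0
  have hqX : X < (q:ℝ) := by
    have h1 : (M:ℝ) < (q:ℝ) := by exact_mod_cast hMq
    linarith
  have hq2MR : (q:ℝ) ≤ 2 * (M:ℝ) := by exact_mod_cast hq2M
  have hMX1 : (M:ℝ) < X + 1 := by rw [hMdef]; exact Nat.ceil_lt_add_one (le_of_lt hXpos)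
  -- the vertex count
  set n : ℕ := q * N with hndef
  clear_value n
  have hn0 : 0 < n := by rw [hndef]; exact Nat.mul_pos hq0 hN0
  have hnR : (n:ℝ) = (q:ℝ) * (N:ℝ) := by rw [hndef]; push_cast; ring
  have hNR2 : (N:ℝ) ≤ (k:ℝ)^2 := by exact_mod_cast hNk2
  have hnle : (n:ℝ) ≤ nmax := by
    have s1 : (n:ℝ) ≤ 2 * (X + 1) * (N:ℝ) := by
      rw [hnR]
      have hqb : (q:ℝ) ≤ 2 * (X+1) := by linarith
      exact mul_le_mul_of_nonneg_right hqb (le_of_lt hN0R)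
    have s2 : 2 * (X + 1) * (N:ℝ) = 4 * (N:ℝ)^2 * (C:ℝ) * U + 2 * (N:ℝ) := by
      rw [hXdef]; ring
    have s3 : 4 * (N:ℝ)^2 * (C:ℝ) * U ≤ 12 * (k:ℝ)^5 * lk * (C:ℝ) := by
      have t1 : (N:ℝ)^2 ≤ ((k:ℝ)^2)^2 := pow_le_pow_left₀ (le_of_lt hN0R) hNR2 2
      have w1 : (N:ℝ)^2 * ((C:ℝ) * U) ≤ ((k:ℝ)^2)^2 * ((C:ℝ) * (3 * (k:ℝ) * lk)) := by
        apply mul_le_mul t1 _ (le_of_lt (mul_pos hC0R hU0)) (by positivity)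
        exact mul_le_mul_of_nonneg_left hU3 (le_of_lt hC0R)
      have t2 : 4 * (N:ℝ)^2 * (C:ℝ) * U ≤ 4 * (((k:ℝ)^2)^2 * ((C:ℝ) * (3 * (k:ℝ) * lk))) := by
        linarith [w1]
      calc 4 * (N:ℝ)^2 * (C:ℝ) * U ≤ 4 * (((k:ℝ)^2)^2 * ((C:ℝ) * (3 * (k:ℝ) * lk))) := t2
        _ = 12 * (k:ℝ)^5 * lk * (C:ℝ) := by ring
    have s4 : 12 * (k:ℝ)^5 * lk * (C:ℝ) + 2 * (N:ℝ) ≤ 4 * (k:ℝ)^7 * lk * (C:ℝ) := by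
      have u2 : (k:ℝ)^2 ≤ (k:ℝ)^5 := pow_le_pow_right₀ (by linarith) (by norm_num)
      have u3 : (1:ℝ) ≤ lk * (C:ℝ) := by
        calc (1:ℝ) = 1 * 1 := by norm_num
          _ ≤ lk * (C:ℝ) := mul_le_mul hlk1 hC1R (by norm_num) (by linarith)
      have A1 : (N:ℝ) ≤ (k:ℝ)^5 := le_trans hNR2 u2
      have A2 : (k:ℝ)^5 ≤ (k:ℝ)^5 * (lk * (C:ℝ)) :=
        le_mul_of_one_le_right (by positivity) u3
      have hk2 : (121:ℝ) ≤ (k:ℝ)^2 := by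
        calc (121:ℝ) = 11 * 11 := by norm_num
          _ ≤ (k:ℝ) * (k:ℝ) := mul_le_mul hk11R hk11R (by norm_num) (by linarith)
          _ = (k:ℝ)^2 := by ring
      have B0 : 14 * (k:ℝ)^5 ≤ 4 * (k:ℝ)^7 := by
        have c2 : (14:ℝ) ≤ 4 * (k:ℝ)^2 := by linarith
        calc 14 * (k:ℝ)^5 ≤ (4 * (k:ℝ)^2) * (k:ℝ)^5 :=
              mul_le_mul_of_nonneg_right c2 (pow_nonneg (le_of_lt hk0R) 5)
          _ = 4 * (k:ℝ)^7 := by ring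
      have B : 14 * (k:ℝ)^5 * (lk * (C:ℝ)) ≤ 4 * (k:ℝ)^7 * (lk * (C:ℝ)) :=
        mul_le_mul_of_nonneg_right B0 (le_of_lt (mul_pos hlk0 hC0R))
      linarith [A1, A2, B]
    have s5 : 4 * (k:ℝ)^7 * lk * (C:ℝ) ≤ nmax := by
      have hrw : nmax = (1+ε) * (4 * (k:ℝ)^7 * lk * (C:ℝ)) := by rw [hnmaxdef]; ring
      rw [hrw]
      refine le_mul_of_one_le_left ?_ (by linarith)
      exact le_of_lt (mul_pos (mul_pos (mul_pos (by norm_num : (0:ℝ) < 4)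
        (pow_pos hk0R 7)) hlk0) hC0R)
    linarith
  -- the counting inequality
  set T : ℕ := q * q with hTdef
  clear_value T
  have hTR : (T:ℝ) = (q:ℝ) * (q:ℝ) := by rw [hTdef]; push_cast; ring
  have hcount : n ^ (2 * n) * (C - 1) ^ T < C ^ T := by
    have hnpos : (0:ℝ) < (n:ℝ) := by exact_mod_cast hn0
    have key : ((n:ℝ)) ^ (2*n) * ((C:ℝ) - 1) ^ T < (C:ℝ) ^ T := by
      have e1 : (C:ℝ) - 1 ≤ (C:ℝ) * Real.exp (-(1/(C:ℝ))) := by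
        have h := Real.add_one_le_exp (-(1/(C:ℝ)))
        have h2 : (C:ℝ) * (-(1/(C:ℝ)) + 1) ≤ (C:ℝ) * Real.exp (-(1/(C:ℝ))) :=
          mul_le_mul_of_nonneg_left h (le_of_lt hC0R)
        have h3 : (C:ℝ) * (-(1/(C:ℝ)) + 1) = (C:ℝ) - 1 := by
          field_simp
          try ring
        linarith
      have e2 : ((C:ℝ) - 1) ^ T ≤ (C:ℝ) ^ T * Real.exp (-(T:ℝ)/(C:ℝ)) := by
        calc ((C:ℝ) - 1) ^ T ≤ ((C:ℝ) * Real.exp (-(1/(C:ℝ)))) ^ T :=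
              pow_le_pow_left₀ (by linarith) e1 T
          _ = (C:ℝ) ^ T * (Real.exp (-(1/(C:ℝ)))) ^ T := mul_pow _ _ _
          _ = (C:ℝ) ^ T * Real.exp (-(T:ℝ)/(C:ℝ)) := by
              rw [← Real.exp_nat_mul]
              congr 1
              field_simp
      have e3 : ((n:ℝ)) ^ (2*n) < Real.exp ((T:ℝ)/(C:ℝ)) := by
        have l1 : ((n:ℝ)) ^ (2*n) = Real.exp (((2*n : ℕ):ℝ) * Real.log n) := by
          rw [← Real.log_pow, Real.exp_log (pow_pos hnpos _)]
        rw [l1, Real.exp_lt_exp]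
        have l2 : Real.log n ≤ U := by
          rw [hUdef]
          exact Real.log_le_log hnpos hnle
        have l3 : ((2*n:ℕ):ℝ) * Real.log n ≤ 2 * (n:ℝ) * U := by
          have hc : ((2*n:ℕ):ℝ) = 2 * (n:ℝ) := by push_cast; ring
          rw [hc]
          exact mul_le_mul_of_nonneg_left l2 (by positivity)
        have l4 : 2 * (n:ℝ) * U < (T:ℝ)/(C:ℝ) := by
          have expand : (T:ℝ)/(C:ℝ) - 2 * (n:ℝ) * U
              = ((q:ℝ) / (C:ℝ)) * ((q:ℝ) - X) := by
            rw [hTR, hnR, hXdef]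
            field_simp
          have hpos : 0 < ((q:ℝ) / (C:ℝ)) * ((q:ℝ) - X) :=
            mul_pos (div_pos hq0R hC0R) (by linarith)
          rw [← expand] at hpos
          linarith
        linarith
      calc ((n:ℝ)) ^ (2*n) * ((C:ℝ) - 1) ^ T
          ≤ ((n:ℝ)) ^ (2*n) * ((C:ℝ) ^ T * Real.exp (-(T:ℝ)/(C:ℝ))) := by
            apply mul_le_mul_of_nonneg_left e2 (by positivity)
        _ = (((n:ℝ)) ^ (2*n) * Real.exp (-(T:ℝ)/(C:ℝ))) * (C:ℝ) ^ T := by ring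
        _ < 1 * (C:ℝ) ^ T := by
            apply mul_lt_mul_of_pos_right _ (pow_pos hC0R T)
            have hrw : Real.exp (-(T:ℝ)/(C:ℝ)) = (Real.exp ((T:ℝ)/(C:ℝ)))⁻¹ := by
              rw [← Real.exp_neg]; congr 1; ring
            rw [hrw, mul_inv_lt_iff₀ (Real.exp_pos _), one_mul]
            exact e3
        _ = (C:ℝ) ^ T := one_mul _
    have cast1 : (((C:ℕ) - 1 : ℕ):ℝ) = (C:ℝ) - 1 := by
      have h7 := Nat.cast_sub (R := ℝ) hC1
      simpa using h7
    rw [← cast1] at key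
    exact_mod_cast key
  -- apply the construction
  have hNbig : (k - 1) * (k - 1) < N := by
    have h6 : N = (k-1)*(k-1) + 1 := by rw [hN, pow_two]
    omega
  obtain ⟨E, hE1, hE2, hE3⟩ := Stmt9Aux.core k N q hNbig hq hNq (by
    rw [← hndef, ← hTdef, ← hCdef]; exact hcount)
  refine ⟨q * N, E, hE1, hE2, hE3, ?_⟩
  rw [hndef] at hnle
  exact hnle
end
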